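/- arXiv:1703.04576 — 8 statements merged into one kernel-verified Lean document; each statement's English description precedes it below -/
import Mathlib

section
/- Let g and g̃ be non-isomorphic real forms of a complex semisimple Lie algebra g^ℂ, compatible with each other and both compatible with a compact real form u of g^ℂ, with Cartan decompositions g = t ⊕ p and g̃ = t̃ ⊕ p̃ satisfying u = t ⊕ ip = t̃ ⊕ ip̃. If neither g nor g̃ is compact, then t ∩ t̃ ≠ 0. -/
/-- Multiplication by `i`, as an `ℝ`-linear endomorphism of a complex vector space. -/
def mulI (E : Type*) [AddCommGroup E] [Module ℝ E] [Module ℂ E]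
    [IsScalarTower ℝ ℂ E] : E →ₗ[ℝ] E where
  toFun x := Complex.I • x
  map_add' x y := smul_add _ x y
  map_smul' r x := by
    dsimp only [RingHom.id_apply]
    exact (smul_comm r Complex.I x).symm

open Polynomial in
private lemma ct_pow_mem {V : Type*} [AddCommGroup V] [Module ℝ V] {S : Module.End ℝ V}
    {W : Submodule ℝ V} (hW : ∀ x ∈ W, S x ∈ W) (n : ℕ) :
    ∀ x ∈ W, (S ^ n) x ∈ W := by
  induction n with
  | zero => simpa using fun x hx => hx
  | succ n ih =>
    intro x hx
    rw [pow_succ, Module.End.mul_apply]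
    exact ih _ (hW x hx)

open Polynomial in
private lemma ct_aeval_mem {V : Type*} [AddCommGroup V] [Module ℝ V] {S : Module.End ℝ V}
    {W : Submodule ℝ V} (hW : ∀ x ∈ W, S x ∈ W) (p : ℝ[X]) :
    ∀ x ∈ W, (aeval S p) x ∈ W := by
  intro x hx
  rw [aeval_eq_sum_range, LinearMap.sum_apply]
  exact Submodule.sum_mem _ fun i _ => by
    rw [LinearMap.smul_apply]
    exact Submodule.smul_mem _ _ (ct_pow_mem hW i x hx)

open Polynomial in
private lemma ct_aeval_commute {V : Type*} [AddCommGroup V] [Module ℝ V] {S A : Module.End ℝ V}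
    (h : Commute S A) (p : ℝ[X]) : Commute (aeval S p) A := by
  rw [aeval_eq_sum_range]
  exact Commute.sum_left _ _ _ fun i _ => (h.pow_left i).smul_left _

open Polynomial in
private lemma ct_aeval_of_ker {V : Type*} [AddCommGroup V] [Module ℝ V] {S : Module.End ℝ V}
    {x : V} (hx : S x = 0) (p : ℝ[X]) : (aeval S p) x = p.eval 0 • x := by
  have hpow : ∀ i : ℕ, i ≠ 0 → (S ^ i) x = 0 := by
    intro i hi
    obtain ⟨k, rfl⟩ := Nat.exists_eq_succ_of_ne_zero hi
    rw [pow_succ, Module.End.mul_apply, hx, map_zero]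
  rw [aeval_eq_sum_range, LinearMap.sum_apply, Finset.sum_eq_single 0]
  · simp [coeff_zero_eq_eval_zero]
  · intro i _ hi
    rw [LinearMap.smul_apply, hpow i hi, smul_zero]
  · intro h0
    exact absurd (Finset.mem_range.2 (Nat.succ_pos _)) h0

private lemma ct_exists_t {V : Type*} [AddCommGroup V] [Module ℝ V] [FiniteDimensional ℝ V]
    (A B : Module.End ℝ V) (hA : Function.Injective A) :
    ∃ t : ℝ, t ≠ 0 ∧ Function.Injective (A + t • B) := by
  classical
  set e := LinearEquiv.ofInjectiveEndo A hA with he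
  set C : Module.End ℝ V := (e.symm : V →ₗ[ℝ] V) ∘ₗ B with hC
  have hfin : (insert (0:ℝ) ((fun μ : ℝ => -μ⁻¹) '' setOf C.HasEigenvalue)).Finite :=
    Set.Finite.insert _ ((Module.End.finite_hasEigenvalue C).image _)
  obtain ⟨t, ht⟩ := hfin.infinite_compl.nonempty
  rw [Set.mem_compl_iff, Set.mem_insert_iff] at ht
  push_neg at ht
  obtain ⟨ht0, htim⟩ := ht
  refine ⟨t, ht0, ?_⟩
  have hker : ∀ x : V, (A + t • B) x = 0 → x = 0 := by
    intro x hx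
    have hACx : ∀ z, A (C z) = B z := by
      intro z
      have : (A : V →ₗ[ℝ] V) (e.symm (B z)) = e (e.symm (B z)) := by
        rw [he]; rfl
      simpa [hC, LinearMap.comp_apply, this] using e.apply_symm_apply (B z)
    have h1 : A (x + t • C x) = 0 := by
      rw [map_add, map_smul, hACx]
      simpa [LinearMap.add_apply, LinearMap.smul_apply] using hx
    have h2 : x + t • C x = 0 := by
      have := hA (a₁ := x + t • C x) (a₂ := 0) (by simpa using h1)
      exact this
    by_contra hxne
    have hCx : C x = (-t⁻¹) • x := by
      have : t • C x = -x := by linear_combination (norm := module) h2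
      have ht' : t⁻¹ • (t • C x) = t⁻¹ • (-x) := by rw [this]
      rw [smul_smul, inv_mul_cancel₀ ht0, one_smul] at ht'
      rw [ht']
      module
    have hev : C.HasEigenvalue (-t⁻¹) :=
      Module.End.hasEigenvalue_of_hasEigenvector
        ⟨Module.End.mem_eigenspace_iff.2 hCx, hxne⟩
    exact htim ⟨-t⁻¹, hev, by field_simp⟩
  intro x y hxy
  have : (A + t • B) (x - y) = 0 := by
    rw [map_sub, hxy, sub_self]
  have := hker _ this
  linear_combination (norm := module) this

set_option maxHeartbeats 2000000 in
private theorem ct_key {u : Type*} [LieRing u] [LieAlgebra ℝ u] [FiniteDimensional ℝ u]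
    (hk : ∀ x : u, x ≠ 0 → killingForm ℝ u x x < 0)
    (s s' : u →ₗ[ℝ] u)
    (hs : ∀ x, s (s x) = x) (hs' : ∀ x, s' (s' x) = x)
    (hss' : ∀ x, s (s' x) = s' (s x))
    (hslie : ∀ x y, s ⁅x, y⁆ = ⁅s x, s y⁆) (hs'lie : ∀ x y, s' ⁅x, y⁆ = ⁅s' x, s' y⁆)
    (hfix : ∀ x, s x = x → s' x = x → x = 0) :
    ∃ ρ : u ≃ₗ[ℝ] u, (∀ x y, ρ ⁅x, y⁆ = ⁅ρ x, ρ y⁆) ∧ (∀ x, ρ (s x) = s' (ρ x)) := by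
  classical
  have hκsymm : ∀ x y : u, killingForm ℝ u x y = killingForm ℝ u y x :=
    fun x y => LieModule.traceForm_comm ℝ u u x y
  have hκskew : ∀ a x y : u, killingForm ℝ u ⁅a, x⁆ y = -(killingForm ℝ u x ⁅a, y⁆) :=
    fun a x y => LieModule.traceForm_apply_lie_apply' ℝ u u a x y
  letI core : InnerProductSpace.Core ℝ u :=
  { inner := fun x y => -(killingForm ℝ u x y)
    conj_inner_symm := fun x y => by
      simpa using congrArg Neg.neg (hκsymm y x)
    re_inner_nonneg := fun x => by
      rcases eq_or_ne x 0 with rfl | hx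
      · simp
      · have := hk x hx
        simp only [RCLike.re_to_real]
        linarith
    add_left := fun x y z => by
      simp only [map_add, LinearMap.add_apply, neg_add]
    smul_left := fun x y r => by
      simp [map_smul]
    definite := fun x hx => by
      by_contra h
      have h1 := hk x h
      change -(killingForm ℝ u x x) = 0 at hx
      rw [show killingForm ℝ u x x = 0 by linarith] at h1
      exact lt_irrefl 0 h1 }
  letI : NormedAddCommGroup u := core.toNormedAddCommGroup
  letI : InnerProductSpace ℝ u := InnerProductSpace.ofCore core.toCore
  have hinner : ∀ x y : u, (inner ℝ x y : ℝ) = -(killingForm ℝ u x y) := fun _ _ => rfl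
  -- positive definiteness restated
  have hdef : ∀ x : u, (inner ℝ x x : ℝ) = 0 → x = 0 := core.definite
  have hicomm : ∀ x y : u, (inner ℝ x y : ℝ) = inner ℝ y x := by
    intro x y; rw [hinner, hinner, hκsymm]
  have hskew : ∀ a x y : u, (inner ℝ ⁅a, x⁆ y : ℝ) = -(inner ℝ x ⁅a, y⁆ : ℝ) := by
    intro a x y
    rw [hinner, hinner, hκskew, neg_neg]
  -- the Killing form is invariant under the two involutions
  have hconj : ∀ (f : u →ₗ[ℝ] u), (∀ x, f (f x) = x) → (∀ x y, f ⁅x, y⁆ = ⁅f x, f y⁆) →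
      ∀ x y : u, killingForm ℝ u (f x) (f y) = killingForm ℝ u x y := by
    intro f hf hflie x y
    have hff : f ∘ₗ f = LinearMap.id := by ext z; simp [hf]
    have had : ∀ z : u, LieAlgebra.ad ℝ u (f z) = f ∘ₗ (LieAlgebra.ad ℝ u z) ∘ₗ f := by
      intro z; ext w
      simp only [LieAlgebra.ad_apply, LinearMap.comp_apply]
      conv_lhs => rw [show w = f (f w) from (hf w).symm]
      rw [← hflie]
    rw [killingForm_apply_apply, killingForm_apply_apply, had, had]
    have : (f ∘ₗ (LieAlgebra.ad ℝ u x) ∘ₗ f) ∘ₗ f ∘ₗ (LieAlgebra.ad ℝ u y) ∘ₗ f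
        = f ∘ₗ ((LieAlgebra.ad ℝ u x) ∘ₗ (LieAlgebra.ad ℝ u y)) ∘ₗ f := by
      ext w; simp [LinearMap.comp_apply, hf]
    rw [this]
    calc LinearMap.trace ℝ u (f ∘ₗ ((LieAlgebra.ad ℝ u x) ∘ₗ (LieAlgebra.ad ℝ u y)) ∘ₗ f)
        = LinearMap.trace ℝ u ((((LieAlgebra.ad ℝ u x) ∘ₗ (LieAlgebra.ad ℝ u y)) ∘ₗ f) ∘ₗ f) :=
          LinearMap.trace_mul_comm ℝ f _
      _ = LinearMap.trace ℝ u ((LieAlgebra.ad ℝ u x) ∘ₗ (LieAlgebra.ad ℝ u y)) := by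
          rw [LinearMap.comp_assoc, hff, LinearMap.comp_id]
  have hinner_s : ∀ x y : u, (inner ℝ (s x) (s y) : ℝ) = inner ℝ x y := by
    intro x y; rw [hinner, hinner, hconj s hs hslie]
  have hinner_s' : ∀ x y : u, (inner ℝ (s' x) (s' y) : ℝ) = inner ℝ x y := by
    intro x y; rw [hinner, hinner, hconj s' hs' hs'lie]
  -- half lemma
  have hhalf : ∀ x : u, x = -x → x = 0 := by
    intro x hx
    have h2 : (2 : ℝ) • x = 0 := by
      rw [two_smul]
      nth_rewrite 2 [hx]
      exact add_neg_cancel x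
    simpa [smul_eq_zero] using h2

  -- the Klein four grading
  set θ : u →ₗ[ℝ] u := s ∘ₗ s' with hθdef
  have hθap : ∀ x, θ x = s (s' x) := fun x => rfl
  have hθs' : ∀ x, s (θ x) = s' x := by intro x; rw [hθap, hs]
  have hθs : ∀ x, s' (θ x) = s x := by intro x; rw [hθap, ← hss', hs']
  set πT : u → u := fun x => (4⁻¹ : ℝ) • (x + s x - s' x - θ x) with hπTdef
  set πT' : u → u := fun x => (4⁻¹ : ℝ) • (x - s x + s' x - θ x) with hπT'def
  set πB : u → u := fun x => (4⁻¹ : ℝ) • (x - s x - s' x + θ x) with hπBdef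
  have hsum : ∀ x, πT x + πT' x + πB x = x := by
    intro x
    have he : (4⁻¹ : ℝ) • (x + s x + s' x + θ x) = 0 := by
      apply hfix
      · rw [map_smul, map_add, map_add, map_add, hs,
          show s (s' x) = θ x from rfl, hθs']
        module
      · rw [map_smul, map_add, map_add, map_add, hs',
          show s' (s x) = θ x from (hss' x).symm, hθs]
        module
    have hsplit : πT x + πT' x + πB x = x - (4⁻¹ : ℝ) • (x + s x + s' x + θ x) := by
      rw [hπTdef, hπT'def, hπBdef]
      module
    rw [hsplit, he, sub_zero]
  have hπT_s : ∀ x, s (πT x) = πT x := by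
    intro x
    rw [hπTdef]
    simp only [map_smul, map_add, map_sub, hs, show s (s' x) = θ x from rfl, hθs']
    module
  have hπT_s' : ∀ x, s' (πT x) = -πT x := by
    intro x
    rw [hπTdef]
    simp only [map_smul, map_add, map_sub, hs',
      show s' (s x) = θ x from (hss' x).symm, hθs]
    module
  have hπT'_s : ∀ x, s (πT' x) = -πT' x := by
    intro x
    rw [hπT'def]
    simp only [map_smul, map_add, map_sub, hs, show s (s' x) = θ x from rfl, hθs']
    module
  have hπT'_s' : ∀ x, s' (πT' x) = πT' x := by
    intro x
    rw [hπT'def]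
    simp only [map_smul, map_add, map_sub, hs',
      show s' (s x) = θ x from (hss' x).symm, hθs]
    module
  have hπB_s : ∀ x, s (πB x) = -πB x := by
    intro x
    rw [hπBdef]
    simp only [map_smul, map_add, map_sub, hs, show s (s' x) = θ x from rfl, hθs']
    module
  have hπB_s' : ∀ x, s' (πB x) = -πB x := by
    intro x
    rw [hπBdef]
    simp only [map_smul, map_add, map_sub, hs',
      show s' (s x) = θ x from (hss' x).symm, hθs]
    module
  -- the graded pieces
  set T : Submodule ℝ u := LinearMap.ker (s - LinearMap.id) ⊓ LinearMap.ker (s' + LinearMap.id)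
    with hTdef
  set T' : Submodule ℝ u := LinearMap.ker (s + LinearMap.id) ⊓ LinearMap.ker (s' - LinearMap.id)
    with hT'def
  set Bb : Submodule ℝ u := LinearMap.ker (s + LinearMap.id) ⊓ LinearMap.ker (s' + LinearMap.id)
    with hBbdef
  have memT : ∀ x, x ∈ T ↔ (s x = x ∧ s' x = -x) := by
    intro x
    rw [hTdef]
    simp only [Submodule.mem_inf, LinearMap.mem_ker, LinearMap.sub_apply, LinearMap.add_apply,
      LinearMap.id_apply, sub_eq_zero, add_eq_zero_iff_eq_neg]
  have memT' : ∀ x, x ∈ T' ↔ (s x = -x ∧ s' x = x) := by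
    intro x
    rw [hT'def]
    simp only [Submodule.mem_inf, LinearMap.mem_ker, LinearMap.sub_apply, LinearMap.add_apply,
      LinearMap.id_apply, sub_eq_zero, add_eq_zero_iff_eq_neg]
  have memBb : ∀ x, x ∈ Bb ↔ (s x = -x ∧ s' x = -x) := by
    intro x
    rw [hBbdef]
    simp only [Submodule.mem_inf, LinearMap.mem_ker, LinearMap.add_apply,
      LinearMap.id_apply, add_eq_zero_iff_eq_neg]
  have hπT_mem : ∀ x, πT x ∈ T := fun x => (memT _).2 ⟨hπT_s x, hπT_s' x⟩
  have hπT'_mem : ∀ x, πT' x ∈ T' := fun x => (memT' _).2 ⟨hπT'_s x, hπT'_s' x⟩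
  have hπB_mem : ∀ x, πB x ∈ Bb := fun x => (memBb _).2 ⟨hπB_s x, hπB_s' x⟩
  -- brackets between graded pieces
  have hTT : ∀ x ∈ T, ∀ y ∈ T, ⁅x, y⁆ = (0 : u) := by
    intro x hx y hy
    obtain ⟨hx1, hx2⟩ := (memT x).1 hx
    obtain ⟨hy1, hy2⟩ := (memT y).1 hy
    exact hfix _ (by rw [hslie, hx1, hy1])
      (by rw [hs'lie, hx2, hy2, neg_lie, lie_neg, neg_neg])
  have hT'T' : ∀ x ∈ T', ∀ y ∈ T', ⁅x, y⁆ = (0 : u) := by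
    intro x hx y hy
    obtain ⟨hx1, hx2⟩ := (memT' x).1 hx
    obtain ⟨hy1, hy2⟩ := (memT' y).1 hy
    exact hfix _ (by rw [hslie, hx1, hy1, neg_lie, lie_neg, neg_neg])
      (by rw [hs'lie, hx2, hy2])
  have hBB : ∀ x ∈ Bb, ∀ y ∈ Bb, ⁅x, y⁆ = (0 : u) := by
    intro x hx y hy
    obtain ⟨hx1, hx2⟩ := (memBb x).1 hx
    obtain ⟨hy1, hy2⟩ := (memBb y).1 hy
    exact hfix _ (by rw [hslie, hx1, hy1, neg_lie, lie_neg, neg_neg])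
      (by rw [hs'lie, hx2, hy2, neg_lie, lie_neg, neg_neg])
  have hTT' : ∀ x ∈ T, ∀ y ∈ T', ⁅x, y⁆ ∈ Bb := by
    intro x hx y hy
    obtain ⟨hx1, hx2⟩ := (memT x).1 hx
    obtain ⟨hy1, hy2⟩ := (memT' y).1 hy
    exact (memBb _).2 ⟨by rw [hslie, hx1, hy1, lie_neg], by rw [hs'lie, hx2, hy2, neg_lie]⟩
  have hTB : ∀ x ∈ T, ∀ c ∈ Bb, ⁅x, c⁆ ∈ T' := by
    intro x hx c hc
    obtain ⟨hx1, hx2⟩ := (memT x).1 hx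
    obtain ⟨hc1, hc2⟩ := (memBb c).1 hc
    exact (memT' _).2 ⟨by rw [hslie, hx1, hc1, lie_neg],
      by rw [hs'lie, hx2, hc2, neg_lie, lie_neg, neg_neg]⟩
  have hT'B : ∀ y ∈ T', ∀ c ∈ Bb, ⁅y, c⁆ ∈ T := by
    intro y hy c hc
    obtain ⟨hy1, hy2⟩ := (memT' y).1 hy
    obtain ⟨hc1, hc2⟩ := (memBb c).1 hc
    exact (memT _).2 ⟨by rw [hslie, hy1, hc1, neg_lie, lie_neg, neg_neg],
      by rw [hs'lie, hy2, hc2, lie_neg]⟩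
  -- orthogonality of the graded pieces
  have hoTT' : ∀ x ∈ T, ∀ y ∈ T', (inner ℝ x y : ℝ) = 0 := by
    intro x hx y hy
    have h := hinner_s x y
    rw [((memT x).1 hx).1, ((memT' y).1 hy).1, inner_neg_right] at h
    linarith
  have hoTB : ∀ x ∈ T, ∀ c ∈ Bb, (inner ℝ x c : ℝ) = 0 := by
    intro x hx c hc
    have h := hinner_s x c
    rw [((memT x).1 hx).1, ((memBb c).1 hc).1, inner_neg_right] at h
    linarith
  have hoT'B : ∀ y ∈ T', ∀ c ∈ Bb, (inner ℝ y c : ℝ) = 0 := by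
    intro y hy c hc
    have h := hinner_s' y c
    rw [((memT' y).1 hy).2, ((memBb c).1 hc).2, inner_neg_right] at h
    linarith
  -- pointwise disjointness
  have hdisjTT' : ∀ x, x ∈ T → x ∈ T' → x = 0 := by
    intro x hx hy
    exact hhalf x (((memT x).1 hx).1.symm.trans ((memT' x).1 hy).1)
  -- W = T ⊔ T'
  set W : Submodule ℝ u := T ⊔ T' with hWdef
  have hTW : T ≤ W := le_sup_left
  have hT'W : T' ≤ W := le_sup_right
  have hWmem : ∀ x ∈ W, ∃ a ∈ T, ∃ b ∈ T', x = a + b := by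
    intro x hx
    obtain ⟨a, ha, b, hb, hab⟩ := Submodule.mem_sup.1 hx
    exact ⟨a, ha, b, hb, hab.symm⟩
  have hWW : ∀ x ∈ W, ∀ y ∈ W, ⁅x, y⁆ ∈ Bb := by
    intro x hx y hy
    obtain ⟨a, ha, b, hb, rfl⟩ := hWmem x hx
    obtain ⟨a', ha', b', hb', rfl⟩ := hWmem y hy
    rw [add_lie, lie_add, lie_add]
    refine add_mem (add_mem ?_ (hTT' a ha b' hb')) (add_mem ?_ ?_)
    · rw [hTT a ha a' ha']; exact zero_mem _
    · rw [← lie_skew]; exact neg_mem (hTT' a' ha' b hb)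
    · rw [hT'T' b hb b' hb']; exact zero_mem _
  have hBW : ∀ c ∈ Bb, ∀ x ∈ W, ⁅c, x⁆ ∈ W := by
    intro c hc x hx
    obtain ⟨a, ha, b, hb, rfl⟩ := hWmem x hx
    rw [lie_add]
    refine add_mem ?_ ?_
    · rw [← lie_skew]; exact hT'W (neg_mem (hTB a ha c hc))
    · rw [← lie_skew]; exact hTW (neg_mem (hT'B b hb c hc))
  -- inner ℝ product against brackets
  have hib : ∀ w₁ w₂ c : u, (inner ℝ ⁅w₁, w₂⁆ c : ℝ) = inner ℝ ⁅c, w₁⁆ w₂ := by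
    intro w₁ w₂ c
    rw [hskew w₁ w₂ c, show ⁅w₁, c⁆ = -⁅c, w₁⁆ from by rw [← lie_skew],
      inner_neg_right, neg_neg, hicomm]
  -- self-pairing test inside Bb
  have hztest : ∀ v ∈ Bb, (∀ c ∈ Bb, (inner ℝ v c : ℝ) = 0) → v = 0 := by
    intro v hv h
    exact hdef v (h v hv)
  -- no nonzero central elements
  have hcent : ∀ a : u, (∀ z : u, ⁅a, z⁆ = 0) → a = 0 := by
    intro a ha
    by_contra h
    have h1 := hk a h
    have h2 : LieAlgebra.ad ℝ u a = 0 := by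
      ext z; simp [LieAlgebra.ad_apply, ha]
    rw [killingForm_apply_apply, h2] at h1
    simp at h1
  -- joint kernel of ad(Bb) on T, T', W is trivial
  have hjkT : ∀ a ∈ T, (∀ c ∈ Bb, ⁅c, a⁆ = 0) → a = 0 := by
    intro a ha h
    have key : ∀ y ∈ T', ⁅a, y⁆ = 0 := by
      intro y hy
      refine hztest _ (hTT' a ha y hy) fun c hc => ?_
      rw [hib a y c, h c hc]
      simp
    refine hcent a fun z => ?_
    have h3 : ⁅a, πB z⁆ = 0 := by
      rw [← lie_skew, h _ (hπB_mem z), neg_zero]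
    calc ⁅a, z⁆ = ⁅a, πT z + πT' z + πB z⁆ := by rw [hsum]
      _ = ⁅a, πT z⁆ + ⁅a, πT' z⁆ + ⁅a, πB z⁆ := by rw [lie_add, lie_add]
      _ = 0 := by rw [hTT a ha _ (hπT_mem z), key _ (hπT'_mem z), h3]; simp
  have hjkT' : ∀ b ∈ T', (∀ c ∈ Bb, ⁅c, b⁆ = 0) → b = 0 := by
    intro b hb h
    have key : ∀ y ∈ T, ⁅b, y⁆ = 0 := by
      intro y hy
      have hmem : ⁅b, y⁆ ∈ Bb := by
        rw [← lie_skew]; exact neg_mem (hTT' y hy b hb)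
      refine hztest _ hmem fun c hc => ?_
      rw [hib b y c, h c hc]
      simp
    refine hcent b fun z => ?_
    have h3 : ⁅b, πB z⁆ = 0 := by
      rw [← lie_skew, h _ (hπB_mem z), neg_zero]
    calc ⁅b, z⁆ = ⁅b, πT z + πT' z + πB z⁆ := by rw [hsum]
      _ = ⁅b, πT z⁆ + ⁅b, πT' z⁆ + ⁅b, πB z⁆ := by rw [lie_add, lie_add]
      _ = 0 := by rw [key _ (hπT_mem z), hT'T' b hb _ (hπT'_mem z), h3]; simp
  have hjkW : ∀ x ∈ W, (∀ c ∈ Bb, ⁅c, x⁆ = 0) → x = 0 := by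
    intro x hx h
    obtain ⟨a, ha, b, hb, rfl⟩ := hWmem x hx
    have hab : ∀ c ∈ Bb, ⁅c, a⁆ = 0 ∧ ⁅c, b⁆ = 0 := by
      intro c hc
      have h1 := h c hc
      rw [lie_add] at h1
      have hca : ⁅c, a⁆ ∈ T' := by
        rw [← lie_skew]; exact neg_mem (hTB a ha c hc)
      have hcb : ⁅c, b⁆ ∈ T := by
        rw [← lie_skew]; exact neg_mem (hT'B b hb c hc)
      have heq : ⁅c, a⁆ = -⁅c, b⁆ := eq_neg_of_add_eq_zero_left h1
      have h0 : ⁅c, a⁆ = 0 := hdisjTT' _ (by rw [heq]; exact neg_mem hcb) hca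
      refine ⟨h0, ?_⟩
      rw [h0] at heq
      exact neg_eq_zero.mp heq.symm
    rw [hjkT a ha fun c hc => (hab c hc).1, hjkT' b hb fun c hc => (hab c hc).2, add_zero]

  -- commuting ad-actions of Bb
  have hadcomm : ∀ c ∈ Bb, ∀ c' ∈ Bb, ∀ z : u, ⁅c, ⁅c', z⁆⁆ = ⁅c', ⁅c, z⁆⁆ := by
    intro c hc c' hc' z
    have h := lie_lie c c' z
    rw [hBB c hc c' hc', zero_lie] at h
    exact eq_of_sub_eq_zero h.symm
  set K : u → Submodule ℝ u := fun c => LinearMap.ker (LieAlgebra.ad ℝ u c) ⊓ W with hKdef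
  have memK : ∀ c x, x ∈ K c ↔ (⁅c, x⁆ = 0 ∧ x ∈ W) := by
    intro c x
    rw [hKdef]
    simp [Submodule.mem_inf, LinearMap.mem_ker, LieAlgebra.ad_apply]
  -- existence of a regular element
  have hKexists : ∃ c₀ ∈ Bb, K c₀ = ⊥ := by
    set D : Set ℕ := {n | ∃ c ∈ Bb, Module.finrank ℝ (K c) = n} with hDdef
    have hDne : D.Nonempty := ⟨_, 0, zero_mem _, rfl⟩
    have hmem := Nat.sInf_mem hDne
    obtain ⟨c₀, hc₀, hc₀rank⟩ := hmem
    refine ⟨c₀, hc₀, ?_⟩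
    by_contra hKne
    obtain ⟨x₀, hx₀K, hx₀ne⟩ := (Submodule.ne_bot_iff _).1 hKne
    obtain ⟨hx₀ker, hx₀W⟩ := (memK c₀ x₀).1 hx₀K
    have hnotall : ¬ ∀ c ∈ Bb, ⁅c, x₀⁆ = 0 := fun hall => hx₀ne (hjkW x₀ hx₀W hall)
    push_neg at hnotall
    obtain ⟨c₁, hc₁, hc₁ne⟩ := hnotall
    set N : Submodule ℝ u := K c₀ with hNdef
    have hNW : N ≤ W := inf_le_right
    have hc₀N : ∀ z ∈ N, ⁅c₀, z⁆ ∈ N := by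
      intro z hz; rw [((memK c₀ z).1 hz).1]; exact zero_mem _
    have hc₁N : ∀ x ∈ N, ⁅c₁, x⁆ ∈ N := by
      intro x hx
      obtain ⟨hxk, hxW⟩ := (memK c₀ x).1 hx
      exact (memK c₀ _).2 ⟨by rw [hadcomm c₀ hc₀ c₁ hc₁ x, hxk, lie_zero],
        hBW c₁ hc₁ x hxW⟩
    have hpres : ∀ (c : u), (∀ z ∈ N, ⁅c, z⁆ ∈ N) → ∀ x ∈ Nᗮ, ⁅c, x⁆ ∈ Nᗮ := by
      intro c hcN x hx
      rw [Submodule.mem_orthogonal]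
      intro z hz
      rw [hicomm, hskew, hicomm]
      rw [Submodule.mem_orthogonal] at hx
      rw [hx _ (hcN z hz), neg_zero]
    set V : Submodule ℝ u := Nᗮ ⊓ W with hVdef
    have hres₀ : ∀ x ∈ V, (LieAlgebra.ad ℝ u c₀) x ∈ V := by
      intro x hx
      exact Submodule.mem_inf.2 ⟨hpres c₀ hc₀N x (Submodule.mem_inf.1 hx).1,
        hBW c₀ hc₀ x (Submodule.mem_inf.1 hx).2⟩
    have hres₁ : ∀ x ∈ V, (LieAlgebra.ad ℝ u c₁) x ∈ V := by
      intro x hx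
      exact Submodule.mem_inf.2 ⟨hpres c₁ hc₁N x (Submodule.mem_inf.1 hx).1,
        hBW c₁ hc₁ x (Submodule.mem_inf.1 hx).2⟩
    set A : ↥V →ₗ[ℝ] ↥V := (LieAlgebra.ad ℝ u c₀).restrict hres₀ with hAdef
    set B₁ : ↥V →ₗ[ℝ] ↥V := (LieAlgebra.ad ℝ u c₁).restrict hres₁ with hB₁def
    have hAinj : Function.Injective A := by
      rw [← LinearMap.ker_eq_bot, eq_bot_iff]
      rintro x hx
      rw [LinearMap.mem_ker] at hx
      have hx0 : ⁅c₀, (x : u)⁆ = 0 := by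
        have := congrArg (Subtype.val) hx
        rwa [LinearMap.restrict_apply] at this
      have hxN : (x : u) ∈ N := (memK c₀ _).2 ⟨hx0, (Submodule.mem_inf.1 x.2).2⟩
      have hxO : (x : u) ∈ Nᗮ := (Submodule.mem_inf.1 x.2).1
      have : (x : u) = 0 := hdef _ ((Submodule.mem_orthogonal N _).1 hxO _ hxN)
      simpa [Submodule.mem_bot] using Subtype.ext this
    obtain ⟨t, ht0, htinj⟩ := ct_exists_t A B₁ hAinj
    set c₂ : u := c₀ + t • c₁ with hc₂def
    have hc₂Bb : c₂ ∈ Bb := add_mem hc₀ (Submodule.smul_mem _ t hc₁)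
    have hKc₂ : ∀ x ∈ K c₂, x ∈ N ∧ ⁅c₁, x⁆ = 0 := by
      intro x hxK
      obtain ⟨hxker, hxW⟩ := (memK c₂ x).1 hxK
      set nn : u := ↑(N.orthogonalProjectionOnto x) with hnndef
      have hnN : nn ∈ N := (N.orthogonalProjectionOnto x).2
      set v : u := x - nn with hvdef
      have hvO : v ∈ Nᗮ := Submodule.sub_starProjection_mem_orthogonal x
      have hvW : v ∈ W := sub_mem hxW (hNW hnN)
      have hvV : v ∈ V := Submodule.mem_inf.2 ⟨hvO, hvW⟩
      have hxnv : x = nn + v := by rw [hvdef]; abel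
      have hexp : t • ⁅c₁, nn⁆ + (⁅c₀, v⁆ + t • ⁅c₁, v⁆) = 0 := by
        rw [← hxker, hc₂def, hxnv, add_lie, lie_add, lie_add, smul_lie, smul_lie,
          ((memK c₀ nn).1 hnN).1]
        abel
      have hterm1 : t • ⁅c₁, nn⁆ ∈ N := Submodule.smul_mem _ _ (hc₁N nn hnN)
      have hterm2 : ⁅c₀, v⁆ + t • ⁅c₁, v⁆ ∈ Nᗮ :=
        add_mem (hpres c₀ hc₀N v hvO) (Submodule.smul_mem _ _ (hpres c₁ hc₁N v hvO))
      have h1 : t • ⁅c₁, nn⁆ = 0 := by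
        have hmO : t • ⁅c₁, nn⁆ ∈ Nᗮ := by
          rw [eq_neg_of_add_eq_zero_left hexp]
          exact neg_mem hterm2
        exact hdef _ ((Submodule.mem_orthogonal N _).1 hmO _ hterm1)
      have h2 : ⁅c₁, nn⁆ = 0 := (smul_eq_zero.1 h1).resolve_left ht0
      have hv0 : v = 0 := by
        have h3 : ⁅c₀, v⁆ + t • ⁅c₁, v⁆ = 0 := by
          rw [h1, zero_add] at hexp
          exact hexp
        have h4 : (A + t • B₁) ⟨v, hvV⟩ = 0 := by
          apply Subtype.ext
          have : ((A + t • B₁) ⟨v, hvV⟩ : u) = ⁅c₀, v⁆ + t • ⁅c₁, v⁆ := by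
            simp [hAdef, hB₁def, LinearMap.restrict_apply, LieAlgebra.ad_apply]
          rw [this, h3]
          rfl
        have h5 := htinj (a₁ := ⟨v, hvV⟩) (a₂ := 0) (by rw [h4, map_zero])
        exact congrArg Subtype.val h5
      constructor
      · rw [hxnv, hv0, add_zero]; exact hnN
      · rw [hxnv, hv0, add_zero]; exact h2
    have hlt : K c₂ < N := by
      rw [SetLike.lt_iff_le_and_exists]
      exact ⟨fun x hx => (hKc₂ x hx).1, x₀, hx₀K,
        fun hmem => hc₁ne (hKc₂ x₀ hmem).2⟩
    have hrank := Submodule.finrank_lt_finrank_of_lt hlt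
    have hD : Module.finrank ℝ (K c₂) ∈ D := ⟨c₂, hc₂Bb, rfl⟩
    have hle := Nat.sInf_le hD
    rw [hc₀rank] at hrank
    omega
  obtain ⟨c₀, hc₀Bb, hreg⟩ := hKexists
  -- the regular operator M₀ = ad c₀ and S = -M₀²
  set M₀ : Module.End ℝ u := LieAlgebra.ad ℝ u c₀ with hM₀def
  have hM₀ap : ∀ x, M₀ x = ⁅c₀, x⁆ := fun x => rfl
  have hregW : ∀ x ∈ W, ⁅c₀, x⁆ = 0 → x = 0 := by
    intro x hx h0
    have hmem : x ∈ K c₀ := (memK c₀ x).2 ⟨h0, hx⟩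
    rw [hreg] at hmem
    simpa using hmem
  set S : Module.End ℝ u := -(M₀ * M₀) with hSdef
  have hSap : ∀ x, S x = -⁅c₀, ⁅c₀, x⁆⁆ := fun x => rfl
  have hSsymm : LinearMap.IsSymmetric S := by
    intro x y
    show (inner ℝ (S x) y : ℝ) = inner ℝ x (S y)
    rw [hSap x, hSap y, inner_neg_left, inner_neg_right,
      hskew c₀ ⁅c₀, x⁆ y, hskew c₀ x ⁅c₀, y⁆]
    ring
  have hMMx : ∀ x : u, M₀ (M₀ x) = -(S x) := by
    intro x
    rw [hSap, neg_neg]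
    rfl
  have hMM : ∀ x y : u, (inner ℝ (M₀ x) (M₀ y) : ℝ) = inner ℝ x (S y) := by
    intro x y
    have h1 : (inner ℝ (M₀ x) (M₀ y) : ℝ) = -(inner ℝ x ⁅c₀, M₀ y⁆ : ℝ) := hskew c₀ x (M₀ y)
    rw [h1, hM₀ap y, hSap, inner_neg_right]
  have hSM : ∀ x : u, (inner ℝ (S x) x : ℝ) = inner ℝ (M₀ x) (M₀ x) := by
    intro x
    rw [hMM x x, hSsymm x x]
  have hM₀T : ∀ x ∈ T, M₀ x ∈ T' := by
    intro x hx
    rw [hM₀ap, ← lie_skew]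
    exact neg_mem (hTB x hx c₀ hc₀Bb)
  have hM₀T' : ∀ x ∈ T', M₀ x ∈ T := by
    intro x hx
    rw [hM₀ap, ← lie_skew]
    exact neg_mem (hT'B x hx c₀ hc₀Bb)
  have hST : ∀ x ∈ T, S x ∈ T := by
    intro x hx
    rw [hSdef]
    show -(M₀ (M₀ x)) ∈ T
    exact neg_mem (hM₀T' _ (hM₀T x hx))
  have hST' : ∀ x ∈ T', S x ∈ T' := by
    intro x hx
    rw [hSdef]
    show -(M₀ (M₀ x)) ∈ T'
    exact neg_mem (hM₀T _ (hM₀T' x hx))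
  have hSBb : ∀ c ∈ Bb, S c = 0 := by
    intro c hc
    rw [hSap, hBB c₀ hc₀Bb c hc, lie_zero, neg_zero]
  have hkerM₀Bb : ∀ x : u, ⁅c₀, x⁆ = 0 → x ∈ Bb := by
    intro x h0
    have hcomp : ∀ y : u, ⁅c₀, s y⁆ = -s ⁅c₀, y⁆ := by
      intro y
      have h1 : s ⁅c₀, y⁆ = -⁅c₀, s y⁆ := by
        rw [hslie, ((memBb c₀).1 hc₀Bb).1, neg_lie]
      rw [h1, neg_neg]
    have hcomp' : ∀ y : u, ⁅c₀, s' y⁆ = -s' ⁅c₀, y⁆ := by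
      intro y
      have h1 : s' ⁅c₀, y⁆ = -⁅c₀, s' y⁆ := by
        rw [hs'lie, ((memBb c₀).1 hc₀Bb).2, neg_lie]
      rw [h1, neg_neg]
    have e1 : ⁅c₀, s x⁆ = 0 := by rw [hcomp, h0, map_zero, neg_zero]
    have e2 : ⁅c₀, s' x⁆ = 0 := by rw [hcomp', h0, map_zero, neg_zero]
    have e3 : ⁅c₀, θ x⁆ = 0 := by
      rw [hθap, hcomp (s' x), e2, map_zero, neg_zero]
    have h2 : ⁅c₀, πT x⁆ = 0 := by
      rw [hπTdef]
      simp only [lie_smul, lie_add, lie_sub, h0, e1, e2, e3]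
      simp
    have h2' : ⁅c₀, πT' x⁆ = 0 := by
      rw [hπT'def]
      simp only [lie_smul, lie_add, lie_sub, h0, e1, e2, e3]
      simp
    have hz1 : πT x = 0 := hregW _ (hTW (hπT_mem x)) h2
    have hz2 : πT' x = 0 := hregW _ (hT'W (hπT'_mem x)) h2'
    have h3 := hsum x
    rw [hz1, hz2, zero_add, zero_add] at h3
    rw [← h3]
    exact hπB_mem x
  -- spectral theory of S
  set bb : OrthonormalBasis (Fin (Module.finrank ℝ u)) ℝ u :=
    hSsymm.eigenvectorBasis rfl with hbbdef
  set μ : Fin (Module.finrank ℝ u) → ℝ := hSsymm.eigenvalues rfl with hμdef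
  have hSbb : ∀ i, S (bb i) = μ i • bb i := by
    intro i
    have h := (hSsymm.hasEigenvector_eigenvectorBasis rfl i).1
    rw [Module.End.mem_eigenspace_iff] at h
    exact h
  have hbne : ∀ i, bb i ≠ 0 := fun i => (hSsymm.hasEigenvector_eigenvectorBasis rfl i).2
  have hbo : ∀ i j, (inner ℝ (bb i) (bb j) : ℝ) = if i = j then 1 else 0 := by
    intro i j
    have h := bb.orthonormal
    rw [orthonormal_iff_ite] at h
    exact h i j
  have hμ0 : ∀ i, 0 ≤ μ i := by
    intro i
    have h1 : (inner ℝ (S (bb i)) (bb i) : ℝ) = μ i := by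
      rw [hSbb, real_inner_smul_left, hbo]
      simp
    have h2 := hSM (bb i)
    rw [h1] at h2
    rw [h2]
    exact real_inner_self_nonneg
  have hμker : ∀ i, μ i = 0 → M₀ (bb i) = 0 := by
    intro i h
    have h1 : S (bb i) = 0 := by rw [hSbb, h, zero_smul]
    have h2 := hSM (bb i)
    rw [h1] at h2
    simp only [inner_zero_left] at h2
    exact hdef _ h2.symm
  have hμker' : ∀ i, μ i = 0 → ⁅c₀, bb i⁆ = 0 := by
    intro i h
    rw [← hM₀ap]
    exact hμker i h
  -- interpolation polynomials
  set nodes : Finset ℝ := insert (0 : ℝ) (Finset.image μ Finset.univ) with hnodes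
  have h0nodes : (0 : ℝ) ∈ nodes := Finset.mem_insert_self _ _
  have hμnodes : ∀ i, μ i ∈ nodes := fun i =>
    Finset.mem_insert_of_mem (Finset.mem_image_of_mem μ (Finset.mem_univ i))
  set fQ : ℝ → ℝ := fun a => if a = 0 then 1 else (Real.sqrt a)⁻¹ with hfQ
  set fP : ℝ → ℝ := fun a => if a = 0 then 1 else 0 with hfP
  set qQ : Polynomial ℝ := Lagrange.interpolate nodes id fQ with hqQ
  set qP : Polynomial ℝ := Lagrange.interpolate nodes id fP with hqP
  have hqQeval : ∀ a ∈ nodes, qQ.eval a = fQ a := fun a ha =>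
    Lagrange.eval_interpolate_at_node fQ (Set.injOn_id _) ha
  have hqPeval : ∀ a ∈ nodes, qP.eval a = fP a := fun a ha =>
    Lagrange.eval_interpolate_at_node fP (Set.injOn_id _) ha
  set Q : Module.End ℝ u := Polynomial.aeval S qQ with hQdef
  set Pi : Module.End ℝ u := Polynomial.aeval S qP with hPidef
  have hQb : ∀ i, Q (bb i) = fQ (μ i) • bb i := by
    intro i
    rw [hQdef, Module.End.aeval_apply_of_hasEigenvector
      ⟨Module.End.mem_eigenspace_iff.2 (hSbb i), hbne i⟩, hqQeval _ (hμnodes i)]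
  have hPb : ∀ i, Pi (bb i) = fP (μ i) • bb i := by
    intro i
    rw [hPidef, Module.End.aeval_apply_of_hasEigenvector
      ⟨Module.End.mem_eigenspace_iff.2 (hSbb i), hbne i⟩, hqPeval _ (hμnodes i)]
  -- commutation relations
  have hcSM₀ : Commute S M₀ := by
    rw [hSdef]
    exact (((Commute.refl M₀).mul_left (Commute.refl M₀))).neg_left
  have hQM₀ : Commute Q M₀ := ct_aeval_commute hcSM₀ qQ
  have hPM₀ : Commute Pi M₀ := ct_aeval_commute hcSM₀ qP
  have hadc : ∀ c ∈ Bb, Commute M₀ (LieAlgebra.ad ℝ u c) := by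
    intro c hc
    have h2 : M₀ * (LieAlgebra.ad ℝ u c) - (LieAlgebra.ad ℝ u c) * M₀ = 0 := by
      ext z
      simp only [LinearMap.sub_apply, Module.End.mul_apply, LinearMap.zero_apply, hM₀ap,
        LieAlgebra.ad_apply]
      rw [hadcomm c₀ hc₀Bb c hc z, sub_self]
    exact sub_eq_zero.1 h2
  have hcSc : ∀ c ∈ Bb, Commute S (LieAlgebra.ad ℝ u c) := by
    intro c hc
    rw [hSdef]
    exact ((hadc c hc).mul_left (hadc c hc)).neg_left
  have hQc : ∀ c ∈ Bb, Commute Q (LieAlgebra.ad ℝ u c) :=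
    fun c hc => ct_aeval_commute (hcSc c hc) qQ
  have hPc : ∀ c ∈ Bb, Commute Pi (LieAlgebra.ad ℝ u c) :=
    fun c hc => ct_aeval_commute (hcSc c hc) qP
  -- range of Pi is in Bb
  have hPiBb : ∀ x : u, Pi x ∈ Bb := by
    intro x
    rw [← bb.sum_repr x, map_sum]
    apply Submodule.sum_mem
    intro i _
    rw [map_smul, hPb]
    rcases eq_or_ne (μ i) 0 with h | h
    · have hfp1 : fP (μ i) = 1 := by rw [hfP]; simp [h]
      rw [hfp1, one_smul]
      exact Submodule.smul_mem _ _ (hkerM₀Bb _ (hμker' i h))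
    · have hfp0 : fP (μ i) = 0 := by rw [hfP]; simp [h]
      rw [hfp0, zero_smul, smul_zero]
      exact zero_mem _
  have hdisjTBb : ∀ x, x ∈ T → x ∈ Bb → x = 0 := fun x hx hc =>
    hhalf x (((memT x).1 hx).1.symm.trans ((memBb x).1 hc).1)
  have hdisjT'Bb : ∀ x, x ∈ T' → x ∈ Bb → x = 0 := fun x hx hc =>
    hhalf x (((memT' x).1 hx).2.symm.trans ((memBb x).1 hc).2)
  -- the automorphism candidates
  set ρe : Module.End ℝ u := M₀ * Q + Pi with hρe
  set ρe' : Module.End ℝ u := -(M₀ * Q) + Pi with hρe'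
  have hρap : ∀ x, ρe x = M₀ (Q x) + Pi x := fun x => rfl
  have hρ'ap : ∀ x, ρe' x = -(M₀ (Q x)) + Pi x := fun x => rfl
  have hPT0 : ∀ x ∈ T, Pi x = 0 := fun x hx =>
    hdisjTBb _ (ct_aeval_mem hST qP x hx) (hPiBb x)
  have hPT'0 : ∀ x ∈ T', Pi x = 0 := fun x hx =>
    hdisjT'Bb _ (ct_aeval_mem hST' qP x hx) (hPiBb x)
  have hρT : ∀ x ∈ T, ρe x ∈ T' := by
    intro x hx
    rw [hρap, hPT0 x hx, add_zero]
    exact hM₀T _ (ct_aeval_mem hST qQ x hx)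
  have hρT' : ∀ x ∈ T', ρe x ∈ T := by
    intro x hx
    rw [hρap, hPT'0 x hx, add_zero]
    exact hM₀T' _ (ct_aeval_mem hST' qQ x hx)
  have hρBb : ∀ c ∈ Bb, ρe c = c := by
    intro c hc
    have hQc0 : Q c = qQ.eval 0 • c := by
      rw [hQdef]; exact ct_aeval_of_ker (hSBb c hc) qQ
    have hMQ0 : M₀ (Q c) = 0 := by
      rw [hQc0, map_smul, show M₀ c = 0 from by rw [hM₀ap, hBB c₀ hc₀Bb c hc], smul_zero]
    have hPic : Pi c = qP.eval 0 • c := by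
      rw [hPidef]; exact ct_aeval_of_ker (hSBb c hc) qP
    rw [hρap, hMQ0, zero_add, hPic, hqPeval 0 h0nodes]
    rw [hfP]
    simp
  have hρ'Bb : ∀ c ∈ Bb, ρe' c = c := by
    intro c hc
    have hQc0 : Q c = qQ.eval 0 • c := by
      rw [hQdef]; exact ct_aeval_of_ker (hSBb c hc) qQ
    have hMQ0 : M₀ (Q c) = 0 := by
      rw [hQc0, map_smul, show M₀ c = 0 from by rw [hM₀ap, hBB c₀ hc₀Bb c hc], smul_zero]
    have hPic : Pi c = qP.eval 0 • c := by
      rw [hPidef]; exact ct_aeval_of_ker (hSBb c hc) qP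
    rw [hρ'ap, hMQ0, neg_zero, zero_add, hPic, hqPeval 0 h0nodes]
    rw [hfP]
    simp
  have hρW : ∀ x ∈ W, ρe x ∈ W := by
    intro x hx
    obtain ⟨a, ha, b, hb, rfl⟩ := hWmem x hx
    rw [map_add]
    exact add_mem (hT'W (hρT a ha)) (hTW (hρT' b hb))
  -- intertwining property
  have hρs : ∀ x, ρe (s x) = s' (ρe x) := by
    have hTcase : ∀ a ∈ T, ρe (s a) = s' (ρe a) := by
      intro a ha
      rw [((memT a).1 ha).1, ((memT' _).1 (hρT a ha)).2]
    have hT'case : ∀ a ∈ T', ρe (s a) = s' (ρe a) := by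
      intro a ha
      rw [((memT' a).1 ha).1, map_neg, ((memT _).1 (hρT' a ha)).2]
    have hBcase : ∀ c ∈ Bb, ρe (s c) = s' (ρe c) := by
      intro c hc
      rw [((memBb c).1 hc).1, map_neg, hρBb c hc, ((memBb c).1 hc).2]
    intro x
    calc ρe (s x) = ρe (s (πT x + πT' x + πB x)) := by rw [hsum]
      _ = ρe (s (πT x)) + ρe (s (πT' x)) + ρe (s (πB x)) := by simp only [map_add]
      _ = s' (ρe (πT x)) + s' (ρe (πT' x)) + s' (ρe (πB x)) := by
          rw [hTcase _ (hπT_mem x), hT'case _ (hπT'_mem x), hBcase _ (hπB_mem x)]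
      _ = s' (ρe (πT x + πT' x + πB x)) := by simp only [map_add]
      _ = s' (ρe x) := by rw [hsum]
  -- action on the eigenbasis
  have hρbb : ∀ i, ρe (bb i) =
      if μ i = 0 then bb i else (Real.sqrt (μ i))⁻¹ • M₀ (bb i) := by
    intro i
    rcases eq_or_ne (μ i) 0 with h | h
    · rw [if_pos h, hρap, hQb, hPb, map_smul, hμker i h, smul_zero, zero_add, hfP]
      simp [h]
    · rw [if_neg h, hρap, hQb, hPb, map_smul]
      have hfp0 : fP (μ i) = 0 := by rw [hfP]; simp [h]
      rw [hfp0, zero_smul, add_zero, hfQ]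
      simp [h]
  have hρ'bb : ∀ i, ρe' (bb i) =
      if μ i = 0 then bb i else -((Real.sqrt (μ i))⁻¹ • M₀ (bb i)) := by
    intro i
    rcases eq_or_ne (μ i) 0 with h | h
    · rw [if_pos h, hρ'ap, hQb, hPb, map_smul, hμker i h, smul_zero, neg_zero, zero_add, hfP]
      simp [h]
    · rw [if_neg h, hρ'ap, hQb, hPb, map_smul]
      have hfp0 : fP (μ i) = 0 := by rw [hfP]; simp [h]
      rw [hfp0, zero_smul, add_zero, hfQ]
      simp [h]
  have hsc : ∀ i, μ i ≠ 0 → (Real.sqrt (μ i))⁻¹ * ((Real.sqrt (μ i))⁻¹ * μ i) = 1 := by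
    intro i hi
    have hs1 : Real.sqrt (μ i) * Real.sqrt (μ i) = μ i := Real.mul_self_sqrt (hμ0 i)
    have hsne : Real.sqrt (μ i) ≠ 0 := by
      intro h0
      rw [h0, mul_zero] at hs1
      exact hi hs1.symm
    field_simp
    rw [sq, hs1]
  -- ρe is inner-product preserving on basis vectors
  have hiso_b : ∀ i j, (inner ℝ (ρe (bb i)) (ρe (bb j)) : ℝ) = inner ℝ (bb i) (bb j) := by
    intro i j
    rw [hρbb i, hρbb j]
    rcases eq_or_ne (μ i) 0 with hi | hi <;> rcases eq_or_ne (μ j) 0 with hj | hj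
    · rw [if_pos hi, if_pos hj]
    · rw [if_pos hi, if_neg hj, real_inner_smul_right]
      have h3 := hskew c₀ (bb i) (bb j)
      have h4 : (⁅c₀, bb i⁆ : u) = 0 := hμker' i hi
      rw [h4, inner_zero_left] at h3
      have h5 : (inner ℝ (bb i) (M₀ (bb j)) : ℝ) = 0 := by
        have := h3.symm
        rw [neg_eq_zero] at this
        exact this
      rw [h5, mul_zero, hbo, if_neg (by rintro rfl; exact hj hi)]
    · rw [if_neg hi, if_pos hj, real_inner_smul_left]
      have h3 := hskew c₀ (bb i) (bb j)
      have h4 : (⁅c₀, bb j⁆ : u) = 0 := hμker' j hj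
      rw [h4, inner_zero_right, neg_zero] at h3
      rw [show (inner ℝ (M₀ (bb i)) (bb j) : ℝ) = 0 from h3, mul_zero, hbo,
        if_neg (by rintro rfl; exact hi hj)]
    · rw [if_neg hi, if_neg hj, real_inner_smul_left, real_inner_smul_right, hMM, hSbb,
        real_inner_smul_right]
      rcases eq_or_ne i j with rfl | hij
      · rw [hbo, if_pos rfl, mul_one]
        exact hsc i hi
      · rw [hbo, if_neg hij, mul_zero, mul_zero, mul_zero]
  -- ρe is inner-product preserving
  have hiso : ∀ x y : u, (inner ℝ (ρe x) (ρe y) : ℝ) = inner ℝ x y := by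
    intro x y
    rw [← bb.sum_repr x, ← bb.sum_repr y, map_sum, map_sum]
    rw [sum_inner, sum_inner]
    refine Finset.sum_congr rfl fun i _ => ?_
    rw [inner_sum, inner_sum]
    refine Finset.sum_congr rfl fun j _ => ?_
    rw [map_smul, map_smul, real_inner_smul_left, real_inner_smul_left,
      real_inner_smul_right, real_inner_smul_right, hiso_b]
  -- ρe and ρe' are mutually inverse
  have hρM₀b : ∀ i, μ i ≠ 0 → ρe (M₀ (bb i)) = -(((Real.sqrt (μ i))⁻¹ * μ i) • bb i) := by
    intro i hi
    have hQM : Q (M₀ (bb i)) = (Real.sqrt (μ i))⁻¹ • M₀ (bb i) := by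
      have hcomm := congrArg (fun f : Module.End ℝ u => f (bb i)) hQM₀
      simp only [Module.End.mul_apply] at hcomm
      rw [hcomm, hQb, map_smul, hfQ]
      simp [hi]
    have hPM : Pi (M₀ (bb i)) = 0 := by
      have hcomm := congrArg (fun f : Module.End ℝ u => f (bb i)) hPM₀
      simp only [Module.End.mul_apply] at hcomm
      rw [hcomm, hPb]
      have hfp0 : fP (μ i) = 0 := by rw [hfP]; simp [hi]
      rw [hfp0, zero_smul, map_zero]
    rw [hρap, hQM, hPM, add_zero, map_smul, hMMx, hSbb]
    rw [smul_neg, smul_smul]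
  have hρ'M₀b : ∀ i, μ i ≠ 0 → ρe' (M₀ (bb i)) = ((Real.sqrt (μ i))⁻¹ * μ i) • bb i := by
    intro i hi
    have hQM : Q (M₀ (bb i)) = (Real.sqrt (μ i))⁻¹ • M₀ (bb i) := by
      have hcomm := congrArg (fun f : Module.End ℝ u => f (bb i)) hQM₀
      simp only [Module.End.mul_apply] at hcomm
      rw [hcomm, hQb, map_smul, hfQ]
      simp [hi]
    have hPM : Pi (M₀ (bb i)) = 0 := by
      have hcomm := congrArg (fun f : Module.End ℝ u => f (bb i)) hPM₀
      simp only [Module.End.mul_apply] at hcomm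
      rw [hcomm, hPb]
      have hfp0 : fP (μ i) = 0 := by rw [hfP]; simp [hi]
      rw [hfp0, zero_smul, map_zero]
    rw [hρ'ap, hQM, hPM, add_zero, map_smul, hMMx, hSbb]
    rw [smul_neg, smul_smul, neg_neg]
  have hcomp1 : ∀ i, ρe' (ρe (bb i)) = bb i := by
    intro i
    rcases eq_or_ne (μ i) 0 with h | h
    · rw [hρbb i, if_pos h, hρ'bb i, if_pos h]
    · rw [hρbb i, if_neg h, map_smul, hρ'M₀b i h, smul_smul, hsc i h, one_smul]
  have hcomp2 : ∀ i, ρe (ρe' (bb i)) = bb i := by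
    intro i
    rcases eq_or_ne (μ i) 0 with h | h
    · rw [hρ'bb i, if_pos h, hρbb i, if_pos h]
    · rw [hρ'bb i, if_neg h, map_neg, map_smul, hρM₀b i h, smul_neg, neg_neg, smul_smul,
        hsc i h, one_smul]
  have hρρ' : ρe ∘ₗ ρe' = LinearMap.id := by
    apply bb.toBasis.ext
    intro i
    rw [OrthonormalBasis.coe_toBasis]
    simp only [LinearMap.comp_apply, LinearMap.id_apply]
    exact hcomp2 i
  have hρ'ρ : ρe' ∘ₗ ρe = LinearMap.id := by
    apply bb.toBasis.ext
    intro i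
    rw [OrthonormalBasis.coe_toBasis]
    simp only [LinearMap.comp_apply, LinearMap.id_apply]
    exact hcomp1 i
  -- ρe commutes with ad c for c ∈ Bb
  have hadρ : ∀ c ∈ Bb, ∀ x, ⁅c, ρe x⁆ = ρe ⁅c, x⁆ := by
    intro c hc x
    have h1 : Commute ρe (LieAlgebra.ad ℝ u c) := by
      rw [hρe]
      exact Commute.add_left ((hadc c hc).mul_left (hQc c hc)) (hPc c hc)
    have h2 := congrArg (fun f : Module.End ℝ u => f x) h1
    simp only [Module.End.mul_apply] at h2
    exact h2.symm
  -- ρe is a Lie algebra endomorphism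
  have hlieWW : ∀ a ∈ W, ∀ b ∈ W, ρe ⁅a, b⁆ = ⁅ρe a, ρe b⁆ := by
    intro a ha b hb
    have h1 : ⁅ρe a, ρe b⁆ ∈ Bb := hWW _ (hρW a ha) _ (hρW b hb)
    have h2 : ρe ⁅a, b⁆ = ⁅a, b⁆ := hρBb _ (hWW a ha b hb)
    have h3 : ⁅ρe a, ρe b⁆ - ⁅a, b⁆ = 0 := by
      refine hztest _ (sub_mem h1 (hWW a ha b hb)) fun c hc => ?_
      rw [inner_sub_left]
      have e1 : (inner ℝ ⁅ρe a, ρe b⁆ c : ℝ) = inner ℝ ⁅a, b⁆ c := by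
        rw [hib (ρe a) (ρe b) c, hadρ c hc a, hiso, ← hib a b c]
      rw [e1, sub_self]
    rw [h2]
    exact (sub_eq_zero.1 h3).symm
  have hlieBW : ∀ c ∈ Bb, ∀ a, ρe ⁅c, a⁆ = ⁅ρe c, ρe a⁆ := by
    intro c hc a
    rw [hρBb c hc, hadρ c hc a]
  have hlieWB : ∀ a, ∀ c ∈ Bb, ρe ⁅a, c⁆ = ⁅ρe a, ρe c⁆ := by
    intro a c hc
    rw [show (⁅a, c⁆ : u) = -⁅c, a⁆ from by rw [← lie_skew], map_neg, hlieBW c hc a,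
      show (⁅ρe a, ρe c⁆ : u) = -⁅ρe c, ρe a⁆ from by rw [← lie_skew]]
  have hρlie : ∀ x y, ρe ⁅x, y⁆ = ⁅ρe x, ρe y⁆ := by
    intro x y
    have hxW : πT x + πT' x ∈ W := add_mem (hTW (hπT_mem x)) (hT'W (hπT'_mem x))
    have hyW : πT y + πT' y ∈ W := add_mem (hTW (hπT_mem y)) (hT'W (hπT'_mem y))
    have hxe : ρe x = ρe (πT x + πT' x) + ρe (πB x) := by
      rw [← map_add, hsum x]
    have hye : ρe y = ρe (πT y + πT' y) + ρe (πB y) := by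
      rw [← map_add, hsum y]
    calc ρe ⁅x, y⁆
        = ρe ⁅(πT x + πT' x) + πB x, (πT y + πT' y) + πB y⁆ := by
          rw [show (πT x + πT' x) + πB x = x from hsum x,
            show (πT y + πT' y) + πB y = y from hsum y]
      _ = ρe (⁅πT x + πT' x, πT y + πT' y⁆ + ⁅πT x + πT' x, πB y⁆
            + ⁅πB x, πT y + πT' y⁆ + ⁅πB x, πB y⁆) := by
          congr 1
          simp only [add_lie, lie_add]
          abel
      _ = ⁅ρe (πT x + πT' x), ρe (πT y + πT' y)⁆ + ⁅ρe (πT x + πT' x), ρe (πB y)⁆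
            + ⁅ρe (πB x), ρe (πT y + πT' y)⁆ + ⁅ρe (πB x), ρe (πB y)⁆ := by
          rw [map_add, map_add, map_add, hlieWW _ hxW _ hyW,
            hlieWB _ _ (hπB_mem y), hlieBW _ (hπB_mem x) _, hlieBW _ (hπB_mem x) _]
      _ = ⁅ρe x, ρe y⁆ := by
          rw [hxe, hye]
          simp only [add_lie, lie_add]
          abel
  exact ⟨LinearEquiv.ofLinear ρe ρe' hρρ' hρ'ρ,
    fun x y => by simpa [LinearEquiv.ofLinear_apply] using hρlie x y,
    fun x => by simpa [LinearEquiv.ofLinear_apply] using hρs x⟩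


set_option maxHeartbeats 2000000 in
/-- Let `g`, `g'` be non-isomorphic real forms of a complex semisimple Lie
algebra `L`, compatible with each other and with a compact real form `u` (pairwise
commuting anti-linear conjugations), with Cartan decompositions `g = t ⊕ p`,
`g' = t' ⊕ p'` aligned with `u`, i.e. `u = t ⊕ ip = t' ⊕ ip'`.  If neither `g` nor `g'`
is compact then `t ∩ t' ≠ 0`. -/
theorem compatibleTriple_compactParts_intersect
    {L : Type*} [LieRing L] [LieAlgebra ℂ L] [LieAlgebra ℝ L]
    [IsScalarTower ℝ ℂ L] [FiniteDimensional ℂ L] [FiniteDimensional ℝ L]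
    [LieAlgebra.IsSemisimple ℂ L]
    (g g' u : LieSubalgebra ℝ L)
    -- the three conjugation maps: anti-linear involutive Lie algebra automorphisms
    (σ σ' τ : L →ₗ[ℝ] L)
    (hσinv : ∀ x, σ (σ x) = x) (hσ'inv : ∀ x, σ' (σ' x) = x) (hτinv : ∀ x, τ (τ x) = x)
    (hσanti : ∀ x, σ (Complex.I • x) = -(Complex.I • σ x))
    (hσ'anti : ∀ x, σ' (Complex.I • x) = -(Complex.I • σ' x))
    (hτanti : ∀ x, τ (Complex.I • x) = -(Complex.I • τ x))
    (hσlie : ∀ x y, σ ⁅x, y⁆ = ⁅σ x, σ y⁆)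
    (hσ'lie : ∀ x y, σ' ⁅x, y⁆ = ⁅σ' x, σ' y⁆)
    (hτlie : ∀ x y, τ ⁅x, y⁆ = ⁅τ x, τ y⁆)
    -- their fixed point sets are `g`, `g'`, `u`
    (hgfix : ∀ x, x ∈ g ↔ σ x = x)
    (hg'fix : ∀ x, x ∈ g' ↔ σ' x = x)
    (hufix : ∀ x, x ∈ u ↔ τ x = x)
    -- compatibility: the conjugations pairwise commute
    (hc1 : ∀ x, σ (σ' x) = σ' (σ x))
    (hc2 : ∀ x, σ (τ x) = τ (σ x))
    (hc3 : ∀ x, σ' (τ x) = τ (σ' x))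
    -- `g`, `g'`, `u` are real forms: `L = W ⊕ iW` for each of them
    (hrfg : ∀ x : L, ∃ a ∈ g, ∃ b ∈ g, x = a + Complex.I • b)
    (hrfg' : ∀ x : L, ∃ a ∈ g', ∃ b ∈ g', x = a + Complex.I • b)
    (hrfu : ∀ x : L, ∃ a ∈ u, ∃ b ∈ u, x = a + Complex.I • b)
    -- Cartan decompositions `g = t ⊕ p`, `g' = t' ⊕ p'`
    (t p t' p' : Submodule ℝ L)
    (hg : t ⊔ p = g.toSubmodule) (hgd : t ⊓ p = ⊥)
    (hg' : t' ⊔ p' = g'.toSubmodule) (hg'd : t' ⊓ p' = ⊥)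
    (htt : ∀ x ∈ t, ∀ y ∈ t, ⁅x, y⁆ ∈ t)
    (htp : ∀ x ∈ t, ∀ y ∈ p, ⁅x, y⁆ ∈ p)
    (hpp : ∀ x ∈ p, ∀ y ∈ p, ⁅x, y⁆ ∈ t)
    (ht't' : ∀ x ∈ t', ∀ y ∈ t', ⁅x, y⁆ ∈ t')
    (ht'p' : ∀ x ∈ t', ∀ y ∈ p', ⁅x, y⁆ ∈ p')
    (hp'p' : ∀ x ∈ p', ∀ y ∈ p', ⁅x, y⁆ ∈ t')
    -- alignment with the compact real form: `u = t ⊕ ip = t' ⊕ ip'`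
    (hu : t ⊔ p.map (mulI L) = u.toSubmodule)
    (hu' : t' ⊔ p'.map (mulI L) = u.toSubmodule)
    -- `u` is compact: its Killing form is negative definite
    (hcompact : ∀ x : u, x ≠ 0 → killingForm ℝ u x x < 0)
    -- `g` and `g'` are not isomorphic as real Lie algebras
    (hniso : IsEmpty (g ≃ₗ⁅ℝ⁆ g'))
    -- neither `g` nor `g'` is compact
    (hgnc : ¬ ∀ x : g, x ≠ 0 → killingForm ℝ g x x < 0)
    (hg'nc : ¬ ∀ x : g', x ≠ 0 → killingForm ℝ g' x x < 0) :
    t ⊓ t' ≠ ⊥ := by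
  intro h
  classical
  have hIIsmul : ∀ z : L, Complex.I • Complex.I • z = -z := by
    intro z
    rw [smul_smul, Complex.I_mul_I, neg_one_smul]
  have hdouble : ∀ z : L, z = -z → z = 0 := by
    intro z hz
    have h2 : (2 : ℝ) • z = 0 := by
      rw [two_smul]
      nth_rewrite 2 [hz]
      exact add_neg_cancel z
    simpa [smul_eq_zero] using h2
  -- σ and σ' preserve u
  have hσu : ∀ x, x ∈ u → σ x ∈ u := by
    intro x hx
    rw [hufix, ← hc2, (hufix x).1 hx]
  have hσ'u : ∀ x, x ∈ u → σ' x ∈ u := by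
    intro x hx
    rw [hufix, ← hc3, (hufix x).1 hx]
  -- t = g ∩ u, t' = g' ∩ u
  have htg : t ≤ g.toSubmodule := hg ▸ le_sup_left
  have hpg : p ≤ g.toSubmodule := hg ▸ le_sup_right
  have ht'g' : t' ≤ g'.toSubmodule := hg' ▸ le_sup_left
  have hp'g' : p' ≤ g'.toSubmodule := hg' ▸ le_sup_right
  have hgu_t : ∀ z : L, z ∈ g → z ∈ u → z ∈ t := by
    intro z hzg hzu
    have hz1 : z ∈ t ⊔ p := by rw [hg]; exact hzg
    obtain ⟨a, ha, b, hb, hab⟩ := Submodule.mem_sup.1 hz1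
    have hz2 : z ∈ t ⊔ p.map (mulI L) := by rw [hu]; exact hzu
    obtain ⟨c, hc, w, hw, hcw⟩ := Submodule.mem_sup.1 hz2
    obtain ⟨d, hd, rfl⟩ := Submodule.mem_map.1 hw
    have hb' : σ b = b := (hgfix b).1 (hpg hb)
    have hd' : σ d = d := (hgfix d).1 (hpg hd)
    have ha' : σ a = a := (hgfix a).1 (htg ha)
    have hcσ : σ c = c := (hgfix c).1 (htg hc)
    have habc : a + b = c + Complex.I • d := by rw [hab, ← hcw]; rfl
    have hkey : Complex.I • d = a + b - c := by
      rw [habc]; abel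
    have hσkey : σ (Complex.I • d) = Complex.I • d := by
      rw [hkey, map_sub, map_add, ha', hb', hcσ]
    have hneg : σ (Complex.I • d) = -(Complex.I • d) := by rw [hσanti, hd']
    have hzero : Complex.I • d = 0 := hdouble _ (hσkey.symm.trans hneg)
    have hzc : z = c := by
      rw [← hcw, show (mulI L) d = Complex.I • d from rfl, hzero, add_zero]
    rw [hzc]; exact hc
  have hg'u_t' : ∀ z : L, z ∈ g' → z ∈ u → z ∈ t' := by
    intro z hzg hzu
    have hz1 : z ∈ t' ⊔ p' := by rw [hg']; exact hzg
    obtain ⟨a, ha, b, hb, hab⟩ := Submodule.mem_sup.1 hz1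
    have hz2 : z ∈ t' ⊔ p'.map (mulI L) := by rw [hu']; exact hzu
    obtain ⟨c, hc, w, hw, hcw⟩ := Submodule.mem_sup.1 hz2
    obtain ⟨d, hd, rfl⟩ := Submodule.mem_map.1 hw
    have hb' : σ' b = b := (hg'fix b).1 (hp'g' hb)
    have hd' : σ' d = d := (hg'fix d).1 (hp'g' hd)
    have ha' : σ' a = a := (hg'fix a).1 (ht'g' ha)
    have hcσ : σ' c = c := (hg'fix c).1 (ht'g' hc)
    have habc : a + b = c + Complex.I • d := by rw [hab, ← hcw]; rfl
    have hkey : Complex.I • d = a + b - c := by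
      rw [habc]; abel
    have hσkey : σ' (Complex.I • d) = Complex.I • d := by
      rw [hkey, map_sub, map_add, ha', hb', hcσ]
    have hneg : σ' (Complex.I • d) = -(Complex.I • d) := by rw [hσ'anti, hd']
    have hzero : Complex.I • d = 0 := hdouble _ (hσkey.symm.trans hneg)
    have hzc : z = c := by
      rw [← hcw, show (mulI L) d = Complex.I • d from rfl, hzero, add_zero]
    rw [hzc]; exact hc
  -- restrictions of σ, σ' to u
  let su : ↥u →ₗ[ℝ] ↥u :=
  { toFun := fun x => ⟨σ x, hσu x x.2⟩
    map_add' := fun x y => Subtype.ext (by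
      show σ ((x : L) + (y : L)) = σ x + σ y
      rw [map_add])
    map_smul' := fun r x => Subtype.ext (by
      show σ (r • (x : L)) = r • σ x
      rw [map_smul]) }
  let s'u : ↥u →ₗ[ℝ] ↥u :=
  { toFun := fun x => ⟨σ' x, hσ'u x x.2⟩
    map_add' := fun x y => Subtype.ext (by
      show σ' ((x : L) + (y : L)) = σ' x + σ' y
      rw [map_add])
    map_smul' := fun r x => Subtype.ext (by
      show σ' (r • (x : L)) = r • σ' x
      rw [map_smul]) }
  have hsu_ap : ∀ x : ↥u, (su x : L) = σ x := fun x => rfl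
  have hs'u_ap : ∀ x : ↥u, (s'u x : L) = σ' x := fun x => rfl
  have hcoe_add : ∀ z w : ↥u, ((z + w : ↥u) : L) = (z : L) + (w : L) := fun _ _ => rfl
  have hcoe_neg : ∀ z : ↥u, ((-z : ↥u) : L) = -(z : L) := fun _ => rfl
  have hcoe_sub : ∀ z w : ↥u, ((z - w : ↥u) : L) = (z : L) - (w : L) := fun _ _ => rfl
  have hcoe_smul : ∀ (r : ℝ) (z : ↥u), ((r • z : ↥u) : L) = r • (z : L) := fun _ _ => rfl
  have hsu_inv : ∀ x, su (su x) = x := fun x => Subtype.ext (hσinv ↑x)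
  have hs'u_inv : ∀ x, s'u (s'u x) = x := fun x => Subtype.ext (hσ'inv ↑x)
  have hsucomm : ∀ x, su (s'u x) = s'u (su x) := fun x => Subtype.ext (hc1 ↑x)
  have hsu_lie : ∀ x y : ↥u, su ⁅x, y⁆ = ⁅su x, su y⁆ := by
    intro x y
    apply Subtype.ext
    rw [hsu_ap, LieSubalgebra.coe_bracket, LieSubalgebra.coe_bracket, hsu_ap, hsu_ap]
    exact hσlie ↑x ↑y
  have hs'u_lie : ∀ x y : ↥u, s'u ⁅x, y⁆ = ⁅s'u x, s'u y⁆ := by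
    intro x y
    apply Subtype.ext
    rw [hs'u_ap, LieSubalgebra.coe_bracket, LieSubalgebra.coe_bracket, hs'u_ap, hs'u_ap]
    exact hσ'lie ↑x ↑y
  have hufix' : ∀ x : ↥u, su x = x → s'u x = x → x = 0 := by
    intro x h1 h2
    have hx1 : σ ↑x = ↑x := congrArg Subtype.val h1
    have hx2 : σ' ↑x = ↑x := congrArg Subtype.val h2
    have hxt : (↑x : L) ∈ t := hgu_t _ ((hgfix _).2 hx1) x.2
    have hxt' : (↑x : L) ∈ t' := hg'u_t' _ ((hg'fix _).2 hx2) x.2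
    have hmem : (↑x : L) ∈ t ⊓ t' := Submodule.mem_inf.2 ⟨hxt, hxt'⟩
    rw [h] at hmem
    exact Subtype.ext (by simpa using hmem)
  haveI : FiniteDimensional ℝ ↥u := by infer_instance
  obtain ⟨ρ, hρlie, hρs⟩ := ct_key hcompact su s'u hsu_inv hs'u_inv hsucomm hsu_lie hs'u_lie hufix'
  have hρs' : ∀ x, ρ.symm (s'u x) = su (ρ.symm x) := by
    intro x
    have h1 := hρs (ρ.symm x)
    rw [LinearEquiv.apply_symm_apply] at h1
    have h2 := congrArg ρ.symm h1
    rw [LinearEquiv.symm_apply_apply] at h2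
    exact h2.symm
  -- decomposition of L = u ⊕ i·u via τ
  have hτa : ∀ a : ↥u, τ ↑a = (↑a : L) := fun a => (hufix ↑a).1 a.2
  have hmem1 : ∀ x : L, (2⁻¹ : ℝ) • (x + τ x) ∈ u := by
    intro x
    rw [hufix, map_smul, map_add, hτinv]
    rw [show τ x + x = x + τ x from add_comm _ _]
  have hmem2 : ∀ x : L, -(Complex.I • ((2⁻¹ : ℝ) • (x - τ x))) ∈ u := by
    intro x
    have hτw : τ ((2⁻¹ : ℝ) • (x - τ x)) = -((2⁻¹ : ℝ) • (x - τ x)) := by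
      rw [map_smul, map_sub, hτinv, smul_sub, smul_sub]
      abel
    rw [hufix, map_neg, hτanti, hτw]
    rw [smul_neg, neg_neg]
  set π₁ : L → ↥u := fun x => ⟨(2⁻¹ : ℝ) • (x + τ x), hmem1 x⟩ with hπ₁def
  set π₂ : L → ↥u := fun x => ⟨-(Complex.I • ((2⁻¹ : ℝ) • (x - τ x))), hmem2 x⟩ with hπ₂def
  have hrecon : ∀ x : L, (↑(π₁ x) : L) + Complex.I • ↑(π₂ x) = x := by
    intro x
    rw [hπ₁def, hπ₂def]
    show (2⁻¹ : ℝ) • (x + τ x) + Complex.I • -(Complex.I • ((2⁻¹ : ℝ) • (x - τ x))) = x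
    rw [smul_neg, hIIsmul, neg_neg, smul_add, smul_sub]
    module
  have huniq0 : ∀ a b : ↥u, (↑a : L) + Complex.I • ↑b = 0 → a = 0 ∧ b = 0 := by
    intro a b hab
    have h1 : τ ((↑a : L) + Complex.I • ↑b) = 0 := by rw [hab, map_zero]
    rw [map_add, hτa, hτanti, hτa] at h1
    have h3 : (2 : ℝ) • (↑a : L) = ((↑a : L) + Complex.I • ↑b) + ((↑a : L) + -(Complex.I • ↑b)) := by
      module
    rw [hab, h1, add_zero] at h3
    have ha0 : (↑a : L) = 0 := by simpa [smul_eq_zero] using h3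
    have hb0 : Complex.I • (↑b : L) = 0 := by
      have := hab
      rw [ha0, zero_add] at this
      exact this
    have hb0' : (↑b : L) = 0 := by
      have := congrArg (fun z => Complex.I • z) hb0
      simpa [hIIsmul, neg_eq_zero] using this
    exact ⟨Subtype.ext ha0, Subtype.ext hb0'⟩
  have huniq : ∀ (a b : ↥u) (x : L), (↑a : L) + Complex.I • ↑b = x → π₁ x = a ∧ π₂ x = b := by
    intro a b x hx
    have h1 : (↑(π₁ x) : L) + Complex.I • ↑(π₂ x) = ↑a + Complex.I • ↑b := by
      rw [hrecon, hx]
    have h2 : (↑(π₁ x - a) : L) + Complex.I • ↑(π₂ x - b) = 0 := by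
      rw [hcoe_sub, hcoe_sub, smul_sub, sub_add_sub_comm, h1, sub_self]
    obtain ⟨e1, e2⟩ := huniq0 _ _ h2
    exact ⟨by rwa [sub_eq_zero] at e1, by rwa [sub_eq_zero] at e2⟩
  -- bracket formula
  have hbrkt : ∀ a b a' b' : ↥u,
      (⁅(↑a : L) + Complex.I • ↑b, (↑a' : L) + Complex.I • ↑b'⁆ : L)
        = ↑(⁅a, a'⁆ - ⁅b, b'⁆) + Complex.I • ↑(⁅a, b'⁆ + ⁅b, a'⁆) := by
    intro a b a' b'
    rw [hcoe_sub, hcoe_add]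
    simp only [LieSubalgebra.coe_bracket]
    rw [add_lie, lie_add, lie_add, lie_smul, lie_smul, smul_lie, smul_lie, smul_smul,
      Complex.I_mul_I, neg_one_smul, smul_add]
    abel
  -- σ in coordinates
  have hσdecomp : ∀ a b : ↥u, σ ((↑a : L) + Complex.I • ↑b) = ↑(su a) + Complex.I • ↑(-(su b)) := by
    intro a b
    rw [map_add, hσanti, hcoe_neg, hsu_ap, hsu_ap, smul_neg]
  have hσ'decomp : ∀ a b : ↥u, σ' ((↑a : L) + Complex.I • ↑b) = ↑(s'u a) + Complex.I • ↑(-(s'u b)) := by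
    intro a b
    rw [map_add, hσ'anti, hcoe_neg, hs'u_ap, hs'u_ap, smul_neg]
  -- the candidate isomorphism, as maps on L
  set F : L → L := fun x => (↑(ρ (π₁ x)) : L) + Complex.I • ↑(ρ (π₂ x)) with hFdef
  set G : L → L := fun x => (↑(ρ.symm (π₁ x)) : L) + Complex.I • ↑(ρ.symm (π₂ x)) with hGdef
  have hFd : ∀ a b : ↥u, F ((↑a : L) + Complex.I • ↑b) = ↑(ρ a) + Complex.I • ↑(ρ b) := by
    intro a b
    obtain ⟨e1, e2⟩ := huniq a b _ rfl
    rw [hFdef]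
    show (↑(ρ (π₁ (↑a + Complex.I • ↑b))) : L) + Complex.I • ↑(ρ (π₂ (↑a + Complex.I • ↑b)))
      = ↑(ρ a) + Complex.I • ↑(ρ b)
    rw [e1, e2]
  have hGd : ∀ a b : ↥u, G ((↑a : L) + Complex.I • ↑b) = ↑(ρ.symm a) + Complex.I • ↑(ρ.symm b) := by
    intro a b
    obtain ⟨e1, e2⟩ := huniq a b _ rfl
    rw [hGdef]
    show (↑(ρ.symm (π₁ (↑a + Complex.I • ↑b))) : L) + Complex.I • ↑(ρ.symm (π₂ (↑a + Complex.I • ↑b)))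
      = ↑(ρ.symm a) + Complex.I • ↑(ρ.symm b)
    rw [e1, e2]
  have hGF : ∀ x : L, G (F x) = x := by
    intro x
    conv_lhs => rw [← hrecon x]
    rw [hFd, hGd, LinearEquiv.symm_apply_apply, LinearEquiv.symm_apply_apply, hrecon]
  have hFG : ∀ x : L, F (G x) = x := by
    intro x
    conv_lhs => rw [← hrecon x]
    rw [hGd, hFd, LinearEquiv.apply_symm_apply, LinearEquiv.apply_symm_apply, hrecon]
  have hπ₁add : ∀ x y : L, π₁ (x + y) = π₁ x + π₁ y := by
    intro x y
    apply Subtype.ext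
    show (2⁻¹ : ℝ) • (x + y + τ (x + y)) = (2⁻¹ : ℝ) • (x + τ x) + (2⁻¹ : ℝ) • (y + τ y)
    rw [map_add]
    module
  have hπ₂add : ∀ x y : L, π₂ (x + y) = π₂ x + π₂ y := by
    intro x y
    apply Subtype.ext
    show -(Complex.I • ((2⁻¹ : ℝ) • (x + y - τ (x + y))))
      = -(Complex.I • ((2⁻¹ : ℝ) • (x - τ x))) + -(Complex.I • ((2⁻¹ : ℝ) • (y - τ y)))
    rw [map_add]
    rw [show x + y - (τ x + τ y) = (x - τ x) + (y - τ y) from by abel, smul_add, smul_add]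
    module
  have hπ₁smul : ∀ (r : ℝ) (x : L), π₁ (r • x) = r • π₁ x := by
    intro r x
    apply Subtype.ext
    show (2⁻¹ : ℝ) • (r • x + τ (r • x)) = r • ((2⁻¹ : ℝ) • (x + τ x))
    rw [map_smul]
    module
  have hπ₂smul : ∀ (r : ℝ) (x : L), π₂ (r • x) = r • π₂ x := by
    intro r x
    apply Subtype.ext
    show -(Complex.I • ((2⁻¹ : ℝ) • (r • x - τ (r • x))))
      = r • -(Complex.I • ((2⁻¹ : ℝ) • (x - τ x)))
    rw [map_smul, ← smul_sub, smul_comm (2⁻¹ : ℝ) r, smul_comm Complex.I r, smul_neg]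

  have hFadd : ∀ x y : L, F (x + y) = F x + F y := by
    intro x y
    rw [hFdef]
    show (↑(ρ (π₁ (x + y))) : L) + Complex.I • ↑(ρ (π₂ (x + y)))
      = (↑(ρ (π₁ x)) : L) + Complex.I • ↑(ρ (π₂ x)) + ((↑(ρ (π₁ y)) : L) + Complex.I • ↑(ρ (π₂ y)))
    rw [hπ₁add, hπ₂add, map_add, map_add, hcoe_add, hcoe_add, smul_add]
    abel
  have hFsmul : ∀ (r : ℝ) (x : L), F (r • x) = r • F x := by
    intro r x
    rw [hFdef]
    show (↑(ρ (π₁ (r • x))) : L) + Complex.I • ↑(ρ (π₂ (r • x)))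
      = r • ((↑(ρ (π₁ x)) : L) + Complex.I • ↑(ρ (π₂ x)))
    rw [hπ₁smul, hπ₂smul, map_smul, map_smul, hcoe_smul, hcoe_smul]
    module
  have hFlie : ∀ x y : L, F ⁅x, y⁆ = ⁅F x, F y⁆ := by
    intro x y
    conv_lhs => rw [← hrecon x, ← hrecon y]
    conv_rhs => rw [← hrecon x, ← hrecon y]
    rw [hbrkt, hFd, hFd, hFd, hbrkt]
    rw [map_sub, map_add, hρlie, hρlie, hρlie, hρlie]
  have hFg : ∀ x : L, x ∈ g → F x ∈ g' := by
    intro x hxg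
    have hσx : σ x = x := (hgfix x).1 hxg
    have hdec := hσdecomp (π₁ x) (π₂ x)
    rw [hrecon x, hσx] at hdec
    obtain ⟨e1, e2⟩ := huniq _ _ _ hdec.symm
    have hfix1 : su (π₁ x) = π₁ x := e1.symm
    have hfix2 : su (π₂ x) = -(π₂ x) := neg_eq_iff_eq_neg.mp e2.symm
    rw [hg'fix]
    have hFx : F x = (↑(ρ (π₁ x)) : L) + Complex.I • ↑(ρ (π₂ x)) := rfl
    rw [hFx, hσ'decomp, ← hρs, ← hρs, hfix1, hfix2, map_neg, neg_neg]
  have hGg : ∀ x : L, x ∈ g' → G x ∈ g := by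
    intro x hxg
    have hσx : σ' x = x := (hg'fix x).1 hxg
    have hdec := hσ'decomp (π₁ x) (π₂ x)
    rw [hrecon x, hσx] at hdec
    obtain ⟨e1, e2⟩ := huniq _ _ _ hdec.symm
    have hfix1 : s'u (π₁ x) = π₁ x := e1.symm
    have hfix2 : s'u (π₂ x) = -(π₂ x) := neg_eq_iff_eq_neg.mp e2.symm
    rw [hgfix]
    have hGx : G x = (↑(ρ.symm (π₁ x)) : L) + Complex.I • ↑(ρ.symm (π₂ x)) := rfl
    rw [hGx, hσdecomp, ← hρs', ← hρs', hfix1, hfix2, map_neg, neg_neg]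
  -- assemble the Lie algebra isomorphism g ≃ g'
  refine hniso.false ?_
  refine
  { toLieHom :=
    { toFun := fun x => ⟨F ↑x, hFg ↑x x.2⟩
      map_add' := fun x y => Subtype.ext (by
        show F ((x : L) + (y : L)) = F ↑x + F ↑y
        rw [hFadd])
      map_smul' := fun r x => Subtype.ext (by
        show F (r • (x : L)) = r • F ↑x
        rw [hFsmul])
      map_lie' := by
        intro x y
        apply Subtype.ext
        show F ↑⁅x, y⁆ = (↑(⁅(⟨F ↑x, _⟩ : ↥g'), (⟨F ↑y, _⟩ : ↥g')⁆) : L)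
        rw [LieSubalgebra.coe_bracket, LieSubalgebra.coe_bracket]
        exact hFlie ↑x ↑y }
    invFun := fun y => ⟨G ↑y, hGg ↑y y.2⟩
    left_inv := fun x => Subtype.ext (hGF ↑x)
    right_inv := fun y => Subtype.ext (hFG ↑y) }
end

section
/- Let g and g̃ be non-isomorphic simple non-compact real forms of a complex semisimple Lie algebra g^ℂ forming a compatible triple with a compact real form u, with Cartan decompositions g = t ⊕ p, g̃ = t̃ ⊕ p̃, u = t ⊕ ip = t̃ ⊕ ip̃. Then p ∩ p̃ ≠ 0. -/
/-- Let `g`, `g'` be non-isomorphic *simple*, non-compact real forms of a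
complex semisimple Lie algebra `L`, forming a compatible triple with a compact real
form `u`, with Cartan decompositions `g = t ⊕ p`, `g' = t' ⊕ p'` aligned with `u`,
i.e. `u = t ⊕ ip = t' ⊕ ip'`.  Then `p ∩ p' ≠ 0`. -/
theorem compatibleTriple_noncompactParts_intersect
    {L : Type*} [LieRing L] [LieAlgebra ℂ L] [LieAlgebra ℝ L]
    [IsScalarTower ℝ ℂ L] [FiniteDimensional ℂ L] [FiniteDimensional ℝ L]
    [LieAlgebra.IsSemisimple ℂ L]
    (g g' u : LieSubalgebra ℝ L)
    -- the three conjugation maps: anti-linear involutive Lie algebra automorphisms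
    (σ σ' τ : L →ₗ[ℝ] L)
    (hσinv : ∀ x, σ (σ x) = x) (hσ'inv : ∀ x, σ' (σ' x) = x) (hτinv : ∀ x, τ (τ x) = x)
    (hσanti : ∀ x, σ (Complex.I • x) = -(Complex.I • σ x))
    (hσ'anti : ∀ x, σ' (Complex.I • x) = -(Complex.I • σ' x))
    (hτanti : ∀ x, τ (Complex.I • x) = -(Complex.I • τ x))
    (hσlie : ∀ x y, σ ⁅x, y⁆ = ⁅σ x, σ y⁆)
    (hσ'lie : ∀ x y, σ' ⁅x, y⁆ = ⁅σ' x, σ' y⁆)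
    (hτlie : ∀ x y, τ ⁅x, y⁆ = ⁅τ x, τ y⁆)
    -- their fixed point sets are `g`, `g'`, `u`
    (hgfix : ∀ x, x ∈ g ↔ σ x = x)
    (hg'fix : ∀ x, x ∈ g' ↔ σ' x = x)
    (hufix : ∀ x, x ∈ u ↔ τ x = x)
    -- compatibility: the conjugations pairwise commute
    (hc1 : ∀ x, σ (σ' x) = σ' (σ x))
    (hc2 : ∀ x, σ (τ x) = τ (σ x))
    (hc3 : ∀ x, σ' (τ x) = τ (σ' x))
    -- `g`, `g'`, `u` are real forms: `L = W ⊕ iW` for each of them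
    (hrfg : ∀ x : L, ∃ a ∈ g, ∃ b ∈ g, x = a + Complex.I • b)
    (hrfg' : ∀ x : L, ∃ a ∈ g', ∃ b ∈ g', x = a + Complex.I • b)
    (hrfu : ∀ x : L, ∃ a ∈ u, ∃ b ∈ u, x = a + Complex.I • b)
    -- Cartan decompositions `g = t ⊕ p`, `g' = t' ⊕ p'`
    (t p t' p' : Submodule ℝ L)
    (hg : t ⊔ p = g.toSubmodule) (hgd : t ⊓ p = ⊥)
    (hg' : t' ⊔ p' = g'.toSubmodule) (hg'd : t' ⊓ p' = ⊥)
    (htt : ∀ x ∈ t, ∀ y ∈ t, ⁅x, y⁆ ∈ t)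
    (htp : ∀ x ∈ t, ∀ y ∈ p, ⁅x, y⁆ ∈ p)
    (hpp : ∀ x ∈ p, ∀ y ∈ p, ⁅x, y⁆ ∈ t)
    (ht't' : ∀ x ∈ t', ∀ y ∈ t', ⁅x, y⁆ ∈ t')
    (ht'p' : ∀ x ∈ t', ∀ y ∈ p', ⁅x, y⁆ ∈ p')
    (hp'p' : ∀ x ∈ p', ∀ y ∈ p', ⁅x, y⁆ ∈ t')
    -- alignment with the compact real form: `u = t ⊕ ip = t' ⊕ ip'`
    (hu : t ⊔ p.map (mulI L) = u.toSubmodule)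
    (hu' : t' ⊔ p'.map (mulI L) = u.toSubmodule)
    -- `u` is compact: its Killing form is negative definite
    (hcompact : ∀ x : u, x ≠ 0 → killingForm ℝ u x x < 0)
    -- `g` and `g'` are not isomorphic as real Lie algebras
    (hniso : IsEmpty (g ≃ₗ⁅ℝ⁆ g'))
    -- neither `g` nor `g'` is compact
    (hgnc : ¬ ∀ x : g, x ≠ 0 → killingForm ℝ g x x < 0)
    (hg'nc : ¬ ∀ x : g', x ≠ 0 → killingForm ℝ g' x x < 0)
    -- both real forms are simple
    (hgsimple : LieAlgebra.IsSimple ℝ g)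
    (hg'simple : LieAlgebra.IsSimple ℝ g') :
    p ⊓ p' ≠ ⊥ := by
  
  intro hbot
  classical
  have memg : ∀ x : L, x ∈ g.toSubmodule ↔ σ x = x := by
    intro x; rw [LieSubalgebra.mem_toSubmodule]; exact hgfix x
  have memg' : ∀ x : L, x ∈ g'.toSubmodule ↔ σ' x = x := by
    intro x; rw [LieSubalgebra.mem_toSubmodule]; exact hg'fix x
  have memu : ∀ x : L, x ∈ u.toSubmodule ↔ τ x = x := by
    intro x; rw [LieSubalgebra.mem_toSubmodule]; exact hufix x
  have htg : t ≤ g.toSubmodule := hg ▸ le_sup_left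
  have hpg : p ≤ g.toSubmodule := hg ▸ le_sup_right
  have ht'g' : t' ≤ g'.toSubmodule := hg' ▸ le_sup_left
  have hp'g' : p' ≤ g'.toSubmodule := hg' ▸ le_sup_right
  have htu : t ≤ u.toSubmodule := hu ▸ le_sup_left
  have ht'u : t' ≤ u.toSubmodule := hu' ▸ le_sup_left
  have hipu : ∀ x ∈ p, Complex.I • x ∈ u.toSubmodule := by
    intro x hx
    have hmem : Complex.I • x ∈ p.map (mulI L) := ⟨x, hx, rfl⟩
    exact hu ▸ (le_sup_right : p.map (mulI L) ≤ t ⊔ p.map (mulI L)) hmem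
  have hip'u : ∀ x ∈ p', Complex.I • x ∈ u.toSubmodule := by
    intro x hx
    have hmem : Complex.I • x ∈ p'.map (mulI L) := ⟨x, hx, rfl⟩
    exact hu' ▸ (le_sup_right : p'.map (mulI L) ≤ t' ⊔ p'.map (mulI L)) hmem
  have hinj : ∀ x : L, Complex.I • x = 0 → x = 0 := by
    intro x h
    rcases smul_eq_zero.mp h with h | h
    · exact absurd h Complex.I_ne_zero
    · exact h
  have half : ∀ a : L, a + a = 0 → a = 0 := by
    intro a h
    have h2 : (2 : ℝ) • a = 0 := by rw [two_smul]; exact h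
    rcases smul_eq_zero.mp h2 with h | h
    · norm_num at h
    · exact h
  have hτt : ∀ x ∈ t, τ x = x := fun x hx => (memu x).mp (htu hx)
  have hτt' : ∀ x ∈ t', τ x = x := fun x hx => (memu x).mp (ht'u hx)
  have hτp : ∀ x ∈ p, τ x = -x := by
    intro x hx
    have h2 : τ (Complex.I • x) = Complex.I • x := (memu _).mp (hipu x hx)
    rw [hτanti] at h2
    have h3 : Complex.I • (τ x + x) = 0 := by rw [smul_add, ← h2]; abel
    exact eq_neg_of_add_eq_zero_left (hinj _ h3)
  have hτp' : ∀ x ∈ p', τ x = -x := by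
    intro x hx
    have h2 : τ (Complex.I • x) = Complex.I • x := (memu _).mp (hip'u x hx)
    rw [hτanti] at h2
    have h3 : Complex.I • (τ x + x) = 0 := by rw [smul_add, ← h2]; abel
    exact eq_neg_of_add_eq_zero_left (hinj _ h3)
  -- characterizations of the pieces as eigenspaces
  have hmemp : ∀ x : L, x ∈ g.toSubmodule → τ x = -x → x ∈ p := by
    intro x hxg hτx
    obtain ⟨a, ha, b, hb, rfl⟩ := Submodule.mem_sup.mp (by rw [hg]; exact hxg)
    have h : a + -b = -(a + b) := by
      rw [← hτx, map_add, hτt a ha, hτp b hb]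
    have ha0 : a = 0 := by
      apply half
      have h2 : a + -b + (a + b) = -(a+b) + (a+b) := by rw [h]
      rw [neg_add_cancel] at h2
      rw [← h2]; abel
    rw [ha0, zero_add]; exact hb
  have hmemp' : ∀ x : L, x ∈ g'.toSubmodule → τ x = -x → x ∈ p' := by
    intro x hxg hτx
    obtain ⟨a, ha, b, hb, rfl⟩ := Submodule.mem_sup.mp (by rw [hg']; exact hxg)
    have h : a + -b = -(a + b) := by
      rw [← hτx, map_add, hτt' a ha, hτp' b hb]
    have ha0 : a = 0 := by
      apply half
      have h2 : a + -b + (a + b) = -(a+b) + (a+b) := by rw [h]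
      rw [neg_add_cancel] at h2
      rw [← h2]; abel
    rw [ha0, zero_add]; exact hb
  have hmemt : ∀ x : L, x ∈ g.toSubmodule → τ x = x → x ∈ t := by
    intro x hxg hτx
    obtain ⟨a, ha, b, hb, rfl⟩ := Submodule.mem_sup.mp (by rw [hg]; exact hxg)
    have h : a + -b = a + b := by
      conv_rhs => rw [← hτx]
      rw [map_add, hτt a ha, hτp b hb]
    have hb0 : b = 0 := by
      apply half
      have h2 : -b = b := add_left_cancel h
      nth_rewrite 1 [← h2]
      exact neg_add_cancel b
    rw [hb0, add_zero]; exact ha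
  have hmemt' : ∀ x : L, x ∈ g'.toSubmodule → τ x = x → x ∈ t' := by
    intro x hxg hτx
    obtain ⟨a, ha, b, hb, rfl⟩ := Submodule.mem_sup.mp (by rw [hg']; exact hxg)
    have h : a + -b = a + b := by
      conv_rhs => rw [← hτx]
      rw [map_add, hτt' a ha, hτp' b hb]
    have hb0 : b = 0 := by
      apply half
      have h2 : -b = b := add_left_cancel h
      nth_rewrite 1 [← h2]
      exact neg_add_cancel b
    rw [hb0, add_zero]; exact ha
  -- σ' acts as -1 on p, σ acts as -1 on p'
  have hmembot : ∀ y : L, y ∈ p → y ∈ p' → y = 0 := by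
    intro y h1 h2
    have : y ∈ p ⊓ p' := ⟨h1, h2⟩
    rw [hbot] at this
    exact this
  have hσ'p : ∀ x ∈ p, σ' x = -x := by
    intro x hx
    have hσx : σ x = x := (memg x).mp (hpg hx)
    have hyg : σ (x + σ' x) = x + σ' x := by
      rw [map_add, hσx, hc1, hσx]
    have hyg' : σ' (x + σ' x) = x + σ' x := by
      rw [map_add, hσ'inv, add_comm]
    have hτy : τ (x + σ' x) = -(x + σ' x) := by
      rw [map_add, hτp x hx, ← hc3, hτp x hx, map_neg, neg_add]
    have hy0 : x + σ' x = 0 :=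
      hmembot _ (hmemp _ ((memg _).mpr hyg) hτy) (hmemp' _ ((memg' _).mpr hyg') hτy)
    exact eq_neg_of_add_eq_zero_right hy0
  have hσp' : ∀ x ∈ p', σ x = -x := by
    intro x hx
    have hσx : σ' x = x := (memg' x).mp (hp'g' hx)
    have hyg' : σ' (x + σ x) = x + σ x := by
      rw [map_add, hσx, ← hc1, hσx]
    have hyg : σ (x + σ x) = x + σ x := by
      rw [map_add, hσinv, add_comm]
    have hτy : τ (x + σ x) = -(x + σ x) := by
      rw [map_add, hτp' x hx, ← hc2, hτp' x hx, map_neg, neg_add]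
    have hy0 : x + σ x = 0 :=
      hmembot _ (hmemp _ ((memg _).mpr hyg) hτy) (hmemp' _ ((memg' _).mpr hyg') hτy)
    exact eq_neg_of_add_eq_zero_right hy0
  -- i•p ⊆ t', i•p' ⊆ t
  have hipt' : ∀ x ∈ p, Complex.I • x ∈ t' := by
    intro x hx
    apply hmemt'
    · apply (memg' _).mpr
      rw [hσ'anti, hσ'p x hx, smul_neg, neg_neg]
    · exact (memu _).mp (hipu x hx)
  have hip't : ∀ x ∈ p', Complex.I • x ∈ t := by
    intro x hx
    apply hmemt
    · apply (memg _).mpr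
      rw [hσanti, hσp' x hx, smul_neg, neg_neg]
    · exact (memu _).mp (hip'u x hx)
  -- brackets of p' land in t
  have hbrt : ∀ x ∈ p', ∀ y ∈ p', ⁅x, y⁆ ∈ t := by
    intro x hx y hy
    have h1 : ⁅Complex.I • x, Complex.I • y⁆ ∈ t :=
      htt _ (hip't x hx) _ (hip't y hy)
    have h2 : ⁅Complex.I • x, Complex.I • y⁆ = -⁅x, y⁆ := by
      rw [smul_lie, lie_smul, smul_smul, Complex.I_mul_I, neg_one_smul]
    rw [h2] at h1
    exact (neg_mem_iff).mp h1
  -- p and p' are nonzero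
  have hpne : p ≠ ⊥ := by
    intro h
    have h1 : g.toSubmodule = u.toSubmodule := by
      rw [← hg, ← hu, h, Submodule.map_bot, sup_bot_eq]
    have h2 : g = u := LieSubalgebra.toSubmodule_injective h1
    rw [h2] at hgnc
    exact hgnc hcompact
  have hp'ne : p' ≠ ⊥ := by
    intro h
    have h1 : g'.toSubmodule = u.toSubmodule := by
      rw [← hg', ← hu', h, Submodule.map_bot, sup_bot_eq]
    have h2 : g' = u := LieSubalgebra.toSubmodule_injective h1
    rw [h2] at hg'nc
    exact hg'nc hcompact
  -- the ideal p' + span [p',p'] of g'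
  set S : Set L := {z | ∃ x ∈ p', ∃ y ∈ p', ⁅x, y⁆ = z} with hS
  set sp : Submodule ℝ L := Submodule.span ℝ S with hsp
  have hspt' : sp ≤ t' := by
    rw [hsp]
    apply Submodule.span_le.mpr
    rintro z ⟨x, hx, y, hy, rfl⟩
    exact hp'p' x hx y hy
  have hspt : sp ≤ t := by
    rw [hsp]
    apply Submodule.span_le.mpr
    rintro z ⟨x, hx, y, hy, rfl⟩
    exact hbrt x hx y hy
  set Isub : Submodule ℝ L := p' ⊔ sp with hIsub
  have hIg' : Isub ≤ g'.toSubmodule := sup_le hp'g' (hspt'.trans ht'g')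
  have hlieI : ∀ a ∈ g'.toSubmodule, ∀ m ∈ Isub, ⁅a, m⁆ ∈ Isub := by
    intro a ha m hm
    obtain ⟨a1, ha1, a2, ha2, rfl⟩ := Submodule.mem_sup.mp (by rw [hg']; exact ha)
    obtain ⟨m1, hm1, m2, hm2, rfl⟩ := Submodule.mem_sup.mp hm
    have e : ⁅a1 + a2, m1 + m2⁆ = ⁅a1, m1⁆ + ⁅a1, m2⁆ + (⁅a2, m1⁆ + ⁅a2, m2⁆) := by
      rw [lie_add, add_lie, add_lie]; abel
    rw [e]
    refine Submodule.add_mem _ (Submodule.add_mem _ ?_ ?_) (Submodule.add_mem _ ?_ ?_)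
    · exact Submodule.mem_sup_left (ht'p' a1 ha1 m1 hm1)
    · apply Submodule.mem_sup_right
      refine Submodule.span_induction ?_ ?_ ?_ ?_ hm2
      · rintro z ⟨x, hx, y, hy, rfl⟩
        have hl : ⁅a1, ⁅x, y⁆⁆ = ⁅⁅a1, x⁆, y⁆ + ⁅x, ⁅a1, y⁆⁆ := leibniz_lie a1 x y
        rw [hl]
        exact Submodule.add_mem _
          (Submodule.subset_span ⟨⁅a1, x⁆, ht'p' a1 ha1 x hx, y, hy, rfl⟩)
          (Submodule.subset_span ⟨x, hx, ⁅a1, y⁆, ht'p' a1 ha1 y hy, rfl⟩)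
      · simp
      · intro x y _ _ hx hy
        rw [lie_add]; exact Submodule.add_mem _ hx hy
      · intro c x _ hx
        rw [lie_smul]; exact Submodule.smul_mem _ c hx
    · exact Submodule.mem_sup_right (Submodule.subset_span ⟨a2, ha2, m1, hm1, rfl⟩)
    · have h1 : ⁅m2, a2⁆ ∈ p' := ht'p' m2 (hspt' hm2) a2 ha2
      have h2 : ⁅a2, m2⁆ = -⁅m2, a2⁆ := (lie_skew a2 m2).symm
      rw [h2]
      exact Submodule.mem_sup_left (neg_mem h1)
  let J : LieIdeal ℝ g' :=
    { Submodule.comap (g'.toSubmodule.subtype) Isub with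
      lie_mem := fun {x m} hm => hlieI x.1 x.2 m.1 hm }
  have hmemJ : ∀ (y : g'), y ∈ J ↔ (y : L) ∈ Isub := fun y => Iff.rfl
  rcases hg'simple.eq_bot_or_eq_top J with hJ | hJ
  · -- J = ⊥ contradicts p' ≠ ⊥
    obtain ⟨x, hxp', hxne⟩ := Submodule.exists_mem_ne_zero_of_ne_bot hp'ne
    have hxg' : x ∈ g' := hp'g' hxp'
    have hxJ : (⟨x, hxg'⟩ : g') ∈ J := (hmemJ _).mpr (Submodule.mem_sup_left hxp')
    rw [hJ] at hxJ
    rw [LieSubmodule.mem_bot] at hxJ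
    exact hxne (congrArg Subtype.val hxJ)
  · -- J = ⊤, hence t' ≤ t
    have ht't : t' ≤ t := by
      intro a ha
      have haJ : (⟨a, ht'g' ha⟩ : g') ∈ J := by rw [hJ]; exact LieSubmodule.mem_top _
      have haI : a ∈ Isub := (hmemJ _).mp haJ
      obtain ⟨b, hb, c, hc, hbc⟩ := Submodule.mem_sup.mp haI
      have hbt' : b ∈ t' := by
        have hbac : b = a - c := by rw [← hbc]; abel
        rw [hbac]
        exact Submodule.sub_mem _ ha (hspt' hc)
      have hb0 : b = 0 := by
        have : b ∈ t' ⊓ p' := ⟨hbt', hb⟩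
        rw [hg'd] at this
        exact this
      have hac : a = c := by rw [← hbc, hb0, zero_add]
      rw [hac]
      exact hspt hc
    -- final contradiction
    obtain ⟨x, hxp, hxne⟩ := Submodule.exists_mem_ne_zero_of_ne_bot hpne
    have h1 : Complex.I • x ∈ t := ht't (hipt' x hxp)
    have h2 : σ (Complex.I • x) = Complex.I • x := (memg _).mp (htg h1)
    rw [hσanti, (memg x).mp (hpg hxp)] at h2
    have h3 : Complex.I • x + Complex.I • x = 0 := by
      nth_rewrite 1 [← h2]; exact neg_add_cancel _
    exact hxne (hinj _ (half _ h3))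
end

section
/- In the setup of a compatible triple of semisimple Lie algebras (g, g̃, u) with g ≇ g̃ and t ∩ t̃ = 0 (in the notation of aligned Cartan decompositions with u), one has t ⊆ ip̃ and t̃ ⊆ ip, and consequently both t and t̃ are abelian. -/
theorem auxMemT {L : Type*} [AddCommGroup L] [Module ℝ L] [Module ℂ L]
    [IsScalarTower ℝ ℂ L] (σ : L →ₗ[ℝ] L)
    (hσanti : ∀ x, σ (Complex.I • x) = -(Complex.I • σ x))
    (t p G U : Submodule ℝ L)
    (hg : t ⊔ p = G) (hu : t ⊔ p.map (mulI L) = U)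
    (hfix : ∀ x ∈ G, σ x = x)
    {x : L} (hx : σ x = x) (hxu : x ∈ U) : x ∈ t := by
  rw [← hu] at hxu
  rcases Submodule.mem_sup.mp hxu with ⟨a, ha, c, hc, hsum⟩
  rcases Submodule.mem_map.mp hc with ⟨d, hd, hcd⟩
  have hcI : c = Complex.I • d := hcd.symm
  have hfa : σ a = a := hfix a (hg ▸ Submodule.mem_sup_left ha)
  have hfd : σ d = d := hfix d (hg ▸ Submodule.mem_sup_right hd)
  have h1 : σ x = a - Complex.I • d := by
    rw [← hsum, hcI, map_add, hfa, hσanti, hfd, sub_eq_add_neg]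
  have h2 : a + Complex.I • d = a - Complex.I • d := by
    rw [← hcI, hsum, ← hx, h1, hcI]
  have h3 : Complex.I • d = 0 := by
    have h5 : Complex.I • d = -(Complex.I • d) := by
      rw [sub_eq_add_neg] at h2
      exact add_left_cancel h2
    have h6 : (2 : ℝ) • (Complex.I • d) = 0 := by
      rw [two_smul]
      nth_rewrite 2 [h5]
      exact add_neg_cancel _
    simpa using smul_eq_zero.mp h6
  have : x = a := by rw [← hsum, hcI, h3, add_zero]
  rwa [this]

theorem auxMemIp {L : Type*} [AddCommGroup L] [Module ℝ L] [Module ℂ L]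
    [IsScalarTower ℝ ℂ L] (σ : L →ₗ[ℝ] L)
    (hσanti : ∀ x, σ (Complex.I • x) = -(Complex.I • σ x))
    (t p G U : Submodule ℝ L)
    (hg : t ⊔ p = G) (hu : t ⊔ p.map (mulI L) = U)
    (hfix : ∀ x ∈ G, σ x = x)
    {x : L} (hx : σ x = -x) (hxu : x ∈ U) : ∃ d ∈ p, x = Complex.I • d := by
  rw [← hu] at hxu
  rcases Submodule.mem_sup.mp hxu with ⟨a, ha, c, hc, hsum⟩
  rcases Submodule.mem_map.mp hc with ⟨d, hd, hcd⟩
  have hcI : c = Complex.I • d := hcd.symm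
  have hfa : σ a = a := hfix a (hg ▸ Submodule.mem_sup_left ha)
  have hfd : σ d = d := hfix d (hg ▸ Submodule.mem_sup_right hd)
  have h1 : σ x = a - Complex.I • d := by
    rw [← hsum, hcI, map_add, hfa, hσanti, hfd, sub_eq_add_neg]
  have h2 : a + a = 0 := by
    have : (a + Complex.I • d) + (a - Complex.I • d) = x + -x := by
      rw [← hx, ← h1, ← hcI, hsum]
    rw [add_neg_cancel] at this
    calc a + a = (a + Complex.I • d) + (a - Complex.I • d) := by abel
    _ = 0 := this
  have h3 : a = 0 := by
    have h6 : (2 : ℝ) • a = 0 := by rw [two_smul]; exact h2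
    simpa using smul_eq_zero.mp h6
  exact ⟨d, hd, by rw [← hsum, hcI, h3, zero_add]⟩

/-- In the setup of a compatible triple `(g, g', u)` of real forms of a
complex semisimple Lie algebra with `g` not isomorphic to `g'` and `t ∩ t' = 0`
(in the notation of Cartan decompositions aligned with the compact real form `u`),
one has `t ⊆ ip'` and `t' ⊆ ip`, and consequently both `t` and `t'` are abelian. -/
theorem compatibleTriple_trivial_t_intersection
    {L : Type*} [LieRing L] [LieAlgebra ℂ L] [LieAlgebra ℝ L]
    [IsScalarTower ℝ ℂ L] [FiniteDimensional ℂ L] [FiniteDimensional ℝ L]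
    [LieAlgebra.IsSemisimple ℂ L]
    (g g' u : LieSubalgebra ℝ L)
    -- the three conjugation maps: anti-linear involutive Lie algebra automorphisms
    (σ σ' τ : L →ₗ[ℝ] L)
    (hσinv : ∀ x, σ (σ x) = x) (hσ'inv : ∀ x, σ' (σ' x) = x) (hτinv : ∀ x, τ (τ x) = x)
    (hσanti : ∀ x, σ (Complex.I • x) = -(Complex.I • σ x))
    (hσ'anti : ∀ x, σ' (Complex.I • x) = -(Complex.I • σ' x))
    (hτanti : ∀ x, τ (Complex.I • x) = -(Complex.I • τ x))
    (hσlie : ∀ x y, σ ⁅x, y⁆ = ⁅σ x, σ y⁆)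
    (hσ'lie : ∀ x y, σ' ⁅x, y⁆ = ⁅σ' x, σ' y⁆)
    (hτlie : ∀ x y, τ ⁅x, y⁆ = ⁅τ x, τ y⁆)
    -- their fixed point sets are `g`, `g'`, `u`
    (hgfix : ∀ x, x ∈ g ↔ σ x = x)
    (hg'fix : ∀ x, x ∈ g' ↔ σ' x = x)
    (hufix : ∀ x, x ∈ u ↔ τ x = x)
    -- compatibility: the conjugations pairwise commute
    (hc1 : ∀ x, σ (σ' x) = σ' (σ x))
    (hc2 : ∀ x, σ (τ x) = τ (σ x))
    (hc3 : ∀ x, σ' (τ x) = τ (σ' x))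
    -- `g`, `g'`, `u` are real forms: `L = W ⊕ iW` for each of them
    (hrfg : ∀ x : L, ∃ a ∈ g, ∃ b ∈ g, x = a + Complex.I • b)
    (hrfg' : ∀ x : L, ∃ a ∈ g', ∃ b ∈ g', x = a + Complex.I • b)
    (hrfu : ∀ x : L, ∃ a ∈ u, ∃ b ∈ u, x = a + Complex.I • b)
    -- Cartan decompositions `g = t ⊕ p`, `g' = t' ⊕ p'`
    (t p t' p' : Submodule ℝ L)
    (hg : t ⊔ p = g.toSubmodule) (hgd : t ⊓ p = ⊥)
    (hg' : t' ⊔ p' = g'.toSubmodule) (hg'd : t' ⊓ p' = ⊥)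
    (htt : ∀ x ∈ t, ∀ y ∈ t, ⁅x, y⁆ ∈ t)
    (htp : ∀ x ∈ t, ∀ y ∈ p, ⁅x, y⁆ ∈ p)
    (hpp : ∀ x ∈ p, ∀ y ∈ p, ⁅x, y⁆ ∈ t)
    (ht't' : ∀ x ∈ t', ∀ y ∈ t', ⁅x, y⁆ ∈ t')
    (ht'p' : ∀ x ∈ t', ∀ y ∈ p', ⁅x, y⁆ ∈ p')
    (hp'p' : ∀ x ∈ p', ∀ y ∈ p', ⁅x, y⁆ ∈ t')
    -- alignment with the compact real form: `u = t ⊕ ip = t' ⊕ ip'`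
    (hu : t ⊔ p.map (mulI L) = u.toSubmodule)
    (hu' : t' ⊔ p'.map (mulI L) = u.toSubmodule)
    -- `u` is compact: its Killing form is negative definite
    (hcompact : ∀ x : u, x ≠ 0 → killingForm ℝ u x x < 0)
    -- `g` and `g'` are not isomorphic as real Lie algebras
    (hniso : IsEmpty (g ≃ₗ⁅ℝ⁆ g'))
    -- the compact parts intersect trivially
    (htt' : t ⊓ t' = ⊥) :
    (∀ x ∈ t, ∃ y ∈ p', x = Complex.I • y) ∧
    (∀ x ∈ t', ∃ y ∈ p, x = Complex.I • y) ∧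
    (∀ x ∈ t, ∀ y ∈ t, ⁅x, y⁆ = 0) ∧
    (∀ x ∈ t', ∀ y ∈ t', ⁅x, y⁆ = 0) := by

  have hgmem : ∀ x ∈ g.toSubmodule, σ x = x := fun x hx => (hgfix x).mp hx
  have hg'mem : ∀ x ∈ g'.toSubmodule, σ' x = x := fun x hx => (hg'fix x).mp hx
  have htU : ∀ x ∈ t, x ∈ u.toSubmodule := fun x hx => hu ▸ Submodule.mem_sup_left hx
  have ht'U : ∀ x ∈ t', x ∈ u.toSubmodule := fun x hx => hu' ▸ Submodule.mem_sup_left hx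
  have hσ'neg : ∀ x ∈ t, σ' x = -x := by
    intro x hx
    have hxg : σ x = x := hgmem x (hg ▸ Submodule.mem_sup_left hx)
    have hxu : τ x = x := (hufix x).mp (htU x hx)
    have hyσ : σ (x + σ' x) = x + σ' x := by rw [map_add, hxg, hc1, hxg]
    have hyσ' : σ' (x + σ' x) = x + σ' x := by rw [map_add, hσ'inv, add_comm]
    have hyτ : τ (x + σ' x) = x + σ' x := by rw [map_add, hxu, ← hc3, hxu]
    have hyu : x + σ' x ∈ u.toSubmodule := (hufix _).mpr hyτ
    have hyt : x + σ' x ∈ t := auxMemT σ hσanti t p _ _ hg hu hgmem hyσ hyu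
    have hyt' : x + σ' x ∈ t' := auxMemT σ' hσ'anti t' p' _ _ hg' hu' hg'mem hyσ' hyu
    have hy0 : x + σ' x = 0 :=
      (Submodule.eq_bot_iff _).mp htt' _ (Submodule.mem_inf.mpr ⟨hyt, hyt'⟩)
    exact eq_neg_of_add_eq_zero_right hy0
  have hσneg : ∀ x ∈ t', σ x = -x := by
    intro x hx
    have hxg : σ' x = x := hg'mem x (hg' ▸ Submodule.mem_sup_left hx)
    have hxu : τ x = x := (hufix x).mp (ht'U x hx)
    have hyσ' : σ' (x + σ x) = x + σ x := by rw [map_add, hxg, ← hc1, hxg]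
    have hyσ : σ (x + σ x) = x + σ x := by rw [map_add, hσinv, add_comm]
    have hyτ : τ (x + σ x) = x + σ x := by rw [map_add, hxu, ← hc2, hxu]
    have hyu : x + σ x ∈ u.toSubmodule := (hufix _).mpr hyτ
    have hyt : x + σ x ∈ t := auxMemT σ hσanti t p _ _ hg hu hgmem hyσ hyu
    have hyt' : x + σ x ∈ t' := auxMemT σ' hσ'anti t' p' _ _ hg' hu' hg'mem hyσ' hyu
    have hy0 : x + σ x = 0 :=
      (Submodule.eq_bot_iff _).mp htt' _ (Submodule.mem_inf.mpr ⟨hyt, hyt'⟩)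
    exact eq_neg_of_add_eq_zero_right hy0
  have part1 : ∀ x ∈ t, ∃ y ∈ p', x = Complex.I • y := fun x hx =>
    auxMemIp σ' hσ'anti t' p' _ _ hg' hu' hg'mem (hσ'neg x hx) (htU x hx)
  have part2 : ∀ x ∈ t', ∃ y ∈ p, x = Complex.I • y := fun x hx =>
    auxMemIp σ hσanti t p _ _ hg hu hgmem (hσneg x hx) (ht'U x hx)
  refine ⟨part1, part2, ?_, ?_⟩
  · intro x hx y hy
    obtain ⟨a, ha, hxa⟩ := part1 x hx
    obtain ⟨b, hb, hyb⟩ := part1 y hy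
    have hbr : ⁅x, y⁆ = -⁅a, b⁆ := by
      rw [hxa, hyb, smul_lie, lie_smul, smul_smul, Complex.I_mul_I, neg_smul, one_smul]
    have m1 : ⁅x, y⁆ ∈ t := htt x hx y hy
    have m2 : ⁅x, y⁆ ∈ t' := hbr ▸ t'.neg_mem (hp'p' a ha b hb)
    exact (Submodule.eq_bot_iff _).mp htt' _ (Submodule.mem_inf.mpr ⟨m1, m2⟩)
  · intro x hx y hy
    obtain ⟨a, ha, hxa⟩ := part2 x hx
    obtain ⟨b, hb, hyb⟩ := part2 y hy
    have hbr : ⁅x, y⁆ = -⁅a, b⁆ := by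
      rw [hxa, hyb, smul_lie, lie_smul, smul_smul, Complex.I_mul_I, neg_smul, one_smul]
    have m1 : ⁅x, y⁆ ∈ t' := ht't' x hx y hy
    have m2 : ⁅x, y⁆ ∈ t := hbr ▸ t.neg_mem (hpp a ha b hb)
    exact (Submodule.eq_bot_iff _).mp htt' _ (Submodule.mem_inf.mpr ⟨m2, m1⟩)
end

section
/- Let G = SL(2,ℝ) act on its Lie algebra sl(2,ℝ) by the adjoint action, with Cartan involution θ(x) = −xᵗ, and let G^ℂ = SL(2,ℂ) act on sl(2,ℂ) adjointly. If x ∈ so(2) ⊂ sl(2,ℝ) is nonzero, then the intersection of the complex adjoint orbit with sl(2,ℝ) is the union of exactly two real orbits: (Ad SL(2,ℂ))x ∩ sl(2,ℝ) = (Ad SL(2,ℝ))x ∪ (Ad SL(2,ℝ))(−x). -/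
open Matrix

private lemma exists_conj_aux (p q r c : ℝ) (hc : c ^ 2 = -(p ^ 2) - q * r)
    (hcr : 0 < c * r) :
    ∃ g : Matrix.SpecialLinearGroup (Fin 2) ℝ,
      (g : Matrix (Fin 2) (Fin 2) ℝ) * !![0, -c; c, 0] *
        ((g⁻¹ : Matrix.SpecialLinearGroup (Fin 2) ℝ) : Matrix (Fin 2) (Fin 2) ℝ) =
        !![p, q; r, -p] := by
  have hr : r ≠ 0 := by rintro rfl; simp at hcr
  have hc0 : c ≠ 0 := by rintro rfl; simp at hcr
  have hdiv : 0 < c / r := by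
    rcases mul_pos_iff.mp hcr with ⟨h1, h2⟩ | ⟨h1, h2⟩
    · exact div_pos h1 h2
    · exact div_pos_of_neg_of_neg h1 h2
  set t : ℝ := Real.sqrt (c / r) with ht
  have ht2 : t ^ 2 = c / r := Real.sq_sqrt hdiv.le
  have hdetG : (!![t, t * p / c; 0, t * r / c] : Matrix (Fin 2) (Fin 2) ℝ).det = 1 := by
    have htt : t * t * r = c := by
      have h := ht2
      field_simp at h
      linear_combination h
    rw [Matrix.det_fin_two_of]
    field_simp
    linear_combination htt
  refine ⟨⟨_, hdetG⟩, ?_⟩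
  set g : Matrix.SpecialLinearGroup (Fin 2) ℝ := ⟨_, hdetG⟩ with hg
  have key : (g : Matrix (Fin 2) (Fin 2) ℝ) * !![0, -c; c, 0] =
      !![p, q; r, -p] * (g : Matrix (Fin 2) (Fin 2) ℝ) := by
    show (!![t, t * p / c; 0, t * r / c] : Matrix (Fin 2) (Fin 2) ℝ) * !![0, -c; c, 0] =
      !![p, q; r, -p] * !![t, t * p / c; 0, t * r / c]
    ext i j
    fin_cases i <;> fin_cases j <;>
      simp [Matrix.mul_apply, Fin.sum_univ_two] <;>
      first
        | ring1
        | (field_simp; ring1)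
        | (field_simp; done)
        | (field_simp; linear_combination (-t) * hc)
  have hinv : (g : Matrix (Fin 2) (Fin 2) ℝ) *
      ((g⁻¹ : Matrix.SpecialLinearGroup (Fin 2) ℝ) : Matrix (Fin 2) (Fin 2) ℝ) = 1 := by
    rw [← Matrix.SpecialLinearGroup.coe_mul, mul_inv_cancel, Matrix.SpecialLinearGroup.coe_one]
  calc (g : Matrix (Fin 2) (Fin 2) ℝ) * !![0, -c; c, 0] *
        ((g⁻¹ : Matrix.SpecialLinearGroup (Fin 2) ℝ) : Matrix (Fin 2) (Fin 2) ℝ)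
      = !![p, q; r, -p] * ((g : Matrix (Fin 2) (Fin 2) ℝ) *
        ((g⁻¹ : Matrix.SpecialLinearGroup (Fin 2) ℝ) : Matrix (Fin 2) (Fin 2) ℝ)) := by
        rw [key, mul_assoc]
    _ = !![p, q; r, -p] := by rw [hinv, mul_one]

/-- for `0 ≠ x ∈ so(2) ⊂ sl(2,ℝ)`, the intersection of the complex
adjoint orbit `(Ad SL(2,ℂ))x` with `sl(2,ℝ)` is the union of exactly the two real
adjoint orbits of `x` and `-x` under `SL(2,ℝ)`. -/
theorem sl2_so2_orbit_intersection
    (x : Matrix (Fin 2) (Fin 2) ℝ) (htr : x.trace = 0) (hskew : xᵀ = -x) (hx : x ≠ 0) :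
    ∀ y : Matrix (Fin 2) (Fin 2) ℝ, y.trace = 0 →
      ((∃ g : Matrix.SpecialLinearGroup (Fin 2) ℂ,
          (g : Matrix (Fin 2) (Fin 2) ℂ) * x.map Complex.ofReal *
            ((g⁻¹ : Matrix.SpecialLinearGroup (Fin 2) ℂ) : Matrix (Fin 2) (Fin 2) ℂ) =
            y.map Complex.ofReal) ↔
        ((∃ g : Matrix.SpecialLinearGroup (Fin 2) ℝ,
            (g : Matrix (Fin 2) (Fin 2) ℝ) * x *
              ((g⁻¹ : Matrix.SpecialLinearGroup (Fin 2) ℝ) : Matrix (Fin 2) (Fin 2) ℝ) = y) ∨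
         (∃ g : Matrix.SpecialLinearGroup (Fin 2) ℝ,
            (g : Matrix (Fin 2) (Fin 2) ℝ) * (-x) *
              ((g⁻¹ : Matrix.SpecialLinearGroup (Fin 2) ℝ) : Matrix (Fin 2) (Fin 2) ℝ) = y))) := by
  intro y hytr
  set a : ℝ := x 1 0 with ha_def
  have hx01 : x 0 1 = -a := by
    have := congr_fun (congr_fun hskew 1) 0
    simpa [Matrix.transpose_apply] using this
  have hx00 : x 0 0 = 0 := by
    have := congr_fun (congr_fun hskew 0) 0
    simp [Matrix.transpose_apply] at this
    linarith
  have hx11 : x 1 1 = 0 := by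
    have := congr_fun (congr_fun hskew 1) 1
    simp [Matrix.transpose_apply] at this
    linarith
  have hxa : x = !![0, -a; a, 0] := by
    ext i j
    fin_cases i <;> fin_cases j <;> simp [hx00, hx01, hx11] <;> rfl
  have ha : a ≠ 0 := by
    intro h
    apply hx
    rw [hxa, h]
    ext i j
    fin_cases i <;> fin_cases j <;> simp
  have hy11 : y 1 1 = -(y 0 0) := by
    rw [Matrix.trace_fin_two] at hytr; linarith
  set p : ℝ := y 0 0
  set q : ℝ := y 0 1
  set r : ℝ := y 1 0
  have hya : y = !![p, q; r, -p] := by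
    ext i j
    fin_cases i <;> fin_cases j <;> simp [hy11] <;> rfl
  constructor
  · rintro ⟨g, hg⟩
    -- determinant equality
    have hdet : y.det = x.det := by
      have h1 : ((g : Matrix (Fin 2) (Fin 2) ℂ) * x.map Complex.ofReal *
          ((g⁻¹ : Matrix.SpecialLinearGroup (Fin 2) ℂ) : Matrix (Fin 2) (Fin 2) ℂ)).det =
          (y.map Complex.ofReal).det := by rw [hg]
      rw [Matrix.det_mul, Matrix.det_mul, g.prop, (g⁻¹).prop, one_mul, mul_one] at h1
      have h2 : (Complex.ofReal x.det : ℂ) = Complex.ofReal y.det := by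
        have hmx : (x.map Complex.ofReal).det = (Complex.ofReal x.det : ℂ) :=
          (RingHom.map_det Complex.ofRealHom x).symm
        have hmy : (y.map Complex.ofReal).det = (Complex.ofReal y.det : ℂ) :=
          (RingHom.map_det Complex.ofRealHom y).symm
        rw [← hmx, ← hmy, h1]
      exact_mod_cast h2.symm
    have hdet' : -(p ^ 2) - q * r = a ^ 2 := by
      rw [hya, hxa] at hdet
      simp [Matrix.det_fin_two_of] at hdet
      nlinarith [hdet]
    have hr : r ≠ 0 := by
      intro h
      rw [h] at hdet'
      nlinarith [sq_nonneg p, sq_nonneg a, sq_abs a, abs_pos.mpr ha]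
    rcases (mul_ne_zero ha hr).lt_or_gt with h | h
    · -- a * r < 0, use c = -a : second disjunct
      right
      obtain ⟨g, hg⟩ := exists_conj_aux p q r (-a) (by nlinarith) (by nlinarith)
      refine ⟨g, ?_⟩
      rw [hxa, hya]
      convert hg using 3
      norm_num
    · -- a * r > 0, use c = a : first disjunct
      left
      obtain ⟨g, hg⟩ := exists_conj_aux p q r a (by nlinarith) h
      refine ⟨g, ?_⟩
      rw [hxa, hya]
      exact hg
  · -- real orbit implies complex orbit
    rintro (⟨g, hg⟩ | ⟨g, hg⟩)
    · refine ⟨Matrix.SpecialLinearGroup.map Complex.ofRealHom g, ?_⟩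
      rw [← map_inv]
      have : ∀ h : Matrix.SpecialLinearGroup (Fin 2) ℝ,
          ((Matrix.SpecialLinearGroup.map Complex.ofRealHom h :
            Matrix.SpecialLinearGroup (Fin 2) ℂ) : Matrix (Fin 2) (Fin 2) ℂ) =
          ((h : Matrix (Fin 2) (Fin 2) ℝ)).map Complex.ofReal := fun h => rfl
      rw [this, this, ← hg]
      ext i j
      first
        | (simp [Matrix.mul_apply, Fin.sum_univ_two, Matrix.map_apply]; push_cast; ring)
        | simp [Matrix.mul_apply, Fin.sum_univ_two, Matrix.map_apply]
    · -- use extra factor diag(i, -i)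
      have hdet : (!![Complex.I, 0; 0, -Complex.I] : Matrix (Fin 2) (Fin 2) ℂ).det = 1 := by
        rw [Matrix.det_fin_two_of]
        simp [Complex.I_mul_I]
      set hmat : Matrix.SpecialLinearGroup (Fin 2) ℂ := ⟨_, hdet⟩ with hhm
      refine ⟨Matrix.SpecialLinearGroup.map Complex.ofRealHom g * hmat, ?_⟩
      have hco : ∀ h : Matrix.SpecialLinearGroup (Fin 2) ℝ,
          ((Matrix.SpecialLinearGroup.map Complex.ofRealHom h :
            Matrix.SpecialLinearGroup (Fin 2) ℂ) : Matrix (Fin 2) (Fin 2) ℂ) =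
          ((h : Matrix (Fin 2) (Fin 2) ℝ)).map Complex.ofReal := fun h => rfl
      have hinv : ((hmat⁻¹ : Matrix.SpecialLinearGroup (Fin 2) ℂ) :
          Matrix (Fin 2) (Fin 2) ℂ) = !![-Complex.I, 0; 0, Complex.I] := by
        rw [Matrix.SpecialLinearGroup.coe_inv]
        show (!![Complex.I, 0; 0, -Complex.I] : Matrix (Fin 2) (Fin 2) ℂ).adjugate = _
        rw [Matrix.adjugate_fin_two]
        norm_num
      have hxmap : x.map Complex.ofReal = !![(0 : ℂ), -(a : ℂ); (a : ℂ), 0] := by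
        rw [hxa]
        ext i j
        fin_cases i <;> fin_cases j <;> simp [Matrix.map_apply]
      have hxmap' : (-x).map Complex.ofReal = !![(0 : ℂ), (a : ℂ); -(a : ℂ), 0] := by
        rw [hxa]
        ext i j
        fin_cases i <;> fin_cases j <;> simp [Matrix.map_apply]
      have hconj : (hmat : Matrix (Fin 2) (Fin 2) ℂ) * x.map Complex.ofReal *
          ((hmat⁻¹ : Matrix.SpecialLinearGroup (Fin 2) ℂ) : Matrix (Fin 2) (Fin 2) ℂ) =
          (-x).map Complex.ofReal := by
        rw [hinv, hxmap, hxmap']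
        show (!![Complex.I, 0; 0, -Complex.I] : Matrix (Fin 2) (Fin 2) ℂ) * _ * _ = _
        ext i j
        fin_cases i <;> fin_cases j <;>
          simp [Matrix.mul_apply, Fin.sum_univ_two] <;> ring_nf <;>
          simp [Complex.I_sq]
      rw [_root_.mul_inv_rev, Matrix.SpecialLinearGroup.coe_mul, Matrix.SpecialLinearGroup.coe_mul]
      calc (Matrix.SpecialLinearGroup.map Complex.ofRealHom g : Matrix (Fin 2) (Fin 2) ℂ) *
            (hmat : Matrix (Fin 2) (Fin 2) ℂ) * x.map Complex.ofReal *
            (((hmat⁻¹ : Matrix.SpecialLinearGroup (Fin 2) ℂ) : Matrix (Fin 2) (Fin 2) ℂ) *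
              (((Matrix.SpecialLinearGroup.map Complex.ofRealHom g)⁻¹ :
                Matrix.SpecialLinearGroup (Fin 2) ℂ) : Matrix (Fin 2) (Fin 2) ℂ))
          = (Matrix.SpecialLinearGroup.map Complex.ofRealHom g : Matrix (Fin 2) (Fin 2) ℂ) *
            ((hmat : Matrix (Fin 2) (Fin 2) ℂ) * x.map Complex.ofReal *
              ((hmat⁻¹ : Matrix.SpecialLinearGroup (Fin 2) ℂ) : Matrix (Fin 2) (Fin 2) ℂ)) *
            (((Matrix.SpecialLinearGroup.map Complex.ofRealHom g)⁻¹ :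
                Matrix.SpecialLinearGroup (Fin 2) ℂ) : Matrix (Fin 2) (Fin 2) ℂ) := by
            simp only [mul_assoc]
        _ = y.map Complex.ofReal := by
            rw [hconj, ← map_inv, hco, hco, ← hg]
            ext i j
            first
              | (simp [Matrix.mul_apply, Fin.sum_univ_two, Matrix.map_apply]; push_cast; ring)
              | simp [Matrix.mul_apply, Fin.sum_univ_two, Matrix.map_apply]
end

section
/- Let x ∈ p, where sl(2,ℝ) = so(2) ⊕ p is the Cartan decomposition with θ(x) = −xᵗ (so p consists of symmetric traceless real 2×2 matrices). Then the complex adjoint orbit of x meets sl(2,ℝ) in a single real orbit: (Ad SL(2,ℂ))x ∩ sl(2,ℝ) = (Ad SL(2,ℝ))x. -/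
open Matrix

private lemma real_intertwiner_to_SL
    (x : Matrix (Fin 2) (Fin 2) ℝ) (htr : x.trace = 0) (hsym : xᵀ = x)
    (y : Matrix (Fin 2) (Fin 2) ℝ)
    (h : Matrix (Fin 2) (Fin 2) ℝ) (hd : h.det ≠ 0) (hint : h * x = y * h) :
    ∃ g : Matrix.SpecialLinearGroup (Fin 2) ℝ,
      (g : Matrix (Fin 2) (Fin 2) ℝ) * x *
        ((g⁻¹ : Matrix.SpecialLinearGroup (Fin 2) ℝ) : Matrix (Fin 2) (Fin 2) ℝ) = y := by
  have h10 : x 1 0 = x 0 1 := by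
    have := congrFun (congrFun hsym 1) 0
    simpa [Matrix.transpose_apply] using this.symm
  have h11 : x 1 1 = -(x 0 0) := by
    have := htr
    rw [Matrix.trace_fin_two] at this
    linarith
  -- x * x is a scalar matrix
  set a := x 0 0 with ha
  set b := x 0 1 with hb
  have hx2 : x * x = (a ^ 2 + b ^ 2) • (1 : Matrix (Fin 2) (Fin 2) ℝ) := by
    funext i j
    fin_cases i <;> fin_cases j <;>
      simp [Matrix.mul_apply, Fin.sum_univ_two, Matrix.smul_apply, Matrix.one_apply,
        h10, h11, ← ha, ← hb] <;> ring
  by_cases hx0 : x = 0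
  · -- then y = 0
    have hy : y = 0 := by
      have h1 : y * h = 0 := by rw [← hint, hx0, Matrix.mul_zero]
      have hu : IsUnit h.det := isUnit_iff_ne_zero.mpr hd
      calc y = y * h * h⁻¹ := by rw [Matrix.mul_assoc, Matrix.mul_nonsing_inv _ hu, Matrix.mul_one]
        _ = 0 := by rw [h1, Matrix.zero_mul]
    refine ⟨1, ?_⟩
    simp [hx0, hy]
  · -- x ≠ 0, so a² + b² > 0, det x < 0
    have hab : a ^ 2 + b ^ 2 > 0 := by
      rcases lt_or_eq_of_le (by positivity : (0:ℝ) ≤ a ^ 2 + b ^ 2) with hlt | heq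
      · exact hlt
      · exfalso
        have ha0 : a = 0 := by nlinarith [sq_nonneg a, sq_nonneg b]
        have hb0 : b = 0 := by nlinarith [sq_nonneg a, sq_nonneg b]
        apply hx0
        funext i j
        fin_cases i <;> fin_cases j <;>
          simp [← ha, ← hb, h10, h11, ha0, hb0]
    have hdetx : x.det = -(a ^ 2 + b ^ 2) := by
      rw [Matrix.det_fin_two, h10, h11, ← ha, ← hb]; ring
    -- build h' with positive determinant
    obtain ⟨h', hd', hint'⟩ :
        ∃ h' : Matrix (Fin 2) (Fin 2) ℝ, 0 < h'.det ∧ h' * x = y * h' := by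
      rcases lt_or_gt_of_ne hd with hneg | hpos
      · refine ⟨h * x, ?_, ?_⟩
        · rw [Matrix.det_mul, hdetx]
          nlinarith
        · calc h * x * x = y * h * x := by rw [hint]
            _ = y * (h * x) := by rw [Matrix.mul_assoc]
      · exact ⟨h, hpos, hint⟩
    -- rescale
    set s := (Real.sqrt h'.det)⁻¹ with hs
    have hsqrt : Real.sqrt h'.det ^ 2 = h'.det := Real.sq_sqrt hd'.le
    have hsne : Real.sqrt h'.det ≠ 0 := by positivity
    have hdetM : (s • h').det = 1 := by
      rw [Matrix.det_smul]
      simp only [Fintype.card_fin]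
      rw [hs, inv_pow, hsqrt, inv_mul_cancel₀ hd'.ne']
    refine ⟨⟨s • h', hdetM⟩, ?_⟩
    have hcoe : ((⟨s • h', hdetM⟩ : Matrix.SpecialLinearGroup (Fin 2) ℝ) :
        Matrix (Fin 2) (Fin 2) ℝ) = s • h' := rfl
    set G : Matrix.SpecialLinearGroup (Fin 2) ℝ := ⟨s • h', hdetM⟩ with hG
    have hGx : (G : Matrix (Fin 2) (Fin 2) ℝ) * x = y * (G : Matrix (Fin 2) (Fin 2) ℝ) := by
      rw [hcoe, Matrix.smul_mul, hint', Matrix.mul_smul]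
    have hGG : (G : Matrix (Fin 2) (Fin 2) ℝ) *
        ((G⁻¹ : Matrix.SpecialLinearGroup (Fin 2) ℝ) : Matrix (Fin 2) (Fin 2) ℝ) = 1 := by
      rw [← Matrix.SpecialLinearGroup.coe_mul, mul_inv_cancel]
      rfl
    rw [hGx, Matrix.mul_assoc, hGG, Matrix.mul_one]

/-- for `x ∈ p` (the space of symmetric traceless real `2×2` matrices, the
noncompact part of the Cartan decomposition `sl(2,ℝ) = so(2) ⊕ p` for `θ(x) = -xᵗ`),
the complex adjoint orbit `(Ad SL(2,ℂ))x` meets `sl(2,ℝ)` in the single real orbit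
`(Ad SL(2,ℝ))x`. -/
theorem sl2_p_orbit_intersection
    (x : Matrix (Fin 2) (Fin 2) ℝ) (htr : x.trace = 0) (hsym : xᵀ = x) :
    ∀ y : Matrix (Fin 2) (Fin 2) ℝ, y.trace = 0 →
      ((∃ g : Matrix.SpecialLinearGroup (Fin 2) ℂ,
          (g : Matrix (Fin 2) (Fin 2) ℂ) * x.map Complex.ofReal *
            ((g⁻¹ : Matrix.SpecialLinearGroup (Fin 2) ℂ) : Matrix (Fin 2) (Fin 2) ℂ) =
            y.map Complex.ofReal) ↔
        (∃ g : Matrix.SpecialLinearGroup (Fin 2) ℝ,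
            (g : Matrix (Fin 2) (Fin 2) ℝ) * x *
              ((g⁻¹ : Matrix.SpecialLinearGroup (Fin 2) ℝ) : Matrix (Fin 2) (Fin 2) ℝ) = y)) := by
  intro y hytr
  constructor
  · rintro ⟨g, hg⟩
    -- turn conjugation into intertwining
    have hgg : ((g⁻¹ : Matrix.SpecialLinearGroup (Fin 2) ℂ) : Matrix (Fin 2) (Fin 2) ℂ) *
        (g : Matrix (Fin 2) (Fin 2) ℂ) = 1 := by
      rw [← Matrix.SpecialLinearGroup.coe_mul, inv_mul_cancel]; rfl
    have hint : (g : Matrix (Fin 2) (Fin 2) ℂ) * x.map Complex.ofReal =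
        y.map Complex.ofReal * (g : Matrix (Fin 2) (Fin 2) ℂ) := by
      calc (g : Matrix (Fin 2) (Fin 2) ℂ) * x.map Complex.ofReal
          = (g : Matrix (Fin 2) (Fin 2) ℂ) * x.map Complex.ofReal *
            (((g⁻¹ : Matrix.SpecialLinearGroup (Fin 2) ℂ) : Matrix (Fin 2) (Fin 2) ℂ) *
              (g : Matrix (Fin 2) (Fin 2) ℂ)) := by rw [hgg, Matrix.mul_one]
        _ = y.map Complex.ofReal * (g : Matrix (Fin 2) (Fin 2) ℂ) := by
            rw [← Matrix.mul_assoc, hg]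
    -- real and imaginary part matrices
    set A : Matrix (Fin 2) (Fin 2) ℝ := fun i j => ((g : Matrix (Fin 2) (Fin 2) ℂ) i j).re with hA
    set B : Matrix (Fin 2) (Fin 2) ℝ := fun i j => ((g : Matrix (Fin 2) (Fin 2) ℂ) i j).im with hB
    have hAint : A * x = y * A := by
      funext i j
      have := congrFun (congrFun hint i) j
      simp only [Matrix.mul_apply, Fin.sum_univ_two, Matrix.map_apply] at this
      have hre := congrArg Complex.re this
      simp only [Complex.add_re, Complex.mul_re, Complex.ofReal_re, Complex.ofReal_im,
        mul_zero, zero_mul, sub_zero, zero_sub, mul_comm] at hre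
      simp only [Matrix.mul_apply, Fin.sum_univ_two]
      simp only [hA]
      linarith [hre]
    have hBint : B * x = y * B := by
      funext i j
      have := congrFun (congrFun hint i) j
      simp only [Matrix.mul_apply, Fin.sum_univ_two, Matrix.map_apply] at this
      have him := congrArg Complex.im this
      simp only [Complex.add_im, Complex.mul_im, Complex.ofReal_re, Complex.ofReal_im,
        mul_zero, zero_mul, add_zero, zero_add] at him
      simp only [Matrix.mul_apply, Fin.sum_univ_two]
      simp only [hB]
      linarith [him]
    -- determinant relations from det g = 1
    have hdetg : (g : Matrix (Fin 2) (Fin 2) ℂ).det = 1 := g.prop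
    rw [Matrix.det_fin_two] at hdetg
    have hre := congrArg Complex.re hdetg
    have him := congrArg Complex.im hdetg
    simp only [Complex.sub_re, Complex.mul_re, Complex.sub_im, Complex.mul_im,
      Complex.one_re, Complex.one_im] at hre him
    -- det A - det B = 1, mixed term = 0
    have hdAB : A.det - B.det = 1 := by
      rw [Matrix.det_fin_two, Matrix.det_fin_two]
      simp only [hA, hB]
      linarith [hre]
    by_cases hdA : A.det ≠ 0
    · exact real_intertwiner_to_SL x htr hsym y A hdA hAint
    · push_neg at hdA
      have hdABsum : (A + B).det = A.det + B.det := by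
        rw [Matrix.det_fin_two, Matrix.det_fin_two, Matrix.det_fin_two]
        simp only [Matrix.add_apply]
        simp only [hA, hB]
        nlinarith [him]
      have : (A + B).det ≠ 0 := by
        rw [hdABsum, hdA]
        intro hcon
        rw [hdA] at hdAB
        -- B.det = -1, but then A.det + B.det = -1 ≠ 0
        have : B.det = -1 := by linarith
        rw [this] at hcon
        norm_num at hcon
      have hABint : (A + B) * x = y * (A + B) := by
        rw [Matrix.add_mul, Matrix.mul_add, hAint, hBint]
      exact real_intertwiner_to_SL x htr hsym y (A + B) this hABint
  · rintro ⟨g, hg⟩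
    refine ⟨Matrix.SpecialLinearGroup.map (algebraMap ℝ ℂ) g, ?_⟩
    have hmap : ∀ h : Matrix.SpecialLinearGroup (Fin 2) ℝ,
        ((Matrix.SpecialLinearGroup.map (algebraMap ℝ ℂ) h :
          Matrix.SpecialLinearGroup (Fin 2) ℂ) : Matrix (Fin 2) (Fin 2) ℂ) =
          (h : Matrix (Fin 2) (Fin 2) ℝ).map Complex.ofReal := by
      intro h
      rfl
    have key : ∀ M N : Matrix (Fin 2) (Fin 2) ℝ,
        (M * N).map Complex.ofReal = M.map Complex.ofReal * N.map Complex.ofReal := by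
      intro M N
      exact Matrix.map_mul (f := Complex.ofRealHom)
    rw [← map_inv, hmap, hmap, ← key, ← key, hg]
end

section
/- Two real skew-symmetric n×n matrices with identical characteristic polynomials are conjugate by an orthogonal matrix: if x₁, x₂ ∈ so(n) and det(tI − x₁) = det(tI − x₂), then there exists g ∈ O(n) with g x₁ g⁻¹ = x₂. -/
open Matrix Polynomial

variable {R : Type*} [CommRing R] {m : Type*} [Fintype m] [DecidableEq m]

lemma my_aeval_conj (U V A : Matrix m m R) (hUV : U * V = 1) (hVU : V * U = 1)
    (p : R[X]) : aeval (U * A * V) p = U * (aeval A p) * V := by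
  have hpow : ∀ k : ℕ, (U * A * V) ^ k = U * A ^ k * V := by
    intro k
    induction k with
    | zero => simp [hUV]
    | succ k ih =>
      rw [pow_succ, ih, pow_succ]
      simp only [mul_assoc]
      rw [show V * (U * (A * V)) = A * V by rw [← mul_assoc, hVU, one_mul]]
  induction p using Polynomial.induction_on' with
  | add p q hp hq => rw [map_add, map_add, hp, hq, mul_add, add_mul]
  | monomial k a =>
    rw [aeval_monomial, aeval_monomial, hpow]
    simp only [Algebra.algebraMap_eq_smul_one]
    rw [smul_mul_assoc, one_mul, smul_mul_assoc, one_mul, mul_smul_comm, smul_mul_assoc]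

lemma my_aeval_diagonal (d : m → R) (p : R[X]) :
    aeval (diagonal d) p = diagonal (fun i => p.eval (d i)) := by
  induction p using Polynomial.induction_on' with
  | add p q hp hq =>
    rw [map_add, hp, hq]
    ext i j
    rcases eq_or_ne i j with rfl | h
    · simp
    · simp [diagonal_apply_ne _ h]
  | monomial k a =>
    rw [aeval_monomial]
    simp only [eval_monomial]
    rw [diagonal_pow, Algebra.algebraMap_eq_smul_one, smul_mul_assoc, one_mul, ← diagonal_smul]
    rfl

lemma my_commute_aeval (A B : Matrix m m R) (h : B * A = A * B) (p : R[X]) :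
    B * aeval A p = aeval A p * B := by
  induction p using Polynomial.induction_on' with
  | add p q hp hq => rw [map_add, mul_add, add_mul, hp, hq]
  | monomial k a =>
    have hc' : Commute B A := h
    have hc : B * A ^ k = A ^ k * B := (hc'.pow_right k).eq
    rw [aeval_monomial]
    simp only [Algebra.algebraMap_eq_smul_one, smul_mul_assoc, one_mul, mul_smul_comm]
    rw [hc]

lemma my_charpoly_conj (U V A : Matrix m m R) (hUV : U * V = 1) (hVU : V * U = 1) :
    (U * A * V).charpoly = A.charpoly := by
  have hscal : ∀ W : Matrix m m R[X],
      W * (diagonal fun _ => (X : R[X])) = (diagonal fun _ => (X : R[X])) * W := by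
    intro W; ext i j; simp [mul_diagonal, diagonal_mul, mul_comm]
  have h1 : charmatrix (U * A * V) = (U.map C) * charmatrix A * (V.map C) := by
    simp only [charmatrix, Matrix.mul_sub, Matrix.sub_mul]
    congr 1
    · rw [scalar_apply, hscal, mul_assoc, ← Matrix.map_mul, hUV]
      simp
    · simp [RingHom.mapMatrix_apply, ← Matrix.map_mul]
  unfold Matrix.charpoly
  rw [h1, det_mul, det_mul, mul_comm, ← mul_assoc, ← det_mul, ← Matrix.map_mul, hVU]
  simp

lemma my_charpoly_diagonal (d : m → R) :
    (diagonal d).charpoly = ∏ i, (X - C (d i)) := by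
  unfold Matrix.charpoly
  have h : charmatrix (diagonal d) = diagonal (fun i => X - C (d i)) := by
    ext i j
    rcases eq_or_ne i j with rfl | h
    · simp [charmatrix_apply_eq]
    · simp [charmatrix_apply_ne _ _ _ h, diagonal_apply_ne _ h]
  rw [h, det_diagonal]

lemma my_exists_perm {n : ℕ} {β : Type*} [DecidableEq β] (f g : Fin n → β)
    (h : Finset.univ.val.map f = Finset.univ.val.map g) :
    ∃ σ : Equiv.Perm (Fin n), ∀ i, g (σ i) = f i := by
  have hcard : ∀ b : β, Fintype.card {i // f i = b} = Fintype.card {i // g i = b} := by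
    intro b
    have := congrArg (Multiset.count b) h
    rw [Multiset.count_map, Multiset.count_map] at this
    simp only [Fintype.card_subtype, Finset.card, Finset.filter_val]
    simpa [eq_comm] using this
  have e : ∀ b : β, {i // f i = b} ≃ {i // g i = b} := fun b =>
    Fintype.equivOfCardEq (hcard b)
  refine ⟨Equiv.ofFiberEquiv e, fun i => ?_⟩
  exact Equiv.ofFiberEquiv_map e i

lemma my_multiset_of_prod {K : Type*} [Field K] {n : ℕ} (d₁ d₂ : Fin n → K)
    (h : ∏ i, (X - C (d₁ i)) = ∏ i, (X - C (d₂ i))) :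
    Finset.univ.val.map d₁ = Finset.univ.val.map d₂ := by
  have key : ∀ d : Fin n → K, (∏ i, (X - C (d i))).roots = Finset.univ.val.map d := by
    intro d
    rw [Polynomial.roots_prod _ _ (by
      apply Finset.prod_ne_zero_iff.mpr
      intro i _
      exact X_sub_C_ne_zero (d i))]
    simp [Polynomial.roots_X_sub_C, Multiset.bind_singleton]
  rw [← key d₁, ← key d₂, h]

noncomputable def Matrix.PosSemidef.sqrt {m : Type*} [Fintype m] [DecidableEq m] {S : Matrix m m ℝ}
    (hS : S.PosSemidef) : Matrix m m ℝ :=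
  (hS.1.eigenvectorUnitary : Matrix m m ℝ) * diagonal (RCLike.ofReal ∘ Real.sqrt ∘ hS.1.eigenvalues)
    * star (hS.1.eigenvectorUnitary : Matrix m m ℝ)

lemma Matrix.PosSemidef.posSemidef_sqrt {m : Type*} [Fintype m] [DecidableEq m] {S : Matrix m m ℝ}
    (hS : S.PosSemidef) : hS.sqrt.PosSemidef := by
  unfold Matrix.PosSemidef.sqrt
  apply PosSemidef.mul_mul_conjTranspose_same
  rw [posSemidef_diagonal_iff]
  intro i
  simp [Real.sqrt_nonneg]

lemma Matrix.PosSemidef.sqrt_mul_self {m : Type*} [Fintype m] [DecidableEq m] {S : Matrix m m ℝ}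
    (hS : S.PosSemidef) : hS.sqrt * hS.sqrt = S := by
  have hVU : star (hS.1.eigenvectorUnitary : Matrix m m ℝ) * (hS.1.eigenvectorUnitary : Matrix m m ℝ) = 1 :=
    (Matrix.mem_unitaryGroup_iff').mp hS.1.eigenvectorUnitary.2
  have hspec := hS.1.spectral_theorem
  rw [Unitary.conjStarAlgAut_apply] at hspec
  unfold Matrix.PosSemidef.sqrt
  conv_rhs => rw [hspec]
  have hD : diagonal (RCLike.ofReal ∘ Real.sqrt ∘ hS.1.eigenvalues : m → ℝ) *
      diagonal (RCLike.ofReal ∘ Real.sqrt ∘ hS.1.eigenvalues : m → ℝ)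
        = diagonal (RCLike.ofReal ∘ hS.1.eigenvalues : m → ℝ) := by
    rw [diagonal_mul_diagonal]
    congr 1
    funext i
    simp [Real.mul_self_sqrt (hS.eigenvalues_nonneg i)]
  simp only [mul_assoc]
  rw [← mul_assoc (star _) _ _, hVU, one_mul, ← mul_assoc (diagonal _) (diagonal _), hD]

lemma my_sqrt_poly {m : Type*} [Fintype m] [DecidableEq m] {S : Matrix m m ℝ} (hS : S.PosSemidef) :
    ∃ p : ℝ[X], aeval S p = hS.sqrt := by
  classical
  set U : Matrix m m ℝ := (hS.1.eigenvectorUnitary : Matrix m m ℝ) with hU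
  have hUV : U * star U = 1 := (Matrix.mem_unitaryGroup_iff).mp hS.1.eigenvectorUnitary.2
  have hVU : star U * U = 1 := (Matrix.mem_unitaryGroup_iff').mp hS.1.eigenvectorUnitary.2
  set p : ℝ[X] := Lagrange.interpolate (Finset.univ.image hS.1.eigenvalues) id Real.sqrt with hp
  have hpeval : ∀ i, p.eval (hS.1.eigenvalues i) = Real.sqrt (hS.1.eigenvalues i) := by
    intro i
    have := Lagrange.eval_interpolate_at_node (v := id) Real.sqrt
      (Set.injOn_id _) (s := Finset.univ.image hS.1.eigenvalues)
      (i := hS.1.eigenvalues i) (Finset.mem_image_of_mem _ (Finset.mem_univ i))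
    rw [hp]; simpa using this
  refine ⟨p, ?_⟩
  have hspec : S = U * diagonal (RCLike.ofReal ∘ hS.1.eigenvalues) * star U := by
    have := hS.1.spectral_theorem; rw [Unitary.conjStarAlgAut_apply] at this; exact this
  have hdiag : (diagonal (RCLike.ofReal ∘ hS.1.eigenvalues) : Matrix m m ℝ)
      = diagonal hS.1.eigenvalues := by
    congr 1
  rw [Matrix.PosSemidef.sqrt]
  conv_lhs => rw [hspec, hdiag]
  rw [my_aeval_conj _ _ _ hUV hVU, my_aeval_diagonal]
  have he : (fun i => p.eval (hS.1.eigenvalues i))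
      = (RCLike.ofReal ∘ Real.sqrt ∘ hS.1.eigenvalues : m → ℝ) := by
    funext i; simp [hpeval i]
  rw [he]

lemma my_similar_complex (n : ℕ) (x₁ x₂ : Matrix (Fin n) (Fin n) ℝ)
    (h₁ : x₁ᵀ = -x₁) (h₂ : x₂ᵀ = -x₂) (hchar : x₁.charpoly = x₂.charpoly) :
    ∃ V W : Matrix (Fin n) (Fin n) ℂ, V * W = 1 ∧ W * V = 1 ∧
      V * (x₁.map (algebraMap ℝ ℂ)) * W = x₂.map (algebraMap ℝ ℂ) := by
  classical
  set c := algebraMap ℝ ℂ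
  -- Hermitianness of I • (x.map c)
  have herm : ∀ (x : Matrix (Fin n) (Fin n) ℝ), xᵀ = -x →
      (Complex.I • x.map c).IsHermitian := by
    intro x hx
    have hct : (x.map c)ᴴ = (xᵀ).map c := by
      ext i j
      simp [conjTranspose_apply, Matrix.map_apply, c, Complex.conj_ofReal]
    rw [Matrix.IsHermitian, conjTranspose_smul, hct, hx]
    ext i j
    simp [Matrix.map_apply, c, Complex.star_def, Complex.conj_I]
  have H₁ := herm x₁ h₁
  have H₂ := herm x₂ h₂
  set U₁ : Matrix (Fin n) (Fin n) ℂ := (H₁.eigenvectorUnitary : Matrix (Fin n) (Fin n) ℂ)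
  set U₂ : Matrix (Fin n) (Fin n) ℂ := (H₂.eigenvectorUnitary : Matrix (Fin n) (Fin n) ℂ)
  have hU₁ : U₁ * star U₁ = 1 := (Matrix.mem_unitaryGroup_iff).mp H₁.eigenvectorUnitary.2
  have hU₁' : star U₁ * U₁ = 1 := (Matrix.mem_unitaryGroup_iff').mp H₁.eigenvectorUnitary.2
  have hU₂ : U₂ * star U₂ = 1 := (Matrix.mem_unitaryGroup_iff).mp H₂.eigenvectorUnitary.2
  have hU₂' : star U₂ * U₂ = 1 := (Matrix.mem_unitaryGroup_iff').mp H₂.eigenvectorUnitary.2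
  set e₁ : Fin n → ℂ := fun i => -Complex.I * (H₁.eigenvalues i : ℂ) with he₁
  set e₂ : Fin n → ℂ := fun i => -Complex.I * (H₂.eigenvalues i : ℂ) with he₂
  -- diagonalization of x.map c
  have diag : ∀ (x : Matrix (Fin n) (Fin n) ℝ) (hx : (Complex.I • x.map c).IsHermitian)
      (U : Matrix (Fin n) (Fin n) ℂ), U = (hx.eigenvectorUnitary : Matrix (Fin n) (Fin n) ℂ) →
      x.map c = U * diagonal (fun i => -Complex.I * (hx.eigenvalues i : ℂ)) * star U := by
    intro x hx U hU
    have hspec := hx.spectral_theorem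
    rw [Unitary.conjStarAlgAut_apply] at hspec
    have hDsmul : (diagonal (fun i => -Complex.I * (hx.eigenvalues i : ℂ)))
        = (-Complex.I) • diagonal ((RCLike.ofReal ∘ hx.eigenvalues : Fin n → ℂ)) := by
      rw [← diagonal_smul]
      congr 1
    rw [hDsmul, mul_smul_comm, smul_mul_assoc, hU, ← hspec, smul_smul]
    simp
  have hd₁ := diag x₁ H₁ U₁ rfl
  have hd₂ := diag x₂ H₂ U₂ rfl
  -- equal charpolys of the diagonals
  have hcc : (x₁.map c).charpoly = (x₂.map c).charpoly := by
    rw [Matrix.charpoly_map, Matrix.charpoly_map, hchar]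
  have hdc : (diagonal e₁).charpoly = (diagonal e₂).charpoly := by
    have c1 := my_charpoly_conj U₁ (star U₁) (diagonal e₁) hU₁ hU₁'
    have c2 := my_charpoly_conj U₂ (star U₂) (diagonal e₂) hU₂ hU₂'
    rw [← c1, ← c2, ← hd₁, ← hd₂]
    exact hcc
  rw [my_charpoly_diagonal, my_charpoly_diagonal] at hdc
  obtain ⟨σ, hσ⟩ := my_exists_perm e₁ e₂ (my_multiset_of_prod _ _ hdc)
  -- permutation matrices
  set P : Matrix (Fin n) (Fin n) ℂ := (1 : Matrix (Fin n) (Fin n) ℂ).submatrix id ⇑σ with hP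
  set P' : Matrix (Fin n) (Fin n) ℂ := (1 : Matrix (Fin n) (Fin n) ℂ).submatrix ⇑σ id with hP'
  have hPP' : P * P' = 1 := by
    rw [hP, hP', submatrix_mul_equiv (1 : Matrix (Fin n) (Fin n) ℂ) 1 id σ id, one_mul,
      submatrix_id_id]
  have hP'P : P' * P = 1 := by
    have e1 : P = (1 : Matrix (Fin n) (Fin n) ℂ).submatrix (⇑(Equiv.refl (Fin n))) ⇑σ := rfl
    have e2 : P' = (1 : Matrix (Fin n) (Fin n) ℂ).submatrix ⇑σ ⇑(Equiv.refl (Fin n)) := rfl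
    rw [e1, e2, submatrix_mul_equiv (1 : Matrix (Fin n) (Fin n) ℂ) 1 ⇑σ (Equiv.refl (Fin n)) ⇑σ,
      one_mul, submatrix_one_equiv]
  have hPD : P * diagonal e₁ = diagonal e₂ * P := by
    ext i j
    rw [mul_diagonal, diagonal_mul]
    by_cases h : i = σ j
    · subst h
      simp [hP, one_apply, hσ j]
    · simp [hP, one_apply, h]
  have can₁ : ∀ M : Matrix (Fin n) (Fin n) ℂ, star U₁ * (U₁ * M) = M := fun M => by
    rw [← mul_assoc, hU₁', one_mul]
  have can₂ : ∀ M : Matrix (Fin n) (Fin n) ℂ, star U₂ * (U₂ * M) = M := fun M => by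
    rw [← mul_assoc, hU₂', one_mul]
  have canP : ∀ M : Matrix (Fin n) (Fin n) ℂ, P' * (P * M) = M := fun M => by
    rw [← mul_assoc, hP'P, one_mul]
  have canP' : ∀ M : Matrix (Fin n) (Fin n) ℂ, P * (P' * M) = M := fun M => by
    rw [← mul_assoc, hPP', one_mul]
  refine ⟨U₂ * P * star U₁, U₁ * P' * star U₂, ?_, ?_, ?_⟩
  · have h5 : U₂ * P * star U₁ * (U₁ * P' * star U₂)
        = U₂ * (star U₁ * (U₁ * (P' * star U₂)) |> (P * ·)) := by simp only [mul_assoc]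
    rw [h5]
    simp only [can₁, canP', hU₂]
  · have h5 : U₁ * P' * star U₂ * (U₂ * P * star U₁)
        = U₁ * (P' * (star U₂ * (U₂ * (P * star U₁)))) := by simp only [mul_assoc]
    rw [h5]
    simp only [can₂, canP, hU₁]
  · rw [hd₁, hd₂]
    have h5 : U₂ * P * star U₁ * ((U₁ * diagonal (fun i => -Complex.I * (H₁.eigenvalues i : ℂ)))
          * star U₁) * (U₁ * P' * star U₂)
        = U₂ * (P * (star U₁ * (U₁ * (diagonal e₁ * (star U₁ * (U₁ * (P' * star U₂))))))) := by
      simp only [mul_assoc, he₁]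
    rw [h5]
    simp only [can₁]
    rw [show P * (diagonal e₁ * (P' * star U₂)) = (P * diagonal e₁) * (P' * star U₂) by
      rw [mul_assoc], hPD, mul_assoc]
    simp only [canP']
    simp only [mul_assoc, he₂]

lemma my_similar_real (n : ℕ) (x₁ x₂ : Matrix (Fin n) (Fin n) ℝ)
    (V : Matrix (Fin n) (Fin n) ℂ) (hVdet : V.det ≠ 0)
    (hsim : V * (x₁.map (algebraMap ℝ ℂ)) = x₂.map (algebraMap ℝ ℂ) * V) :
    ∃ T : Matrix (Fin n) (Fin n) ℝ, IsUnit T.det ∧ T * x₁ = x₂ * T := by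
  classical
  set R : Matrix (Fin n) (Fin n) ℝ := fun i j => (V i j).re with hRdef
  set Q : Matrix (Fin n) (Fin n) ℝ := fun i j => (V i j).im with hQdef
  have hentry : ∀ i j, (V * (x₁.map (algebraMap ℝ ℂ))) i j
      = (x₂.map (algebraMap ℝ ℂ) * V) i j := fun i j => by rw [hsim]
  have hR : R * x₁ = x₂ * R := by
    ext i j
    have := congrArg Complex.re (hentry i j)
    simp only [Matrix.mul_apply, Complex.re_sum, Matrix.map_apply, Complex.mul_re,
      Complex.ofReal_re, Complex.ofReal_im, mul_zero, zero_mul, sub_zero,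
      Complex.coe_algebraMap] at this
    show (∑ k, R i k * x₁ k j) = ∑ k, x₂ i k * R k j
    exact this
  have hQ : Q * x₁ = x₂ * Q := by
    ext i j
    have := congrArg Complex.im (hentry i j)
    simp only [Matrix.mul_apply, Complex.im_sum, Matrix.map_apply, Complex.mul_im,
      Complex.ofReal_re, Complex.ofReal_im, mul_zero, zero_mul, add_zero, zero_add,
      Complex.coe_algebraMap] at this
    show (∑ k, Q i k * x₁ k j) = ∑ k, x₂ i k * Q k j
    exact this
  set M : Matrix (Fin n) (Fin n) ℝ[X] := R.map C + (X : ℝ[X]) • Q.map C with hM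
  set q : ℝ[X] := M.det with hq
  have hVentry : ∀ i j, V i j = Complex.ofReal (R i j) + Complex.I * Complex.ofReal (Q i j) := by
    intro i j
    rw [mul_comm Complex.I]
    exact (Complex.re_add_im _).symm
  have hqI : (Polynomial.eval₂RingHom (algebraMap ℝ ℂ) Complex.I) q = V.det := by
    have := RingHom.map_det (Polynomial.eval₂RingHom (algebraMap ℝ ℂ) Complex.I) M
    rw [hq, this]
    congr 1
    ext i j
    simp only [Matrix.map_apply, hM, Matrix.add_apply, Matrix.smul_apply, smul_eq_mul,
      coe_eval₂RingHom, eval₂_add, eval₂_mul, eval₂_C, eval₂_X, hVentry i j]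
    simp [Complex.coe_algebraMap]
    ring
  have hq0 : q ≠ 0 := by
    intro h
    rw [h] at hqI
    simp at hqI
    exact hVdet hqI.symm
  obtain ⟨t, ht⟩ : ∃ t : ℝ, q.eval t ≠ 0 := by
    apply q.exists_eval_ne_zero_of_natDegree_lt_card hq0
    exact lt_of_lt_of_le (Cardinal.nat_lt_aleph0 _) (Cardinal.aleph0_le_mk ℝ)
  have heval : q.eval t = (R + t • Q).det := by
    have h0 := RingHom.map_det (Polynomial.evalRingHom t) M
    rw [hq]
    rw [show Polynomial.eval t M.det = (Polynomial.evalRingHom t) M.det from rfl, h0]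
    congr 1
    ext i j
    simp only [RingHom.mapMatrix_apply, Matrix.map_apply, hM, Matrix.add_apply,
      Matrix.smul_apply, smul_eq_mul, coe_evalRingHom, eval_add, eval_mul, eval_C, eval_X]
  refine ⟨R + t • Q, ?_, ?_⟩
  · rw [isUnit_iff_ne_zero, ← heval]
    exact ht
  · rw [Matrix.add_mul, Matrix.mul_add, Matrix.smul_mul, Matrix.mul_smul, hR, hQ]

/-- two real skew-symmetric `n×n` matrices with the same characteristic
polynomial are conjugate by an orthogonal matrix. -/
theorem skew_symmetric_orthogonally_conjugate_of_charpoly_eq (n : ℕ)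
    (x₁ x₂ : Matrix (Fin n) (Fin n) ℝ)
    (h₁ : x₁ᵀ = -x₁) (h₂ : x₂ᵀ = -x₂)
    (hchar : x₁.charpoly = x₂.charpoly) :
    ∃ g ∈ Matrix.orthogonalGroup (Fin n) ℝ, g * x₁ * g⁻¹ = x₂ := by
  classical
  obtain ⟨V, W, hVW, hWV, hconj⟩ := my_similar_complex n x₁ x₂ h₁ h₂ hchar
  have hVdet : V.det ≠ 0 := by
    have h : V.det * W.det = 1 := by rw [← det_mul, hVW, det_one]
    exact left_ne_zero_of_mul_eq_one h
  have hsim : V * (x₁.map (algebraMap ℝ ℂ)) = x₂.map (algebraMap ℝ ℂ) * V := by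
    calc V * (x₁.map (algebraMap ℝ ℂ))
        = V * (x₁.map (algebraMap ℝ ℂ)) * (W * V) := by rw [hWV, mul_one]
      _ = (V * (x₁.map (algebraMap ℝ ℂ)) * W) * V := by simp only [mul_assoc]
      _ = x₂.map (algebraMap ℝ ℂ) * V := by rw [hconj]
  obtain ⟨T, hTdet, hT⟩ := my_similar_real n x₁ x₂ V hVdet hsim
  -- S = Tᵀ T is positive semidefinite and commutes with x₁
  set S : Matrix (Fin n) (Fin n) ℝ := Tᵀ * T with hS
  have hSps : S.PosSemidef := by
    have := Matrix.posSemidef_conjTranspose_mul_self T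
    rwa [conjTranspose_eq_transpose_of_trivial] at this
  have hTx' : x₁ * Tᵀ = Tᵀ * x₂ := by
    have := congrArg Matrix.transpose hT
    rw [transpose_mul, transpose_mul, h₁, h₂] at this
    rw [Matrix.neg_mul, Matrix.mul_neg] at this
    exact neg_injective this
  have hcomm : x₁ * S = S * x₁ := by
    calc x₁ * S = (x₁ * Tᵀ) * T := by rw [hS, mul_assoc]
      _ = Tᵀ * (x₂ * T) := by rw [hTx', mul_assoc]
      _ = Tᵀ * (T * x₁) := by rw [hT]
      _ = S * x₁ := by rw [hS, mul_assoc]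
  set P : Matrix (Fin n) (Fin n) ℝ := hSps.sqrt with hP
  have hPP : P * P = S := hSps.sqrt_mul_self
  have hPsymm : Pᵀ = P := by
    have := hSps.posSemidef_sqrt.1
    rwa [Matrix.IsHermitian, conjTranspose_eq_transpose_of_trivial] at this
  have hPx : x₁ * P = P * x₁ := by
    obtain ⟨p, hp⟩ := my_sqrt_poly hSps
    rw [hP, ← hp]
    exact my_commute_aeval S x₁ hcomm p
  have hSdet : IsUnit S.det := by
    rw [hS, det_mul, det_transpose]
    exact hTdet.mul hTdet
  have hPdet : IsUnit P.det := by
    have : IsUnit (P.det * P.det) := by rw [← det_mul, hPP]; exact hSdet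
    exact isUnit_of_mul_isUnit_left this
  have hPTdet : IsUnit (Pᵀ).det := by rwa [det_transpose]
  have hTTdet : IsUnit (Tᵀ).det := by rwa [det_transpose]
  refine ⟨T * P⁻¹, ?_, ?_⟩
  · rw [Matrix.mem_orthogonalGroup_iff,
      transpose_mul, transpose_nonsing_inv, hPsymm]
    calc T * P⁻¹ * (P⁻¹ * Tᵀ) = T * ((P * P)⁻¹ * Tᵀ) := by
          rw [Matrix.mul_inv_rev]; simp only [mul_assoc]
      _ = T * (T⁻¹ * ((Tᵀ)⁻¹ * Tᵀ)) := by rw [hPP, hS, Matrix.mul_inv_rev]; simp only [mul_assoc]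
      _ = 1 := by rw [Matrix.nonsing_inv_mul _ hTTdet, mul_one, Matrix.mul_nonsing_inv _ hTdet]
  · have hginv : (T * P⁻¹)⁻¹ = P * T⁻¹ := by
      rw [Matrix.mul_inv_rev, Matrix.nonsing_inv_nonsing_inv _ hPdet]
    rw [hginv]
    have hPx' : P⁻¹ * x₁ = x₁ * P⁻¹ := by
      have e1 : P⁻¹ * (x₁ * P) * P⁻¹ = P⁻¹ * x₁ := by
        rw [← mul_assoc, mul_assoc (P⁻¹ * x₁) P P⁻¹, Matrix.mul_nonsing_inv _ hPdet, mul_one]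
      have e2 : P⁻¹ * (P * x₁) * P⁻¹ = x₁ * P⁻¹ := by
        rw [← mul_assoc, Matrix.nonsing_inv_mul _ hPdet, one_mul]
      rw [← e1, hPx, e2]
    have hmid : P⁻¹ * x₁ * P = x₁ := by
      rw [hPx', mul_assoc, Matrix.nonsing_inv_mul _ hPdet, mul_one]
    calc T * P⁻¹ * x₁ * (P * T⁻¹)
        = T * (P⁻¹ * x₁ * P) * T⁻¹ := by simp only [mul_assoc]
      _ = T * x₁ * T⁻¹ := by rw [hmid]
      _ = x₂ * (T * T⁻¹) := by rw [hT, mul_assoc]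
      _ = x₂ := by rw [Matrix.mul_nonsing_inv _ hTdet, mul_one]
end

section
/- For the adjoint action of the Lorentz group: let x, x̃ ∈ t = so(n−1) ⊕ so(1) ⊂ o(n−1,1) lie in the compact part of the Cartan decomposition. If x and x̃ lie in the same O(n,ℂ)-adjoint orbit (equivalently have the same characteristic polynomial as complex matrices), then they lie in the same O(n−1,1)-adjoint orbit. -/
open Matrix Polynomial

/-- The Lorentz metric matrix `I_{n,1} = diag(1,…,1,-1)` on `ℝ^{n+1}`. -/
noncomputable def lorentzEta (n : ℕ) : Matrix (Fin (n + 1)) (Fin (n + 1)) ℝ :=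
  Matrix.diagonal fun i => if i = Fin.last n then -1 else 1

private lemma real_conj_of_complex_conj {m : Type*} [Fintype m] [DecidableEq m]
    (x x' : Matrix m m ℝ) (g : Matrix m m ℂ) (hdet : g.det ≠ 0)
    (hg : g * x.map Complex.ofReal = x'.map Complex.ofReal * g) :
    ∃ S : Matrix m m ℝ, S.det ≠ 0 ∧ S * x = x' * S := by
  classical
  set A : Matrix m m ℝ := Matrix.of (fun i j => (g i j).re) with hAdef
  set B : Matrix m m ℝ := Matrix.of (fun i j => (g i j).im) with hBdef
  have hentry : ∀ i j, (∑ k, g i k * ((x k j : ℝ) : ℂ)) = ∑ k, ((x' i k : ℝ) : ℂ) * g k j := by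
    intro i j
    have h := Matrix.ext_iff.mpr hg i j
    simpa [Matrix.mul_apply, Matrix.map_apply] using h
  have hAx : A * x = x' * A := by
    ext i j
    have h := congrArg Complex.re (hentry i j)
    simpa [Complex.re_sum, Matrix.mul_apply, Complex.mul_re, hAdef] using h
  have hBx : B * x = x' * B := by
    ext i j
    have h := congrArg Complex.im (hentry i j)
    simpa [Complex.im_sum, Matrix.mul_apply, Complex.mul_im, hBdef] using h
  set Mp : Matrix m m ℝ[X] := A.map Polynomial.C + (Polynomial.X : ℝ[X]) • B.map Polynomial.C
    with hMpdef
  set p : ℝ[X] := Mp.det with hpdef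
  have hmapS : ∀ t : ℝ, Mp.map (Polynomial.evalRingHom t) = A + t • B := by
    intro t
    ext i j
    simp [hMpdef, Matrix.map_apply, Matrix.add_apply, Matrix.smul_apply, smul_eq_mul]
    ring
  have hdet_eval : ∀ t : ℝ, p.eval t = (A + t • B).det := by
    intro t
    rw [← hmapS t, hpdef]
    exact RingHom.map_det (Polynomial.evalRingHom t) Mp
  have hφ : ((Polynomial.evalRingHom Complex.I).comp
      (Polynomial.mapRingHom (algebraMap ℝ ℂ))) p = g.det := by
    rw [hpdef, RingHom.map_det]
    congr 1
    ext i j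
    simp [hMpdef, Matrix.map_apply, Matrix.add_apply, Matrix.smul_apply, smul_eq_mul,
      hAdef, hBdef]
  have hp0 : p ≠ 0 := by
    intro h
    rw [h, map_zero] at hφ
    exact hdet hφ.symm
  have : ¬ ∀ t : ℝ, p.eval t = 0 := fun hall => hp0 (Polynomial.zero_of_eval_zero p hall)
  push_neg at this
  obtain ⟨t, ht⟩ := this
  refine ⟨A + t • B, by rwa [← hdet_eval], ?_⟩
  rw [Matrix.add_mul, Matrix.smul_mul, hAx, hBx, ← Matrix.mul_smul, ← Matrix.mul_add]

private lemma orth_conj_of_conj {m : Type*} [Fintype m] [DecidableEq m]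
    (x x' S : Matrix m m ℝ) (hx : xᵀ = -x) (hx' : x'ᵀ = -x')
    (hdet : S.det ≠ 0) (hS : S * x = x' * S) :
    ∃ Q : Matrix m m ℝ, Qᵀ * Q = 1 ∧ Q * x = x' * Q := by
  classical
  have hxS : x * Sᵀ = Sᵀ * x' := by
    have h1 := congrArg Matrix.transpose hS
    rw [Matrix.transpose_mul, Matrix.transpose_mul, hx, hx', Matrix.neg_mul,
      Matrix.mul_neg, neg_inj] at h1
    exact h1
  set M : Matrix m m ℝ := Sᵀ * S with hMdef
  have hMx : M * x = x * M := by
    calc Sᵀ * S * x = Sᵀ * (x' * S) := by rw [Matrix.mul_assoc, hS]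
    _ = (x * Sᵀ) * S := by rw [← Matrix.mul_assoc, hxS]
    _ = x * (Sᵀ * S) := by rw [Matrix.mul_assoc]
  have hMherm : M.IsHermitian := by
    rw [Matrix.IsHermitian, Matrix.conjTranspose_eq_transpose_of_trivial, hMdef,
      Matrix.transpose_mul, Matrix.transpose_transpose]
  have hMpos : M.PosSemidef := by
    have h := Matrix.posSemidef_conjTranspose_mul_self S
    rwa [Matrix.conjTranspose_eq_transpose_of_trivial] at h
  set μ : m → ℝ := hMherm.eigenvalues with hμdef
  have hμnonneg : ∀ i, 0 ≤ μ i := fun i => hMpos.eigenvalues_nonneg i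
  have hμne : ∀ i, μ i ≠ 0 := by
    have hdetM : M.det = ∏ i, μ i := by simpa using hMherm.det_eq_prod_eigenvalues
    intro i hi
    have hMd : M.det ≠ 0 := by
      rw [hMdef, Matrix.det_mul, Matrix.det_transpose]
      exact mul_ne_zero hdet hdet
    rw [hdetM] at hMd
    exact hMd (Finset.prod_eq_zero (Finset.mem_univ i) hi)
  set U : Matrix m m ℝ := (hMherm.eigenvectorUnitary : Matrix m m ℝ) with hUdef
  have hU1 : U * Uᵀ = 1 := by
    have h := (Matrix.mem_unitaryGroup_iff).mp hMherm.eigenvectorUnitary.2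
    rwa [Matrix.star_eq_conjTranspose, Matrix.conjTranspose_eq_transpose_of_trivial] at h
  have hU2 : Uᵀ * U = 1 := by
    have h := (Matrix.mem_unitaryGroup_iff').mp hMherm.eigenvectorUnitary.2
    rwa [Matrix.star_eq_conjTranspose, Matrix.conjTranspose_eq_transpose_of_trivial] at h
  have hcan1 : ∀ Z : Matrix m m ℝ, U * (Uᵀ * Z) = Z := fun Z => by
    rw [← Matrix.mul_assoc, hU1, Matrix.one_mul]
  have hcan2 : ∀ Z : Matrix m m ℝ, Uᵀ * (U * Z) = Z := fun Z => by
    rw [← Matrix.mul_assoc, hU2, Matrix.one_mul]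
  have hspec : M = U * Matrix.diagonal μ * Uᵀ := by
    have h := hMherm.spectral_theorem
    rwa [Unitary.conjStarAlgAut_apply, Matrix.star_eq_conjTranspose, Matrix.conjTranspose_eq_transpose_of_trivial,
      RCLike.ofReal_real_eq_id, Function.id_comp] at h
  set y : Matrix m m ℝ := Uᵀ * x * U with hydef
  have hyD : Matrix.diagonal μ * y = y * Matrix.diagonal μ := by
    have h1 : U * Matrix.diagonal μ * Uᵀ * x = x * (U * Matrix.diagonal μ * Uᵀ) := by
      rw [← hspec]; exact hMx
    have h2 := congrArg (fun Z => Uᵀ * Z * U) h1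
    simp only [Matrix.mul_assoc] at h2 ⊢
    rw [hcan2, hU2, Matrix.mul_one] at h2
    -- h2 : diagonal μ * (Uᵀ * (x * U)) = Uᵀ * (x * (U * diagonal μ))
    rw [hydef]
    simp only [Matrix.mul_assoc]
    exact h2
  have hxy : x = U * y * Uᵀ := by
    rw [hydef]
    simp only [Matrix.mul_assoc]
    rw [hcan1, hU1, Matrix.mul_one]
  have hcomm : ∀ d : m → ℝ, (∀ i j, μ i = μ j → d i = d j) →
      (U * Matrix.diagonal d * Uᵀ) * x = x * (U * Matrix.diagonal d * Uᵀ) := by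
    intro d hd
    have hyd : Matrix.diagonal d * y = y * Matrix.diagonal d := by
      ext i j
      rw [Matrix.mul_diagonal, Matrix.diagonal_mul]
      rcases eq_or_ne (y i j) 0 with h0 | h0
      · simp [h0]
      · have hμij : μ i = μ j := by
          have h3 := Matrix.ext_iff.mpr hyD i j
          rw [Matrix.mul_diagonal, Matrix.diagonal_mul] at h3
          exact mul_right_cancel₀ h0 (by linarith [h3] )
        rw [hd i j hμij, mul_comm]
    conv_lhs => rw [hxy]
    conv_rhs => rw [hxy]
    simp only [Matrix.mul_assoc, hcan2]
    rw [← Matrix.mul_assoc (Matrix.diagonal d) y, hyd, Matrix.mul_assoc]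
  have hmulD : ∀ d d' : m → ℝ, (U * Matrix.diagonal d * Uᵀ) * (U * Matrix.diagonal d' * Uᵀ)
      = U * Matrix.diagonal (fun i => d i * d' i) * Uᵀ := by
    intro d d'
    simp only [Matrix.mul_assoc, hcan2]
    rw [← Matrix.mul_assoc (Matrix.diagonal d) (Matrix.diagonal d'),
      Matrix.diagonal_mul_diagonal]
  set sμ : m → ℝ := fun i => Real.sqrt (μ i) with hsdef
  have hsne : ∀ i, sμ i ≠ 0 := fun i =>
    Real.sqrt_ne_zero'.mpr (lt_of_le_of_ne (hμnonneg i) (Ne.symm (hμne i)))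
  set P : Matrix m m ℝ := U * Matrix.diagonal sμ * Uᵀ with hPdef
  set Pi : Matrix m m ℝ := U * Matrix.diagonal (fun i => (sμ i)⁻¹) * Uᵀ with hPidef
  have hPPi : P * Pi = 1 := by
    rw [hPdef, hPidef, hmulD]
    have : (fun i => sμ i * (sμ i)⁻¹) = fun _ => (1:ℝ) := funext fun i => mul_inv_cancel₀ (hsne i)
    rw [this, Matrix.diagonal_one, Matrix.mul_one, hU1]
  have hPiP : Pi * P = 1 := by
    rw [hPdef, hPidef, hmulD]
    have : (fun i => (sμ i)⁻¹ * sμ i) = fun _ => (1:ℝ) := funext fun i => inv_mul_cancel₀ (hsne i)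
    rw [this, Matrix.diagonal_one, Matrix.mul_one, hU1]
  have hPsq : P * P = M := by
    rw [hPdef, hmulD]
    have : (fun i => sμ i * sμ i) = μ := funext fun i => Real.mul_self_sqrt (hμnonneg i)
    rw [this, ← hspec]
  have hPix : Pi * x = x * Pi := hcomm _ (fun i j h => by simp only [hsdef]; rw [h])
  have hPit : Piᵀ = Pi := by
    rw [hPidef, Matrix.transpose_mul, Matrix.transpose_mul, Matrix.transpose_transpose,
      Matrix.diagonal_transpose, Matrix.mul_assoc]
  refine ⟨S * Pi, ?_, ?_⟩
  · rw [Matrix.transpose_mul, hPit]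
    calc Pi * Sᵀ * (S * Pi) = Pi * (Sᵀ * S) * Pi := by
          simp only [Matrix.mul_assoc]
    _ = Pi * (P * P) * Pi := by rw [hPsq]
    _ = (Pi * P) * (P * Pi) := by simp only [Matrix.mul_assoc]
    _ = 1 := by rw [hPiP, hPPi, Matrix.one_mul]
  · calc S * Pi * x = S * (x * Pi) := by rw [Matrix.mul_assoc, hPix]
    _ = (S * x) * Pi := by rw [Matrix.mul_assoc]
    _ = x' * (S * Pi) := by rw [hS, Matrix.mul_assoc]
private lemma mul_vecMulVec' {m : Type*} [Fintype m] (A : Matrix m m ℝ) (u v : m → ℝ) :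
    A * vecMulVec u v = vecMulVec (A *ᵥ u) v := by
  ext i j
  simp only [Matrix.mul_apply, vecMulVec_apply, Matrix.mulVec, dotProduct,
    Finset.sum_mul]
  exact Finset.sum_congr rfl fun k _ => by ring

private lemma vecMulVec_mul' {m : Type*} [Fintype m] (u v : m → ℝ) (B : Matrix m m ℝ) :
    vecMulVec u v * B = vecMulVec u (v ᵥ* B) := by
  ext i j
  simp only [Matrix.mul_apply, vecMulVec_apply, Matrix.vecMul, dotProduct,
    Finset.mul_sum]
  exact Finset.sum_congr rfl fun k _ => by ring

private lemma lorentz_conj_of_orth (n : ℕ)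
    (x x' : Matrix (Fin (n + 1)) (Fin (n + 1)) ℝ)
    (hx : xᵀ = -x)
    (hxlast : ∀ i, x i (Fin.last n) = 0 ∧ x (Fin.last n) i = 0)
    (hx'last : ∀ i, x' i (Fin.last n) = 0 ∧ x' (Fin.last n) i = 0)
    (Q : Matrix (Fin (n + 1)) (Fin (n + 1)) ℝ)
    (hQ1 : Qᵀ * Q = 1) (hQx : Q * x = x' * Q) :
    ∃ h : Matrix (Fin (n + 1)) (Fin (n + 1)) ℝ,
      hᵀ * lorentzEta n * h = lorentzEta n ∧ h * x * h⁻¹ = x' := by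
  classical
  have hQQT : Q * Qᵀ = 1 := mul_eq_one_comm.mp hQ1
  have hcanQ : ∀ Z, Qᵀ * (Q * Z) = Z := fun Z => by
    rw [← Matrix.mul_assoc, hQ1, Matrix.one_mul]
  set e : Fin (n + 1) → ℝ := fun i => if i = Fin.last n then 1 else 0 with hedef
  have hee : e ⬝ᵥ e = 1 := by simp [hedef, dotProduct]
  have hxe : x *ᵥ e = 0 := by
    ext i
    simp only [Matrix.mulVec, dotProduct, hedef, mul_ite, mul_one, mul_zero,
      Finset.sum_ite_eq', Finset.mem_univ, if_true, Pi.zero_apply]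
    exact (hxlast i).1
  have hx'e : x' *ᵥ e = 0 := by
    ext i
    simp only [Matrix.mulVec, dotProduct, hedef, mul_ite, mul_one, mul_zero,
      Finset.sum_ite_eq', Finset.mem_univ, if_true, Pi.zero_apply]
    exact (hx'last i).1
  have hexrow : e ᵥ* x = 0 := by
    have h := Matrix.vecMul_transpose xᵀ e
    rw [Matrix.transpose_transpose] at h
    rw [h, hx, Matrix.neg_mulVec, hxe, neg_zero]
  have hxQT : x * Qᵀ = Qᵀ * x' := by
    have h := congrArg (fun Z => Qᵀ * Z * Qᵀ) hQx
    simp only [Matrix.mul_assoc] at h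
    rw [hcanQ, hQQT, Matrix.mul_one] at h
    exact h.symm ▸ h
  set v : Fin (n + 1) → ℝ := Qᵀ *ᵥ e with hvdef
  have hvx : x *ᵥ v = 0 := by
    rw [hvdef, Matrix.mulVec_mulVec, hxQT, ← Matrix.mulVec_mulVec, hx'e, Matrix.mulVec_zero]
  have hvxrow : v ᵥ* x = 0 := by
    have h := Matrix.vecMul_transpose xᵀ v
    rw [Matrix.transpose_transpose] at h
    rw [h, hx, Matrix.neg_mulVec, hvx, neg_zero]
  have hvv : v ⬝ᵥ v = 1 := by
    rw [hvdef, Matrix.dotProduct_mulVec, Matrix.vecMul_transpose, Matrix.mulVec_mulVec,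
      hQQT, Matrix.one_mulVec, hee]
  have key : ∃ H : Matrix (Fin (n + 1)) (Fin (n + 1)) ℝ,
      Hᵀ = H ∧ H * H = 1 ∧ H * x = x * H ∧ H *ᵥ e = v ∧ H *ᵥ v = e := by
    rcases eq_or_ne v e with hve | hve
    · exact ⟨1, Matrix.transpose_one, by rw [Matrix.one_mul], by
        rw [Matrix.one_mul, Matrix.mul_one], by rw [Matrix.one_mulVec, hve], by
        rw [Matrix.one_mulVec, hve]⟩
    · set w : Fin (n + 1) → ℝ := e - v with hwdef
      have hwne : w ≠ 0 := sub_ne_zero_of_ne (fun hh => hve hh.symm)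
      have hww : w ⬝ᵥ w ≠ 0 := fun h0 => hwne (dotProduct_self_eq_zero.mp h0)
      set c : ℝ := 2 / (w ⬝ᵥ w) with hcdef
      set N : Matrix (Fin (n + 1)) (Fin (n + 1)) ℝ := vecMulVec w w with hNdef
      have hNt : Nᵀ = N := by
        ext i j
        simp [hNdef, vecMulVec_apply, mul_comm]
      have hNN : N * N = (w ⬝ᵥ w) • N := by
        ext i j
        simp only [hNdef, Matrix.mul_apply, vecMulVec_apply, Matrix.smul_apply,
          smul_eq_mul, dotProduct, Finset.sum_mul]
        exact Finset.sum_congr rfl fun k _ => by ring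
      have hwx : w ᵥ* x = 0 := by
        rw [hwdef, Matrix.sub_vecMul, hexrow, hvxrow, sub_zero]
      have hxw : x *ᵥ w = 0 := by
        rw [hwdef, Matrix.mulVec_sub, hxe, hvx, sub_zero]
      have hNx : N * x = 0 := by
        rw [hNdef, vecMulVec_mul', hwx]
        ext i j
        simp [vecMulVec_apply]
      have hxN : x * N = 0 := by
        rw [hNdef, mul_vecMulVec', hxw]
        ext i j
        simp [vecMulVec_apply]
      have hNe : N *ᵥ e = (w ⬝ᵥ e) • w := by
        ext i
        simp only [hNdef, Matrix.mulVec, dotProduct, vecMulVec_apply, Pi.smul_apply,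
          smul_eq_mul, Finset.sum_mul]
        exact Finset.sum_congr rfl fun k _ => by ring
      have hNv : N *ᵥ v = (w ⬝ᵥ v) • w := by
        ext i
        simp only [hNdef, Matrix.mulVec, dotProduct, vecMulVec_apply, Pi.smul_apply,
          smul_eq_mul, Finset.sum_mul]
        exact Finset.sum_congr rfl fun k _ => by ring
      have hwe : w ⬝ᵥ e = 1 - v ⬝ᵥ e := by
        rw [hwdef, sub_dotProduct, hee]
      have hwv : w ⬝ᵥ v = v ⬝ᵥ e - 1 := by
        rw [hwdef, sub_dotProduct, hvv, dotProduct_comm]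
      have hwwval : w ⬝ᵥ w = 2 - 2 * (v ⬝ᵥ e) := by
        rw [hwdef, dotProduct_sub, hwe, hwv]
        ring
      have hc1 : c * (w ⬝ᵥ e) = 1 := by
        rw [hcdef, hwe]
        rw [hwwval] at hww ⊢
        rw [div_mul_eq_mul_div, div_eq_one_iff_eq hww]
        ring
      have hc2 : c * (w ⬝ᵥ v) = -1 := by
        rw [hcdef, hwv]
        rw [hwwval] at hww ⊢
        rw [div_mul_eq_mul_div, div_eq_iff hww]
        ring
      refine ⟨1 - c • N, ?_, ?_, ?_, ?_, ?_⟩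
      · rw [Matrix.transpose_sub, Matrix.transpose_one, Matrix.transpose_smul, hNt]
      · have hsc : c * c * (w ⬝ᵥ w) = c + c := by
          rw [hcdef]
          field_simp
          ring
        rw [sub_mul, one_mul, mul_sub, mul_one, smul_mul_assoc, mul_smul_comm, hNN,
          smul_smul, smul_smul, hsc, add_smul]
        abel
      · rw [sub_mul, one_mul, mul_sub, mul_one, smul_mul_assoc, mul_smul_comm, hNx, hxN,
          smul_zero]
      · rw [Matrix.sub_mulVec, Matrix.one_mulVec, Matrix.smul_mulVec, hNe, smul_smul,
          hc1, one_smul, hwdef]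
        abel
      · rw [Matrix.sub_mulVec, Matrix.one_mulVec, Matrix.smul_mulVec, hNv, smul_smul,
          hc2, neg_smul, one_smul, sub_neg_eq_add, hwdef]
        abel
  obtain ⟨H, hHt, hHH, hHx, hHe, hHv⟩ := key
  set h : Matrix (Fin (n + 1)) (Fin (n + 1)) ℝ := Q * H with hhdef
  have hht : hᵀ = H * Qᵀ := by rw [hhdef, Matrix.transpose_mul, hHt]
  have hhT : hᵀ * h = 1 := by
    rw [hht, hhdef, Matrix.mul_assoc, hcanQ, hHH]
  have hhe : hᵀ *ᵥ e = e := by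
    rw [hht, ← Matrix.mulVec_mulVec, ← hvdef, hHv]
  have hEeta : lorentzEta n = 1 - (2 : ℝ) • vecMulVec e e := by
    ext i j
    rcases eq_or_ne i j with hij | hij
    · subst hij
      rcases eq_or_ne i (Fin.last n) with hi | hi <;>
        simp [lorentzEta, Matrix.one_apply, vecMulVec_apply, hedef, hi] <;> norm_num
    · have hz : e i * e j = 0 := by
        rcases eq_or_ne i (Fin.last n) with hi | hi
        · have hj : j ≠ Fin.last n := fun hjj => hij (hi.trans hjj.symm)
          simp [hedef, hj]
        · simp [hedef, hi]
      simp [lorentzEta, Matrix.diagonal_apply_ne _ hij, Matrix.one_apply_ne hij,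
        vecMulVec_apply, hz]
  have hrow : e ᵥ* h = hᵀ *ᵥ e := by
    have hh := Matrix.vecMul_transpose hᵀ e
    rwa [Matrix.transpose_transpose] at hh
  have hEh : hᵀ * vecMulVec e e * h = vecMulVec e e := by
    rw [mul_vecMulVec', hhe, vecMulVec_mul', hrow, hhe]
  have hxh : h * x = x' * h := by
    rw [hhdef, Matrix.mul_assoc, hHx, ← Matrix.mul_assoc, hQx, Matrix.mul_assoc]
  have hinv : h⁻¹ = hᵀ := Matrix.inv_eq_left_inv hhT
  refine ⟨h, ?_, ?_⟩
  · rw [hEeta, mul_sub, sub_mul, Matrix.mul_one, mul_smul_comm, smul_mul_assoc, hEh, hhT]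
  · rw [hinv, hxh, Matrix.mul_assoc, mul_eq_one_comm.mp hhT, Matrix.mul_one]
/-- let `x, x̃ ∈ t = so(n) ⊕ so(1) ⊂ o(n,1)` lie in the compact part of
the Cartan decomposition (skew-symmetric with vanishing last row and column).  If `x`
and `x̃` lie in the same complex orthogonal (`O(n+1,ℂ)`) adjoint orbit, then they lie
in the same `O(n,1)`-adjoint orbit. -/
theorem lorentz_compact_part_same_orbit (n : ℕ)
    (x x' : Matrix (Fin (n + 1)) (Fin (n + 1)) ℝ)
    (hx : xᵀ = -x) (hx' : x'ᵀ = -x')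
    (hxlast : ∀ i, x i (Fin.last n) = 0 ∧ x (Fin.last n) i = 0)
    (hx'last : ∀ i, x' i (Fin.last n) = 0 ∧ x' (Fin.last n) i = 0)
    -- `x` and `x'` lie in the same complex orthogonal adjoint orbit
    (horb : ∃ g : Matrix (Fin (n + 1)) (Fin (n + 1)) ℂ,
      gᵀ * (lorentzEta n).map Complex.ofReal * g = (lorentzEta n).map Complex.ofReal ∧
      g * x.map Complex.ofReal * g⁻¹ = x'.map Complex.ofReal) :
    ∃ h : Matrix (Fin (n + 1)) (Fin (n + 1)) ℝ,
      hᵀ * lorentzEta n * h = lorentzEta n ∧ h * x * h⁻¹ = x' := by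
  obtain ⟨g, hgη, hgx⟩ := horb
  have hηdet : ((lorentzEta n).map Complex.ofReal).det = -1 := by
    rw [lorentzEta, Matrix.diagonal_map (by simp), Matrix.det_diagonal]
    simp only [Function.comp_apply, apply_ite Complex.ofReal, Complex.ofReal_neg,
      Complex.ofReal_one]
    rw [Finset.prod_ite_eq' Finset.univ (Fin.last n) (fun _ => (-1 : ℂ))]
    simp
  have hgdet : g.det ≠ 0 := by
    have hd := congrArg Matrix.det hgη
    rw [Matrix.det_mul, Matrix.det_mul, Matrix.det_transpose, hηdet] at hd
    intro h0
    rw [h0] at hd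
    norm_num at hd
  have hg1 : g * x.map Complex.ofReal = x'.map Complex.ofReal * g := by
    have h2 : g * x.map Complex.ofReal * g⁻¹ * g = x'.map Complex.ofReal * g := by rw [hgx]
    rwa [Matrix.nonsing_inv_mul_cancel_right _ _ hgdet.isUnit] at h2
  obtain ⟨S, hSdet, hSx⟩ := real_conj_of_complex_conj x x' g hgdet hg1
  obtain ⟨Q, hQ1, hQx⟩ := orth_conj_of_conj x x' S hx hx' hSdet hSx
  exact lorentz_conj_of_orth n x x' hx hxlast hx'last Q hQ1 hQx
end

section
/- For p, q ≥ 2 and n = p + q, there exists a minimal vector x ∈ o(p,q) (for the adjoint action) such that the closed complex orbit (Ad O(n,ℂ))x contains at least two disjoint real O(p,q)-orbits; explicitly, one may take x ∈ so(p) ⊕ so(q) ⊂ o(p,q) block-diagonal with two 2×2 rotation blocks with distinct characteristic polynomials placed in the so(p) and so(q) factors, and x₁ the same matrix with the two blocks interchanged: then x and x₁ are O(n)-conjugate but not O(p,q)-conjugate. -/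
open Matrix

/-- The metric matrix of signature `(p,q)` on `ℝ^p ⊕ ℝ^q`. -/
noncomputable def etaPQ (p q : ℕ) : Matrix (Fin p ⊕ Fin q) (Fin p ⊕ Fin q) ℝ :=
  Matrix.fromBlocks 1 0 0 (-1)

/-- 2x2 rotation generator `c·J` embedded in the top-left of an `m×m` matrix. -/
def rotB (m : ℕ) (c : ℝ) : Matrix (Fin m) (Fin m) ℝ :=
  Matrix.of fun i j =>
    if (i : ℕ) = 0 ∧ (j : ℕ) = 1 then c
    else if (i : ℕ) = 1 ∧ (j : ℕ) = 0 then -c else 0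

lemma rotB_skew (m : ℕ) (c : ℝ) : (rotB m c)ᵀ = -(rotB m c) := by
  ext i j
  simp only [rotB, transpose_apply, Matrix.neg_apply, of_apply]
  split_ifs with h1 h2 h3 h4 <;> first | ring1 | (exfalso; omega)

/-- The involution of `Fin p ⊕ Fin q` exchanging the first two coordinates of each factor. -/
def swF (p q : ℕ) (hp : 2 ≤ p) (hq : 2 ≤ q) : Fin p ⊕ Fin q → Fin p ⊕ Fin q
  | .inl i => if h : (i : ℕ) < 2 then .inr ⟨i, h.trans_le hq⟩ else .inl i
  | .inr j => if h : (j : ℕ) < 2 then .inl ⟨j, h.trans_le hp⟩ else .inr j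

lemma swF_swF (p q : ℕ) (hp : 2 ≤ p) (hq : 2 ≤ q) (u : Fin p ⊕ Fin q) :
    swF p q hp hq (swF p q hp hq u) = u := by
  rcases u with i | j <;> simp only [swF] <;> split_ifs with h1 <;>
    simp only [swF] <;> split_ifs <;> simp_all

/-- The corresponding permutation matrix. -/
def gM (p q : ℕ) (hp : 2 ≤ p) (hq : 2 ≤ q) : Matrix (Fin p ⊕ Fin q) (Fin p ⊕ Fin q) ℝ :=
  Matrix.of fun u v => if swF p q hp hq u = v then 1 else 0

lemma gM_mul (p q : ℕ) (hp : 2 ≤ p) (hq : 2 ≤ q)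
    (M : Matrix (Fin p ⊕ Fin q) (Fin p ⊕ Fin q) ℝ) (u v : Fin p ⊕ Fin q) :
    (gM p q hp hq * M) u v = M (swF p q hp hq u) v := by
  simp [gM, Matrix.mul_apply, ite_mul]

lemma mul_gM (p q : ℕ) (hp : 2 ≤ p) (hq : 2 ≤ q)
    (M : Matrix (Fin p ⊕ Fin q) (Fin p ⊕ Fin q) ℝ) (u v : Fin p ⊕ Fin q) :
    (M * gM p q hp hq) u v = M u (swF p q hp hq v) := by
  have key : ∀ w, (if swF p q hp hq w = v then (1:ℝ) else 0)
      = if w = swF p q hp hq v then 1 else 0 := by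
    intro w
    by_cases h : w = swF p q hp hq v
    · subst h; simp [swF_swF]
    · rw [if_neg h, if_neg]
      intro h'
      exact h (by rw [← h', swF_swF])
  simp only [gM, Matrix.mul_apply, Matrix.of_apply, key, mul_ite, mul_one, mul_zero]
  simp

lemma gM_transpose (p q : ℕ) (hp : 2 ≤ p) (hq : 2 ≤ q) :
    (gM p q hp hq)ᵀ = gM p q hp hq := by
  ext u v
  simp only [gM, transpose_apply, of_apply]
  by_cases h : swF p q hp hq v = u
  · rw [if_pos h, if_pos (by rw [← h, swF_swF])]
  · rw [if_neg h, if_neg]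
    intro h'
    exact h (by rw [← h', swF_swF])

lemma gM_mul_gM (p q : ℕ) (hp : 2 ≤ p) (hq : 2 ≤ q) :
    gM p q hp hq * gM p q hp hq = 1 := by
  ext u v
  rw [gM_mul]
  simp [gM, swF_swF, Matrix.one_apply]

lemma gM_conj (p q : ℕ) (hp : 2 ≤ p) (hq : 2 ≤ q) (c d : ℝ) :
    gM p q hp hq * Matrix.fromBlocks (rotB p c) 0 0 (rotB q d) * gM p q hp hq
      = Matrix.fromBlocks (rotB p d) 0 0 (rotB q c) := by
  ext u v
  rw [mul_gM, gM_mul]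
  rcases u with i | i <;> rcases v with j | j <;>
    simp only [swF] <;> split_ifs with h1 h2 <;>
    simp only [Matrix.fromBlocks_apply₁₁, Matrix.fromBlocks_apply₁₂,
      Matrix.fromBlocks_apply₂₁, Matrix.fromBlocks_apply₂₂, rotB, of_apply,
      Matrix.zero_apply] <;>
    split_ifs <;> first | ring1 | (exfalso; omega)

lemma eta_conj (p q : ℕ) (a : Matrix (Fin p) (Fin p) ℝ) (b : Matrix (Fin q) (Fin q) ℝ) :
    etaPQ p q * Matrix.fromBlocks a 0 0 b * etaPQ p q = Matrix.fromBlocks a 0 0 b := by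
  simp [etaPQ, Matrix.fromBlocks_multiply]

set_option maxHeartbeats 2000000 in
lemma no_opq_conj (p q : ℕ) (hp : 2 ≤ p) (hq : 2 ≤ q)
    (h : Matrix (Fin p ⊕ Fin q) (Fin p ⊕ Fin q) ℝ)
    (hη : hᵀ * etaPQ p q * h = etaPQ p q)
    (hc : h * Matrix.fromBlocks (rotB p 1) 0 0 (rotB q 2) * h⁻¹
        = Matrix.fromBlocks (rotB p 2) 0 0 (rotB q 1)) : False := by
  set X := Matrix.fromBlocks (rotB p 1) 0 0 (rotB q 2) with hX
  set X₁ := Matrix.fromBlocks (rotB p 2) 0 0 (rotB q 1) with hX₁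
  set η := etaPQ p q with hηdef
  -- η is involutive, hence invertible
  have ηη : η * η = 1 := by
    simp [hηdef, etaPQ, Matrix.fromBlocks_multiply, ← Matrix.fromBlocks_one]
  have hdetη : η.det ≠ 0 := by
    intro h0
    have := congrArg Matrix.det ηη
    rw [Matrix.det_mul, h0, Matrix.det_one] at this
    simpa using this
  -- h is invertible
  have hdet : IsUnit h.det := by
    have := congrArg Matrix.det hη
    rw [Matrix.det_mul, Matrix.det_mul, Matrix.det_transpose] at this
    have h2 : (h.det * h.det - 1) * η.det = 0 := by linear_combination this
    rcases mul_eq_zero.1 h2 with h3 | h3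
    · exact IsUnit.of_mul_eq_one (a := h.det) h.det (by linarith)
    · exact absurd h3 hdetη
  have hinv : h⁻¹ * h = 1 := Matrix.nonsing_inv_mul h hdet
  have hxh : X₁ * h = h * X := by
    calc X₁ * h = (h * X * h⁻¹) * h := by rw [hc]
    _ = h * X * (h⁻¹ * h) := by rw [mul_assoc]
    _ = h * X := by rw [hinv, mul_one]
  set i0 : Fin p := ⟨0, by omega⟩ with hi0
  set i1 : Fin p := ⟨1, by omega⟩ with hi1
  set j0 : Fin q := ⟨0, by omega⟩ with hj0
  set j1 : Fin q := ⟨1, by omega⟩ with hj1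
  have vi0 : (i0 : ℕ) = 0 := rfl
  have vi1 : (i1 : ℕ) = 1 := rfl
  have vj0 : (j0 : ℕ) = 0 := rfl
  have vj1 : (j1 : ℕ) = 1 := rfl
  -- columns of X at `inl i0`, `inl i1`
  have colX0 : ∀ w, X w (Sum.inl i0) = if w = Sum.inl i1 then (-1:ℝ) else 0 := by
    rintro (i | j) <;>
      simp only [hX, Matrix.fromBlocks_apply₁₁, Matrix.fromBlocks_apply₂₁, rotB, of_apply,
        Matrix.zero_apply, Sum.inl.injEq, Fin.ext_iff,
        reduceCtorEq, if_false] <;>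
      split_ifs <;> first | ring1 | (exfalso; omega) | simp_all
  have colX1 : ∀ w, X w (Sum.inl i1) = if w = Sum.inl i0 then (1:ℝ) else 0 := by
    rintro (i | j) <;>
      simp only [hX, Matrix.fromBlocks_apply₁₁, Matrix.fromBlocks_apply₂₁, rotB, of_apply,
        Matrix.zero_apply, Sum.inl.injEq, Fin.ext_iff,
        reduceCtorEq, if_false] <;>
      split_ifs <;> first | ring1 | (exfalso; omega) | simp_all
  -- the two key equations relating columns of h
  have E0 : ∀ u, (X₁ * h) u (Sum.inl i0) = -h u (Sum.inl i1) := by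
    intro u
    rw [hxh, Matrix.mul_apply]
    simp only [colX0, mul_ite, mul_neg, mul_one, mul_zero]
    simp
  have E1 : ∀ u, (X₁ * h) u (Sum.inl i1) = h u (Sum.inl i0) := by
    intro u
    rw [hxh, Matrix.mul_apply]
    simp only [colX1, mul_ite, mul_one, mul_zero]
    simp
  -- rows of X₁
  have rowA : ∀ w, X₁ (Sum.inl i0) w = if w = Sum.inl i1 then (2:ℝ) else 0 := by
    rintro (i | j) <;>
      simp only [hX₁, Matrix.fromBlocks_apply₁₁, Matrix.fromBlocks_apply₁₂, rotB, of_apply,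
        Matrix.zero_apply, Sum.inl.injEq, Fin.ext_iff, reduceCtorEq, if_false] <;>
      split_ifs <;> first | ring1 | (exfalso; omega) | simp_all
  have rowB : ∀ w, X₁ (Sum.inl i1) w = if w = Sum.inl i0 then (-2:ℝ) else 0 := by
    rintro (i | j) <;>
      simp only [hX₁, Matrix.fromBlocks_apply₁₁, Matrix.fromBlocks_apply₁₂, rotB, of_apply,
        Matrix.zero_apply, Sum.inl.injEq, Fin.ext_iff, reduceCtorEq, if_false] <;>
      split_ifs <;> first | ring1 | (exfalso; omega) | simp_all
  have rowZp : ∀ i : Fin p, 2 ≤ (i : ℕ) → ∀ w, X₁ (Sum.inl i) w = 0 := by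
    intro i hi w
    rcases w with j | j <;>
      simp only [hX₁, Matrix.fromBlocks_apply₁₁, Matrix.fromBlocks_apply₁₂, rotB, of_apply,
        Matrix.zero_apply] <;>
      split_ifs <;> first | ring1 | (exfalso; omega)
  -- evaluations of (X₁ * h)
  have L0 : ∀ c, (X₁ * h) (Sum.inl i0) c = 2 * h (Sum.inl i1) c := by
    intro c
    rw [Matrix.mul_apply]
    simp only [rowA, ite_mul, zero_mul]
    rw [Finset.sum_ite_eq' Finset.univ (Sum.inl i1) (fun w => 2 * h w c)]
    simp only [Finset.mem_univ, if_true]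
  have L1 : ∀ c, (X₁ * h) (Sum.inl i1) c = -2 * h (Sum.inl i0) c := by
    intro c
    rw [Matrix.mul_apply]
    simp only [rowB, ite_mul, zero_mul]
    rw [Finset.sum_ite_eq' Finset.univ (Sum.inl i0) (fun w => -2 * h w c)]
    simp only [Finset.mem_univ, if_true]
  have LZ : ∀ (i : Fin p), 2 ≤ (i : ℕ) → ∀ c, (X₁ * h) (Sum.inl i) c = 0 := by
    intro i hi c
    rw [Matrix.mul_apply]
    simp only [rowZp i hi, zero_mul, Finset.sum_const_zero]
  -- the first column of h vanishes on the `Fin p` block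
  have eqA := E0 (Sum.inl i0); rw [L0] at eqA
  have eqB := E0 (Sum.inl i1); rw [L1] at eqB
  have eqC := E1 (Sum.inl i0); rw [L0] at eqC
  have eqD := E1 (Sum.inl i1); rw [L1] at eqD
  have hcol : ∀ i : Fin p, h (Sum.inl i) (Sum.inl i0) = 0 := by
    intro i
    by_cases h0 : (i : ℕ) = 0
    · have : i = i0 := Fin.ext (by omega)
      rw [this]; linarith only [eqB, eqC]
    by_cases h1 : (i : ℕ) = 1
    · have : i = i1 := Fin.ext (by omega)
      rw [this]; linarith only [eqA, eqD]
    · have h2 : 2 ≤ (i : ℕ) := by omega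
      have := E1 (Sum.inl i)
      rw [LZ i h2] at this
      linarith only [this]
  -- rows of η
  have rowη1 : ∀ (i : Fin p) (w : Fin p ⊕ Fin q),
      η (Sum.inl i) w = if w = Sum.inl i then (1:ℝ) else 0 := by
    rintro i (i' | j') <;>
      simp only [hηdef, etaPQ, Matrix.fromBlocks_apply₁₁, Matrix.fromBlocks_apply₁₂,
        Matrix.one_apply, Matrix.zero_apply, Sum.inl.injEq, reduceCtorEq, if_false]
    by_cases hii : i = i'
    · subst hii; simp
    · rw [if_neg hii, if_neg (Ne.symm hii)]
  have rowη2 : ∀ (j : Fin q) (w : Fin p ⊕ Fin q),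
      η (Sum.inr j) w = if w = Sum.inr j then (-1:ℝ) else 0 := by
    rintro j (i' | j') <;>
      simp only [hηdef, etaPQ, Matrix.fromBlocks_apply₂₁, Matrix.fromBlocks_apply₂₂,
        Matrix.neg_apply, Matrix.one_apply, Matrix.zero_apply, Sum.inr.injEq,
        reduceCtorEq, if_false]
    by_cases hjj : j = j'
    · subst hjj; simp
    · rw [if_neg hjj, if_neg (Ne.symm hjj), neg_zero]
  -- evaluations of (η * h)
  have ηh1 : ∀ i : Fin p, (η * h) (Sum.inl i) (Sum.inl i0) = h (Sum.inl i) (Sum.inl i0) := by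
    intro i
    rw [Matrix.mul_apply]
    simp only [rowη1, ite_mul, one_mul, zero_mul]
    rw [Finset.sum_ite_eq' Finset.univ (Sum.inl i : Fin p ⊕ Fin q)
      (fun w => h w (Sum.inl i0))]
    simp only [Finset.mem_univ, if_true]
  have ηh2 : ∀ j : Fin q, (η * h) (Sum.inr j) (Sum.inl i0) = -h (Sum.inr j) (Sum.inl i0) := by
    intro j
    rw [Matrix.mul_apply]
    simp only [rowη2, ite_mul, neg_mul, one_mul, zero_mul]
    rw [Finset.sum_ite_eq' Finset.univ (Sum.inr j : Fin p ⊕ Fin q)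
      (fun w => -h w (Sum.inl i0))]
    simp only [Finset.mem_univ, if_true]
  -- the (inl i0, inl i0) entry of the isometry equation gives a contradiction
  have hfinal := congrArg (fun M : Matrix (Fin p ⊕ Fin q) (Fin p ⊕ Fin q) ℝ =>
    M (Sum.inl i0) (Sum.inl i0)) hη
  simp only [mul_assoc] at hfinal
  rw [Matrix.mul_apply, Fintype.sum_sum_type] at hfinal
  simp only [Matrix.transpose_apply, ηh1, ηh2, hcol, zero_mul, mul_zero,
    Finset.sum_const_zero, zero_add, mul_neg, rowη1, if_pos rfl, if_true] at hfinal
  have hnn : (0:ℝ) ≤ ∑ j : Fin q, h (Sum.inr j) (Sum.inl i0) * h (Sum.inr j) (Sum.inl i0) :=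
    Finset.sum_nonneg fun j _ => mul_self_nonneg _
  rw [Finset.sum_neg_distrib] at hfinal
  linarith only [hfinal, hnn]

/-- for `p, q ≥ 2` there is a minimal vector `x ∈ so(p) ⊕ so(q) ⊂ o(p,q)`
(block diagonal, skew-symmetric, commuting with `θ(x) = η x η`) whose closed complex
orbit contains at least two disjoint real `O(p,q)`-orbits: there is another
`x₁ ∈ so(p) ⊕ so(q)` which is `O(n)`-conjugate to `x` (`n = p + q`) but not
`O(p,q)`-conjugate to `x`. -/
theorem opq_two_disjoint_real_orbits (p q : ℕ) (hp : 2 ≤ p) (hq : 2 ≤ q) :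
    ∃ a : Matrix (Fin p) (Fin p) ℝ, ∃ b : Matrix (Fin q) (Fin q) ℝ,
    ∃ a₁ : Matrix (Fin p) (Fin p) ℝ, ∃ b₁ : Matrix (Fin q) (Fin q) ℝ,
      aᵀ = -a ∧ bᵀ = -b ∧ a₁ᵀ = -a₁ ∧ b₁ᵀ = -b₁ ∧
      -- `x = fromBlocks a 0 0 b` is a minimal vector: `[x, θ(x)] = 0`
      (Matrix.fromBlocks a 0 0 b) *
          (etaPQ p q * Matrix.fromBlocks a 0 0 b * etaPQ p q) =
        (etaPQ p q * Matrix.fromBlocks a 0 0 b * etaPQ p q) *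
          (Matrix.fromBlocks a 0 0 b) ∧
      -- `x` and `x₁` are `O(n)`-conjugate
      (∃ g : Matrix (Fin p ⊕ Fin q) (Fin p ⊕ Fin q) ℝ, gᵀ * g = 1 ∧
        g * Matrix.fromBlocks a 0 0 b * g⁻¹ = Matrix.fromBlocks a₁ 0 0 b₁) ∧
      -- but `x` and `x₁` are not `O(p,q)`-conjugate
      ¬(∃ h : Matrix (Fin p ⊕ Fin q) (Fin p ⊕ Fin q) ℝ,
          hᵀ * etaPQ p q * h = etaPQ p q ∧
          h * Matrix.fromBlocks a 0 0 b * h⁻¹ = Matrix.fromBlocks a₁ 0 0 b₁) := by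
  refine ⟨rotB p 1, rotB q 2, rotB p 2, rotB q 1,
    rotB_skew p 1, rotB_skew q 2, rotB_skew p 2, rotB_skew q 1, ?_, ?_, ?_⟩
  · rw [eta_conj]
  · refine ⟨gM p q hp hq, ?_, ?_⟩
    · rw [gM_transpose, gM_mul_gM]
    · rw [Matrix.inv_eq_right_inv (gM_mul_gM p q hp hq), gM_conj]
  · rintro ⟨h, h1, h2⟩
    exact no_opq_conj p q hp hq h h1 h2
end
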